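/- arXiv:1910.03463 — 6 statements merged into one kernel-verified Lean document; each statement's English description precedes it below -/
import Mathlib

section
/- Let N ≥ 1, let φ_k(x) = r_k x + b_k for 0 ≤ k ≤ N be real affine maps with r_k > 0, let p ∈ C_N with Σ_{j=0}^N p_j log r_j < 0, and let ν be the invariant measure. Then ν has an atom if and only if the maps φ_0,…,φ_N have a common fixed point c, and in that case ν is the Dirac mass δ_c. -/
open MeasureTheory Filter Finset Topology

noncomputable section


lemma prod_id {N n : ℕ} (f : Fin (N+1) → ℝ) :
    ∑ w : Fin n → Fin (N+1), ∏ i, f (w i) = (∑ j, f j) ^ n := by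
  calc ∑ w : Fin n → Fin (N+1), ∏ i, f (w i)
      = ∑ w ∈ Fintype.piFinset (fun _ : Fin n => (univ : Finset (Fin (N+1)))), ∏ i, f (w i) := by
        rw [Fintype.piFinset_univ]
    _ = ∏ _i : Fin n, ∑ j, f j := (Finset.prod_univ_sum _ _).symm
    _ = (∑ j, f j) ^ n := by simp

lemma iter_id {N : ℕ} (p a : Fin (N+1) → ℝ) (H : ℝ → ℝ)
    (heq : ∀ u, H u = ∑ j, p j * H (u - a j)) :
    ∀ (n : ℕ) (u : ℝ), H u = ∑ w : Fin n → Fin (N+1),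
      (∏ i, p (w i)) * H (u - ∑ i, a (w i)) := by
  intro n
  induction n with
  | zero => intro u; simp
  | succ n ih =>
    intro u
    rw [heq u]
    have : ∀ j, H (u - a j) = ∑ w : Fin n → Fin (N+1),
        (∏ i, p (w i)) * H (u - a j - ∑ i, a (w i)) := fun j => ih (u - a j)
    simp_rw [this, Finset.mul_sum]
    rw [show (∑ x : Fin (N+1), ∑ w : Fin n → Fin (N+1), p x * ((∏ i, p (w i)) * H (u - a x - ∑ i, a (w i)))) = ∑ q : Fin (N+1) × (Fin n → Fin (N+1)), p q.1 * ((∏ i, p (q.2 i)) * H (u - a q.1 - ∑ i, a (q.2 i))) from by rw [Fintype.sum_prod_type]]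
    refine Fintype.sum_equiv (Fin.consEquiv fun _ => Fin (N+1)) _ _ ?_
    rintro ⟨j, w⟩
    have h1 : ∏ x : Fin (n+1), p ((Fin.cons j w : Fin (n+1) → Fin (N+1)) x) = p j * ∏ x : Fin n, p (w x) := by
      rw [Fin.prod_univ_succ]; simp
    have h2 : ∑ x : Fin (n+1), a ((Fin.cons j w : Fin (n+1) → Fin (N+1)) x) = a j + ∑ x : Fin n, a (w x) := by
      rw [Fin.sum_univ_succ]; simp
    simp only [Fin.consEquiv_apply, h1, h2, mul_assoc, sub_sub]

lemma exists_eps {N : ℕ} (p a : Fin (N+1) → ℝ) (hp : ∀ j, 0 < p j)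
    (hp1 : ∑ j, p j = 1) (hμ : ∑ j, p j * a j < 0) :
    ∃ ε : ℝ, 0 < ε ∧ ∑ j, p j * Real.exp (ε * a j) < 1 := by
  set f : ℝ → ℝ := fun ε => ∑ j, p j * Real.exp (ε * a j) with hf
  have hD : HasDerivAt f (∑ j, p j * a j) 0 := by
    have h0 : (∑ j, p j * a j) = ∑ j, p j * (Real.exp (0 * a j) * a j) := by simp
    rw [h0]
    apply HasDerivAt.fun_sum
    intro j _
    have h1 : HasDerivAt (fun ε : ℝ => ε * a j) (a j) 0 := hasDerivAt_mul_const (a j)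
    exact ((Real.hasDerivAt_exp (0 * a j)).comp 0 h1).const_mul (p j)
  have hf0 : f 0 = 1 := by simp [hf, hp1]
  rw [hasDerivAt_iff_tendsto_slope] at hD
  have hev : ∀ᶠ ε in 𝓝[≠] (0:ℝ), slope f 0 ε < 0 := hD.eventually_lt_const hμ
  have hle : 𝓝[>] (0:ℝ) ≤ 𝓝[≠] (0:ℝ) := nhdsWithin_mono _ (fun x hx => ne_of_gt hx)
  have hev2 : ∀ᶠ ε in 𝓝[>] (0:ℝ), slope f 0 ε < 0 ∧ 0 < ε :=
    (hev.filter_mono hle).and (eventually_mem_nhdsWithin.mono fun x hx => hx)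
  obtain ⟨ε, hslope, hεpos⟩ := hev2.exists
  refine ⟨ε, hεpos, ?_⟩
  rw [slope_def_field] at hslope
  rw [hf0, sub_zero] at hslope
  rcases (div_neg_iff).mp hslope with ⟨h3, h4⟩ | ⟨h3, h4⟩ <;> linarith

lemma key {N : ℕ} (p a : Fin (N+1) → ℝ) (hp : ∀ j, 0 < p j) (hp1 : ∑ j, p j = 1)
    (hμ : ∑ j, p j * a j < 0)
    (H : ℝ → ℝ) (hH0 : ∀ u, 0 ≤ H u) (hH1 : ∀ u, H u ≤ 1)
    (heq : ∀ u, H u = ∑ j, p j * H (u - a j))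
    (hlim : ∀ ε : ℝ, 0 < ε → ∃ U : ℝ, ∀ v, U ≤ v → H v ≤ ε) :
    ∀ u, H u = 0 := by
  obtain ⟨ε, hε, hρ⟩ := exists_eps p a hp hp1 hμ
  set ρ := ∑ j, p j * Real.exp (ε * a j) with hρdef
  have hρ0 : 0 < ρ :=
    Finset.sum_pos (fun j _ => mul_pos (hp j) (Real.exp_pos _)) univ_nonempty
  have hlogρ : Real.log ρ < 0 := Real.log_neg hρ0 hρ
  set δ := (-Real.log ρ) / (2 * ε) with hδdef
  have hδ : 0 < δ := div_pos (by linarith) (by linarith)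
  set θ := ρ * Real.exp (ε * δ) with hθdef
  have hθ0 : 0 < θ := mul_pos hρ0 (Real.exp_pos _)
  have hθ1 : θ < 1 := by
    have h1 : Real.log θ = Real.log ρ + ε * δ := by
      rw [hθdef, Real.log_mul (ne_of_gt hρ0) (ne_of_gt (Real.exp_pos _)), Real.log_exp]
    have h2 : ε * δ = -Real.log ρ / 2 := by
      rw [hδdef]; field_simp
    have h3 : Real.log θ < 0 := by rw [h1, h2]; linarith
    exact (Real.log_neg_iff hθ0).mp h3
  -- positivity of weights
  have hW : ∀ {n : ℕ} (w : Fin n → Fin (N+1)), (0:ℝ) ≤ ∏ i, p (w i) :=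
    fun w => Finset.prod_nonneg (fun i _ => (hp _).le)
  -- total weight one
  have hW1 : ∀ n : ℕ, ∑ w : Fin n → Fin (N+1), ∏ i, p (w i) = 1 := by
    intro n; rw [prod_id p, hp1, one_pow]
  -- Chernoff identity
  have hCh : ∀ n : ℕ, ∑ w : Fin n → Fin (N+1),
      (∏ i, p (w i)) * Real.exp (ε * ∑ i, a (w i)) = ρ ^ n := by
    intro n
    have : ∀ w : Fin n → Fin (N+1),
        (∏ i, p (w i)) * Real.exp (ε * ∑ i, a (w i))
          = ∏ i, (p (w i) * Real.exp (ε * a (w i))) := by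
      intro w
      rw [Finset.mul_sum, Real.exp_sum, Finset.prod_mul_distrib]
    simp_rw [this]
    rw [prod_id (fun j => p j * Real.exp (ε * a j))]
  -- bad-set bound
  have hBad : ∀ n : ℕ, ∑ w ∈ univ.filter
      (fun w : Fin n → Fin (N+1) => -((n:ℝ)*δ) < ∑ i, a (w i)), (∏ i, p (w i)) ≤ θ ^ n := by
    intro n
    have step1 : ∑ w ∈ univ.filter
        (fun w : Fin n → Fin (N+1) => -((n:ℝ)*δ) < ∑ i, a (w i)), (∏ i, p (w i))
        ≤ ∑ w ∈ univ.filter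
        (fun w : Fin n → Fin (N+1) => -((n:ℝ)*δ) < ∑ i, a (w i)),
          (∏ i, p (w i)) * (Real.exp (ε * ∑ i, a (w i)) * Real.exp (ε * ((n:ℝ)*δ))) := by
      apply Finset.sum_le_sum
      intro w hw
      rw [Finset.mem_filter] at hw
      have hS : -((n:ℝ)*δ) < ∑ i, a (w i) := hw.2
      have hexp : (1:ℝ) ≤ Real.exp (ε * ∑ i, a (w i)) * Real.exp (ε * ((n:ℝ)*δ)) := by
        rw [← Real.exp_add]
        rw [show ε * ∑ i, a (w i) + ε * ((n:ℝ)*δ) = ε * (∑ i, a (w i) + (n:ℝ)*δ) by ring]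
        have : 0 ≤ ε * (∑ i, a (w i) + (n:ℝ)*δ) := by
          apply mul_nonneg hε.le; linarith
        calc (1:ℝ) = Real.exp 0 := Real.exp_zero.symm
          _ ≤ _ := Real.exp_le_exp.mpr this
      nlinarith [hW w, hexp]
    have step2 : ∑ w ∈ univ.filter
        (fun w : Fin n → Fin (N+1) => -((n:ℝ)*δ) < ∑ i, a (w i)),
          (∏ i, p (w i)) * (Real.exp (ε * ∑ i, a (w i)) * Real.exp (ε * ((n:ℝ)*δ)))
        ≤ ∑ w : Fin n → Fin (N+1),
          (∏ i, p (w i)) * (Real.exp (ε * ∑ i, a (w i)) * Real.exp (ε * ((n:ℝ)*δ))) := by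
      apply Finset.sum_le_sum_of_subset_of_nonneg (Finset.filter_subset _ _)
      intro w _ _
      exact mul_nonneg (hW w) (mul_nonneg (Real.exp_pos _).le (Real.exp_pos _).le)
    have step3 : ∑ w : Fin n → Fin (N+1),
          (∏ i, p (w i)) * (Real.exp (ε * ∑ i, a (w i)) * Real.exp (ε * ((n:ℝ)*δ)))
        = θ ^ n := by
      simp_rw [← mul_assoc]
      rw [← Finset.sum_mul, hCh n, hθdef, mul_pow, ← Real.exp_nat_mul]
      congr 2
      ring
    linarith
  -- main estimate
  intro u
  have hmain : ∀ η : ℝ, 0 < η → H u ≤ 0 + η := by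
    intro η hη
    obtain ⟨U, hU⟩ := hlim (η/2) (by linarith)
    obtain ⟨n1, hn1⟩ := (tendsto_pow_atTop_nhds_zero_of_lt_one hθ0.le hθ1).eventually
      (eventually_le_nhds (show (0:ℝ) < η/2 by linarith)) |>.exists_forall_of_atTop
    obtain ⟨n2, hn2⟩ := exists_nat_ge ((U - u) / δ)
    set n := max n1 n2 with hn
    have hθn : θ ^ n ≤ η / 2 := hn1 n (le_max_left _ _)
    have hun : U ≤ u + (n:ℝ) * δ := by
      have : ((n2:ℝ)) ≤ (n:ℝ) := Nat.cast_le.mpr (le_max_right _ _)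
      have h4 : (U - u) / δ ≤ (n:ℝ) := le_trans hn2 this
      have := (div_le_iff₀ hδ).mp h4
      linarith
    rw [iter_id p a H heq n u]
    have hsplit := Finset.sum_filter_add_sum_filter_not univ
      (fun w : Fin n → Fin (N+1) => -((n:ℝ)*δ) < ∑ i, a (w i))
      (fun w => (∏ i, p (w i)) * H (u - ∑ i, a (w i)))
    rw [← hsplit]
    have hb : ∑ w ∈ univ.filter
        (fun w : Fin n → Fin (N+1) => -((n:ℝ)*δ) < ∑ i, a (w i)),
        (∏ i, p (w i)) * H (u - ∑ i, a (w i)) ≤ η / 2 := by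
      have h1 : ∑ w ∈ univ.filter
          (fun w : Fin n → Fin (N+1) => -((n:ℝ)*δ) < ∑ i, a (w i)),
          (∏ i, p (w i)) * H (u - ∑ i, a (w i))
          ≤ ∑ w ∈ univ.filter
          (fun w : Fin n → Fin (N+1) => -((n:ℝ)*δ) < ∑ i, a (w i)),
          (∏ i, p (w i)) := by
        apply Finset.sum_le_sum
        intro w _
        nlinarith [hW w, hH1 (u - ∑ i, a (w i)), hH0 (u - ∑ i, a (w i))]
      have h2 := hBad n
      linarith
    have hg : ∑ w ∈ univ.filter
        (fun w : Fin n → Fin (N+1) => ¬ (-((n:ℝ)*δ) < ∑ i, a (w i))),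
        (∏ i, p (w i)) * H (u - ∑ i, a (w i)) ≤ η / 2 := by
      have h1 : ∑ w ∈ univ.filter
          (fun w : Fin n → Fin (N+1) => ¬ (-((n:ℝ)*δ) < ∑ i, a (w i))),
          (∏ i, p (w i)) * H (u - ∑ i, a (w i))
          ≤ ∑ w ∈ univ.filter
          (fun w : Fin n → Fin (N+1) => ¬ (-((n:ℝ)*δ) < ∑ i, a (w i))),
          (∏ i, p (w i)) * (η/2) := by
        apply Finset.sum_le_sum
        intro w hw
        rw [Finset.mem_filter] at hw
        have hS : ∑ i, a (w i) ≤ -((n:ℝ)*δ) := not_lt.mp hw.2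
        have : U ≤ u - ∑ i, a (w i) := by linarith
        exact mul_le_mul_of_nonneg_left (hU _ this) (hW w)
      have h2 : ∑ w ∈ univ.filter
          (fun w : Fin n → Fin (N+1) => ¬ (-((n:ℝ)*δ) < ∑ i, a (w i))),
          (∏ i, p (w i)) * (η/2)
          = (∑ w ∈ univ.filter
          (fun w : Fin n → Fin (N+1) => ¬ (-((n:ℝ)*δ) < ∑ i, a (w i))),
          (∏ i, p (w i))) * (η/2) := by
        rw [Finset.sum_mul]
      have h3 : ∑ w ∈ univ.filter
          (fun w : Fin n → Fin (N+1) => ¬ (-((n:ℝ)*δ) < ∑ i, a (w i))),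
          (∏ i, p (w i)) ≤ 1 := by
        rw [← hW1 n]
        apply Finset.sum_le_sum_of_subset_of_nonneg (Finset.filter_subset _ _)
        intro w _ _; exact hW w
      have h4 : (0:ℝ) ≤ ∑ w ∈ univ.filter
          (fun w : Fin n → Fin (N+1) => ¬ (-((n:ℝ)*δ) < ∑ i, a (w i))),
          (∏ i, p (w i)) :=
        Finset.sum_nonneg (fun w _ => hW w)
      nlinarith
    linarith
  have h0 : H u ≤ 0 := by
    have := le_of_forall_pos_le_add hmain
    linarith
  exact le_antisymm h0 (hH0 u)


lemma ifsDirac {N : ℕ} (hN : 1 ≤ N) (r b p : Fin (N + 1) → ℝ)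
    (hr : ∀ k, 0 < r k) (hp : ∀ j, 0 < p j) (hp1 : ∑ j, p j = 1)
    (hcontr : ∑ j, p j * Real.log (r j) < 0)
    (ν : Measure ℝ) [IsProbabilityMeasure ν]
    (hν : ν = ∑ j, ENNReal.ofReal (p j) • ν.map (fun x => r j * x + b j))
    (c : ℝ) (hc : ∀ k, r k * c + b k = c) : ν = Measure.dirac c := by
  have hmeas : ∀ j : Fin (N+1), Measurable (fun x : ℝ => r j * x + b j) := by
    intro j; fun_prop
  have happly : ∀ s : Set ℝ, MeasurableSet s →
      ν s = ∑ j, ENNReal.ofReal (p j) * ν ((fun x => r j * x + b j) ⁻¹' s) := by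
    intro s hs
    conv_lhs => rw [hν]
    rw [Measure.finset_sum_apply]
    refine Finset.sum_congr rfl (fun j _ => ?_)
    rw [Measure.smul_apply, smul_eq_mul, Measure.map_apply (hmeas j) hs]
  set S : ℝ → Set ℝ := fun t => {x : ℝ | t < |x - c|} with hS
  have hSm : ∀ t, MeasurableSet (S t) := by
    intro t
    exact measurableSet_lt measurable_const ((measurable_id.sub_const c).abs)
  have hSmono : ∀ {t t' : ℝ}, t ≤ t' → S t' ⊆ S t := by
    intro t t' h x hx
    exact lt_of_le_of_lt h hx
  have hpre : ∀ (j : Fin (N+1)) (t : ℝ), (fun x => r j * x + b j) ⁻¹' S t = S (t / r j) := by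
    intro j t
    ext x
    have hb' : b j = c - r j * c := by linarith [hc j]
    simp only [hS, Set.mem_preimage, Set.mem_setOf_eq]
    have h1 : r j * x + b j - c = r j * (x - c) := by rw [hb']; ring
    rw [h1, abs_mul, abs_of_pos (hr j), div_lt_iff₀' (hr j)]
  set H : ℝ → ℝ := fun u => (ν (S (Real.exp u))).toReal with hH
  have hfin : ∀ t, ν (S t) ≠ ⊤ := fun t => measure_ne_top ν _
  have hH0 : ∀ u, 0 ≤ H u := fun u => ENNReal.toReal_nonneg
  have hH1 : ∀ u, H u ≤ 1 := by
    intro u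
    rw [hH]
    have := prob_le_one (μ := ν) (s := S (Real.exp u))
    exact ENNReal.toReal_le_of_le_ofReal zero_le_one (by simpa using this)
  have heqH : ∀ u, H u = ∑ j, p j * H (u - Real.log (r j)) := by
    intro u
    rw [hH]
    simp only
    rw [happly _ (hSm _)]
    rw [ENNReal.toReal_sum (fun j _ => by
      rw [hpre]
      exact ENNReal.mul_ne_top ENNReal.ofReal_ne_top (hfin _))]
    refine Finset.sum_congr rfl (fun j _ => ?_)
    rw [hpre, ENNReal.toReal_mul, ENNReal.toReal_ofReal (hp j).le]
    congr 2
    rw [Real.exp_sub, Real.exp_log (hr j)]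
  have hnulim : Tendsto (fun n : ℕ => ν (S n)) atTop (𝓝 0) := by
    have h1 : Tendsto (fun n : ℕ => ν (S n)) atTop (𝓝 (ν (⋂ n : ℕ, S n))) := by
      exact tendsto_measure_iInter_atTop (fun n => (hSm _).nullMeasurableSet)
        (fun m n hmn => hSmono (by exact_mod_cast hmn)) ⟨0, hfin _⟩
    have h2 : (⋂ n : ℕ, S n) = ∅ := by
      ext x
      simp only [Set.mem_iInter, Set.mem_empty_iff_false, iff_false, not_forall]
      obtain ⟨n, hn⟩ := exists_nat_gt (|x - c|)
      exact ⟨n, by simp [hS, not_lt.mpr hn.le]⟩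
    rwa [h2, measure_empty] at h1
  have hlimH : ∀ ε : ℝ, 0 < ε → ∃ U : ℝ, ∀ v, U ≤ v → H v ≤ ε := by
    intro ε hε
    have := hnulim.eventually_lt_const (show (0:ENNReal) < ENNReal.ofReal ε by
      simpa using hε)
    obtain ⟨n, hn⟩ := this.exists_forall_of_atTop
    refine ⟨Real.log (n + 1), fun v hv => ?_⟩
    have hn1 : ν (S ((n+1 : ℕ) : ℝ)) < ENNReal.ofReal ε := hn (n+1) (Nat.le_succ n)
    have hev : ((n+1 : ℕ) : ℝ) ≤ Real.exp v := by
      have h3 : Real.exp (Real.log ((n:ℝ) + 1)) ≤ Real.exp v := Real.exp_le_exp.mpr hv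
      rw [Real.exp_log (by positivity)] at h3
      push_cast
      linarith
    have hsub : S (Real.exp v) ⊆ S ((n+1 : ℕ) : ℝ) := hSmono (by exact_mod_cast hev)
    have : ν (S (Real.exp v)) < ENNReal.ofReal ε := lt_of_le_of_lt (measure_mono hsub) hn1
    rw [hH]
    exact (ENNReal.toReal_le_of_le_ofReal hε.le this.le)
  have hzero : ∀ u, H u = 0 := key p (fun j => Real.log (r j)) hp hp1 hcontr H hH0 hH1 heqH hlimH
  have hSzero : ∀ t : ℝ, 0 < t → ν (S t) = 0 := by
    intro t ht
    have := hzero (Real.log t)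
    rw [hH] at this
    simp only at this
    rw [Real.exp_log ht] at this
    exact (ENNReal.toReal_eq_zero_iff _).mp this |>.resolve_right (hfin t)
  have hcompl : ν ({c}ᶜ) = 0 := by
    have hsub : ({c}ᶜ : Set ℝ) ⊆ ⋃ n : ℕ, S (1 / (n + 1)) := by
      intro x hx
      have hxc : x ≠ c := hx
      have habs : 0 < |x - c| := abs_pos.mpr (sub_ne_zero.mpr hxc)
      obtain ⟨n, hn⟩ := exists_nat_one_div_lt habs
      exact Set.mem_iUnion.mpr ⟨n, hn⟩
    refine measure_mono_null hsub ?_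
    refine measure_iUnion_null (fun n => hSzero _ (by positivity))
  ext s hs
  rw [Measure.dirac_apply' c hs]
  by_cases hcs : c ∈ s
  · have h1 : ν sᶜ = 0 := by
      apply measure_mono_null _ hcompl
      intro x hx
      simp only [Set.mem_compl_iff, Set.mem_singleton_iff]
      intro hxc
      exact hx (hxc ▸ hcs)
    have h2 : ν s + ν sᶜ = 1 := by
      rw [measure_add_measure_compl hs, measure_univ]
    rw [Set.indicator_of_mem hcs]
    simp only [Pi.one_apply]
    rw [h1, add_zero] at h2
    exact h2
  · have h1 : s ⊆ {c}ᶜ := by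
      intro x hx
      simp only [Set.mem_compl_iff, Set.mem_singleton_iff]
      rintro rfl
      exact hcs hx
    rw [Set.indicator_of_notMem hcs]
    exact measure_mono_null h1 hcompl


lemma ifsAtom {N : ℕ} (hN : 1 ≤ N) (r b p : Fin (N + 1) → ℝ)
    (hr : ∀ k, 0 < r k) (hp : ∀ j, 0 < p j) (hp1 : ∑ j, p j = 1)
    (ν : Measure ℝ) [IsProbabilityMeasure ν]
    (hν : ν = ∑ j, ENNReal.ofReal (p j) • ν.map (fun x => r j * x + b j))
    (x₀ : ℝ) (hx₀ : ν {x₀} ≠ 0) : ∃ c : ℝ, ∀ k, r k * c + b k = c := by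
  have hmeas : ∀ j : Fin (N+1), Measurable (fun x : ℝ => r j * x + b j) := by
    intro j; fun_prop
  have happly : ∀ s : Set ℝ, MeasurableSet s →
      ν s = ∑ j, ENNReal.ofReal (p j) * ν ((fun x => r j * x + b j) ⁻¹' s) := by
    intro s hs
    conv_lhs => rw [hν]
    rw [Measure.finset_sum_apply]
    refine Finset.sum_congr rfl (fun j _ => ?_)
    rw [Measure.smul_apply, smul_eq_mul, Measure.map_apply (hmeas j) hs]
  have hsingle : ∀ (j : Fin (N+1)) (x : ℝ),
      (fun y : ℝ => r j * y + b j) ⁻¹' {x} = {(x - b j) / r j} := by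
    intro j x
    ext y
    simp only [Set.mem_preimage, Set.mem_singleton_iff]
    rw [eq_div_iff (ne_of_gt (hr j))]
    constructor <;> intro h <;> linarith
  set M := ⨆ x : ℝ, ν {x} with hM
  have hM1 : M ≤ 1 := iSup_le fun x => prob_le_one
  have hMtop : M ≠ ⊤ := fun h => by simp [h] at hM1
  have hM0 : M ≠ 0 := by
    intro h
    exact hx₀ (le_antisymm (h ▸ le_iSup (fun x : ℝ => ν {x}) x₀) zero_le)
  have hhalf : M / 2 < M := ENNReal.half_lt_self hM0 hMtop
  have hhalf0 : M / 2 ≠ 0 := by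
    simp only [ne_eq, ENNReal.div_eq_zero_iff]
    push_neg
    exact ⟨hM0, by norm_num⟩
  set F := {x : ℝ | M / 2 < ν {x}} with hF
  have hsumle : ∀ s : Finset ℝ, ∑ x ∈ s, ν {x} ≤ 1 := by
    intro s
    have h1 : ν (⋃ x ∈ s, {x}) = ∑ x ∈ s, ν {x} := by
      apply measure_biUnion_finset
      · intro x _ y _ hxy
        simp [Function.onFun, Set.disjoint_singleton, hxy]
      · exact fun x _ => measurableSet_singleton x
    rw [← h1]
    exact prob_le_one
  have hFfin : F.Finite := by
    by_contra hinf
    replace hinf : F.Infinite := hinf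
    obtain ⟨n, hn⟩ := ENNReal.exists_inv_nat_lt hhalf0
    have hn0 : n ≠ 0 := by
      rintro rfl
      simp at hn
    obtain ⟨s, hsub, hcard⟩ := hinf.exists_subset_card_eq n
    have h2 : (n : ENNReal) * (M / 2) ≤ ∑ x ∈ s, ν {x} := by
      have h3 : ∑ x ∈ s, (M / 2) ≤ ∑ x ∈ s, ν {x} :=
        Finset.sum_le_sum fun x hx => (hsub hx : M / 2 < ν {x}).le
      rwa [Finset.sum_const, hcard, nsmul_eq_mul] at h3
    have h4 : (1 : ENNReal) < (n : ENNReal) * (M / 2) := by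
      have h5 : (n : ENNReal) * (n : ENNReal)⁻¹ < (n : ENNReal) * (M / 2) :=
        ENNReal.mul_lt_mul_right (by exact_mod_cast hn0) (by simp) hn
      rwa [ENNReal.mul_inv_cancel (by exact_mod_cast hn0) (by simp)] at h5
    exact absurd (le_trans h2 (hsumle s)) (not_le.mpr h4)
  have hFne : F.Nonempty := by
    obtain ⟨x, hx⟩ := lt_iSup_iff.mp hhalf
    exact ⟨x, hx⟩
  obtain ⟨xs, hxsF, hxsmax⟩ := Set.exists_max_image F (fun x => ν {x}) hFfin hFne
  have hxsM : ν {xs} = M := by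
    refine le_antisymm (le_iSup (fun x : ℝ => ν {x}) xs) (iSup_le fun y => ?_)
    by_cases hy : y ∈ F
    · exact hxsmax y hy
    · have : ν {y} ≤ M / 2 := not_lt.mp hy
      exact le_trans this (le_of_lt hxsF)
  set A := {x : ℝ | ν {x} = M} with hA
  have hAF : A ⊆ F := fun x hx => by
    simp only [hA, Set.mem_setOf_eq] at hx
    simp only [hF, Set.mem_setOf_eq]
    rw [hx]; exact hhalf
  have hAfin : A.Finite := hFfin.subset hAF
  have hxsA : xs ∈ A := hxsM
  have hclosed : ∀ (j : Fin (N+1)), ∀ x ∈ A, (x - b j) / r j ∈ A := by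
    intro j x hx
    have hxM : ν {x} = M := hx
    have h1 : ν {x} = ∑ k, ENNReal.ofReal (p k) * ν {(x - b k) / r k} := by
      rw [happly _ (measurableSet_singleton x)]
      exact Finset.sum_congr rfl fun k _ => by rw [hsingle k x]
    have hle : ∀ k : Fin (N+1), ν {(x - b k) / r k} ≤ M :=
      fun k => le_iSup (fun y : ℝ => ν {y}) _
    have hsum1 : ∑ k, ENNReal.ofReal (p k) * M = M := by
      rw [← Finset.sum_mul, ← ENNReal.ofReal_sum_of_nonneg (fun k _ => (hp k).le), hp1,
        ENNReal.ofReal_one, one_mul]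
    by_contra hne
    have hlt : ν {(x - b j) / r j} < M := lt_of_le_of_ne (hle j) hne
    have hfin' : ∀ k : Fin (N+1), ν {(x - b k) / r k} ≠ ⊤ := fun k => measure_ne_top ν _
    have h1R : M.toReal = ∑ k, p k * (ν {(x - b k) / r k}).toReal := by
      rw [← hxM, h1, ENNReal.toReal_sum (fun k _ =>
        ENNReal.mul_ne_top ENNReal.ofReal_ne_top (hfin' k))]
      exact Finset.sum_congr rfl fun k _ => by
        rw [ENNReal.toReal_mul, ENNReal.toReal_ofReal (hp k).le]
    have hleR : ∀ k : Fin (N+1), (ν {(x - b k) / r k}).toReal ≤ M.toReal :=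
      fun k => ENNReal.toReal_mono hMtop (hle k)
    have hltR : (ν {(x - b j) / r j}).toReal < M.toReal :=
      ENNReal.toReal_strict_mono hMtop hlt
    have hstrict : ∑ k, p k * (ν {(x - b k) / r k}).toReal < ∑ k, p k * M.toReal := by
      refine Finset.sum_lt_sum (fun k _ => mul_le_mul_of_nonneg_left (hleR k) (hp k).le)
        ⟨j, Finset.mem_univ j, mul_lt_mul_of_pos_left hltR (hp j)⟩
    rw [← h1R, ← Finset.sum_mul, hp1, one_mul] at hstrict
    exact lt_irrefl _ hstrict
  have hne' : hAfin.toFinset.Nonempty := ⟨xs, hAfin.mem_toFinset.mpr hxsA⟩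
  refine ⟨hAfin.toFinset.min' hne', fun k => ?_⟩
  set Af := hAfin.toFinset with hAf
  set c := Af.min' hne' with hcdef
  have hcA : c ∈ A := hAfin.mem_toFinset.mp (Af.min'_mem hne')
  have hmapsto : Set.MapsTo (fun x => (x - b k) / r k) A A := fun x hx => hclosed k x hx
  have hinj : Set.InjOn (fun x => (x - b k) / r k) A := by
    intro x _ y _ h
    have h' : (x - b k) / r k = (y - b k) / r k := h
    field_simp [(hr k).ne'] at h'
    linarith
  have hbij : Set.BijOn (fun x => (x - b k) / r k) A A :=
    (Set.Finite.injOn_iff_bijOn_of_mapsTo hAfin hmapsto).mp hinj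
  have h1 : (c - b k) / r k ∈ A := hclosed k c hcA
  have h2 : c ≤ (c - b k) / r k := Af.min'_le _ (hAfin.mem_toFinset.mpr h1)
  obtain ⟨y, hyA, hy⟩ := hbij.surjOn hcA
  have h3 : c ≤ y := Af.min'_le _ (hAfin.mem_toFinset.mpr hyA)
  have h4 : (c - b k) / r k ≤ (y - b k) / r k := by
    gcongr
    exact (hr k).le
  have h5 : (c - b k) / r k ≤ c := by
    have : ((fun x => (x - b k) / r k) y) = c := hy
    simp only at this
    linarith [h4, this.le, this.ge]
  have h6 : (c - b k) / r k = c := le_antisymm h5 h2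
  rw [div_eq_iff (hr k).ne'] at h6
  linear_combination -h6

/-- The invariant measure `ν` of the affine IFS `φ k x = r k * x + b k`
(with `p ∈ C_N` and `∑ p j * log r j < 0`) has an atom if and only if the maps have a
common fixed point `c`, and in that case `ν` is the Dirac mass at `c`. -/
theorem stmt1 {N : ℕ} (hN : 1 ≤ N) (r b p : Fin (N + 1) → ℝ)
    (hr : ∀ k, 0 < r k) (hp : ∀ j, 0 < p j) (hp1 : ∑ j, p j = 1)
    (hcontr : ∑ j, p j * Real.log (r j) < 0)
    (ν : Measure ℝ) [IsProbabilityMeasure ν]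
    (hν : ν = ∑ j, ENNReal.ofReal (p j) • ν.map (fun x => r j * x + b j)) :
    ((∃ x : ℝ, ν {x} ≠ 0) ↔ ∃ c : ℝ, ∀ k, r k * c + b k = c) ∧
      (∀ c : ℝ, (∀ k, r k * c + b k = c) → ν = Measure.dirac c) := by
  have part2 : ∀ c : ℝ, (∀ k, r k * c + b k = c) → ν = Measure.dirac c :=
    fun c hc => ifsDirac hN r b p hr hp hp1 hcontr ν hν c hc
  refine ⟨⟨?_, ?_⟩, part2⟩
  · rintro ⟨x₀, hx₀⟩
    exact ifsAtom hN r b p hr hp hp1 ν hν x₀ hx₀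
  · rintro ⟨c, hc⟩
    refine ⟨c, ?_⟩
    rw [part2 c hc]
    simp [MeasureTheory.Measure.dirac_apply' c (measurableSet_singleton c)]
end
end

section
/- Let N ≥ 1, let φ_k(x) = r_k x + b_k for 0 ≤ k ≤ N be real affine maps with r_k > 0, let p ∈ C_N with Σ_{j=0}^N p_j log r_j < 0, and let ν be the invariant measure. If ν is absolutely continuous with respect to Lebesgue measure on ℝ with an essentially bounded density f, then p_j ≤ r_j for every 0 ≤ j ≤ N. -/
open MeasureTheory Filter Finset
open scoped ENNReal

noncomputable section

/-- If the invariant measure `ν` of the affine IFS `φ k x = r k * x + b k`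
is absolutely continuous with respect to Lebesgue measure with an essentially bounded
density `f`, then `p j ≤ r j` for every `j`. -/
theorem stmt2 {N : ℕ} (hN : 1 ≤ N) (r b p : Fin (N + 1) → ℝ)
    (hr : ∀ k, 0 < r k) (hp : ∀ j, 0 < p j) (hp1 : ∑ j, p j = 1)
    (hcontr : ∑ j, p j * Real.log (r j) < 0)
    (ν : Measure ℝ) [IsProbabilityMeasure ν]
    (hν : ν = ∑ j, ENNReal.ofReal (p j) • ν.map (fun x => r j * x + b j))
    (f : ℝ → ℝ≥0∞) (hf : Measurable f) (hdens : ν = volume.withDensity f)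
    (hbdd : ∃ C : ℝ≥0∞, C ≠ ⊤ ∧ ∀ᵐ x ∂(volume : Measure ℝ), f x ≤ C) :
    ∀ j, p j ≤ r j := by
  intro j
  by_contra hcon
  push_neg at hcon
  obtain ⟨C, hCt, hCb⟩ := hbdd
  have hrj := hr j
  have hpj := hp j
  -- p j ≤ 1
  have hp1' : p j ≤ 1 := by
    rw [← hp1]
    exact Finset.single_le_sum (fun i _ => (hp i).le) (Finset.mem_univ j)
  have hrlt1 : r j < 1 := lt_of_lt_of_le hcon hp1'
  -- fixed point
  set x₀ : ℝ := b j / (1 - r j) with hx₀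
  have h1r : (1:ℝ) - r j ≠ 0 := by linarith
  have hfix : r j * x₀ + b j = x₀ := by
    have hxb := div_mul_cancel₀ (b j) h1r
    rw [← hx₀] at hxb
    linear_combination -hxb
  have hmeas : Measurable (fun x : ℝ => r j * x + b j) := by fun_prop
  -- key step
  have hstep : ∀ ε : ℝ, ENNReal.ofReal (p j) * ν (Metric.ball x₀ ε)
      ≤ ν (Metric.ball x₀ (r j * ε)) := by
    intro ε
    have hpre : (fun x : ℝ => r j * x + b j) ⁻¹' Metric.ball x₀ (r j * ε)
        = Metric.ball x₀ ε := by
      ext x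
      simp only [Set.mem_preimage, Metric.mem_ball, Real.dist_eq]
      have h1 : r j * x + b j - x₀ = r j * (x - x₀) := by
        linear_combination hfix
      rw [h1, abs_mul, abs_of_pos hrj]
      exact mul_lt_mul_iff_right₀ hrj
    have : ν (Metric.ball x₀ (r j * ε))
        = ∑ k, (ENNReal.ofReal (p k) • ν.map (fun x => r k * x + b k))
            (Metric.ball x₀ (r j * ε)) := by
      conv_lhs => rw [hν]
      simp [Measure.finset_sum_apply]
    rw [this]
    calc ENNReal.ofReal (p j) * ν (Metric.ball x₀ ε)
        = (ENNReal.ofReal (p j) • ν.map (fun x => r j * x + b j))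
            (Metric.ball x₀ (r j * ε)) := by
          rw [Measure.smul_apply, smul_eq_mul,
            Measure.map_apply hmeas measurableSet_ball, hpre]
      _ ≤ _ := Finset.single_le_sum
            (f := fun k => (ENNReal.ofReal (p k) • ν.map (fun x => r k * x + b k))
              (Metric.ball x₀ (r j * ε)))
            (fun i _ => zero_le) (Finset.mem_univ j)
  -- iterated
  have hiter : ∀ n : ℕ, ∀ ε : ℝ, (ENNReal.ofReal (p j)) ^ n * ν (Metric.ball x₀ ε)
      ≤ ν (Metric.ball x₀ (r j ^ n * ε)) := by
    intro n
    induction n with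
    | zero => intro ε; simp
    | succ n ih =>
      intro ε
      have h1 := hstep (r j ^ n * ε)
      have h2 := ih ε
      calc (ENNReal.ofReal (p j)) ^ (n+1) * ν (Metric.ball x₀ ε)
          = ENNReal.ofReal (p j) * ((ENNReal.ofReal (p j)) ^ n * ν (Metric.ball x₀ ε)) := by
            ring
        _ ≤ ENNReal.ofReal (p j) * ν (Metric.ball x₀ (r j ^ n * ε)) :=
            mul_le_mul_right h2 _
        _ ≤ ν (Metric.ball x₀ (r j * (r j ^ n * ε))) := h1
        _ = ν (Metric.ball x₀ (r j ^ (n+1) * ε)) := by ring_nf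
  -- positivity of small balls
  have hpos : ∀ ε : ℝ, 0 < ε → ν (Metric.ball x₀ ε) ≠ 0 := by
    intro ε hε
    obtain ⟨n₀, hn₀⟩ : ∃ n : ℕ, ν (Metric.ball x₀ n) ≠ 0 := by
      by_contra h
      push_neg at h
      have : ν (⋃ n : ℕ, Metric.ball x₀ n) = 0 := measure_iUnion_null h
      rw [Metric.iUnion_ball_nat] at this
      simpa [measure_univ] using this
    have hn₀pos : (0:ℝ) < n₀ := by
      rcases Nat.eq_zero_or_pos n₀ with h | h
      · exfalso; apply hn₀; simp [h]
      · exact_mod_cast h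
    obtain ⟨m, hm⟩ : ∃ m : ℕ, r j ^ m < ε / n₀ :=
      exists_pow_lt_of_lt_one (div_pos hε hn₀pos) hrlt1
    have hεr : (n₀:ℝ) ≤ ε / r j ^ m := by
      have h2 : r j ^ m * n₀ < ε := (lt_div_iff₀ hn₀pos).mp hm
      rw [le_div_iff₀ (pow_pos hrj m)]
      nlinarith [h2]
    have hsub : Metric.ball x₀ (n₀ : ℝ) ⊆ Metric.ball x₀ (ε / r j ^ m) :=
      Metric.ball_subset_ball hεr
    have h1 := hiter m (ε / r j ^ m)
    rw [mul_div_cancel₀ _ (pow_ne_zero m hrj.ne')] at h1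
    intro h0
    rw [h0] at h1
    have hble : ν (Metric.ball x₀ (n₀:ℝ)) ≤ ν (Metric.ball x₀ (ε / r j ^ m)) :=
      measure_mono hsub
    have hz : ENNReal.ofReal (p j) ^ m * ν (Metric.ball x₀ (ε / r j ^ m)) = 0 :=
      le_antisymm h1 zero_le
    rcases mul_eq_zero.mp hz with h | h
    · exact pow_ne_zero m (ENNReal.ofReal_pos.mpr hpj).ne' h
    · exact hn₀ (le_antisymm (h ▸ hble) zero_le)
  -- upper bound from bounded density
  have hub : ∀ s : Set ℝ, MeasurableSet s → ν s ≤ C * volume s := by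
    intro s hs
    rw [hdens, withDensity_apply f hs]
    calc ∫⁻ x in s, f x ≤ ∫⁻ _ in s, C :=
          lintegral_mono_ae (ae_restrict_of_ae hCb)
      _ = C * volume s := by rw [setLIntegral_const]
  -- put it together
  set c : ℝ≥0∞ := ν (Metric.ball x₀ 1) with hc
  have hc0 : c ≠ 0 := hpos 1 one_pos
  have hcT : c ≠ ⊤ := (measure_lt_top ν _).ne
  have hkey : ∀ n : ℕ, ENNReal.ofReal (p j) ^ n * c
      ≤ C * ENNReal.ofReal (2 * r j ^ n) := by
    intro n
    have h1 := hiter n 1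
    rw [mul_one] at h1
    calc ENNReal.ofReal (p j) ^ n * c ≤ ν (Metric.ball x₀ (r j ^ n)) := h1
      _ ≤ C * volume (Metric.ball x₀ (r j ^ n)) := hub _ measurableSet_ball
      _ = C * ENNReal.ofReal (2 * r j ^ n) := by rw [Real.volume_ball]
  -- to reals
  have hcR : 0 < c.toReal := ENNReal.toReal_pos hc0 hcT
  have hkeyR : ∀ n : ℕ, p j ^ n * c.toReal ≤ C.toReal * (2 * r j ^ n) := by
    intro n
    have h := hkey n
    have hRT : C * ENNReal.ofReal (2 * r j ^ n) ≠ ⊤ :=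
      ENNReal.mul_ne_top hCt ENNReal.ofReal_ne_top
    have hLT : ENNReal.ofReal (p j) ^ n * c ≠ ⊤ :=
      ENNReal.mul_ne_top (by simp [ENNReal.ofReal_ne_top]) hcT
    have := (ENNReal.toReal_le_toReal hLT hRT).mpr h
    rw [ENNReal.toReal_mul, ENNReal.toReal_mul, ENNReal.toReal_pow,
      ENNReal.toReal_ofReal hpj.le,
      ENNReal.toReal_ofReal (by positivity)] at this
    exact this
  -- contradiction
  obtain ⟨n, hn⟩ := pow_unbounded_of_one_lt (C.toReal * 2 / c.toReal)
    ((one_lt_div hrj).mpr hcon)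
  have h := hkeyR n
  rw [div_pow] at hn
  have hrn : (0:ℝ) < r j ^ n := pow_pos hrj n
  have h2 : p j ^ n / r j ^ n ≤ C.toReal * 2 / c.toReal := by
    rw [div_le_div_iff₀ hrn hcR]
    nlinarith [h]
  linarith
end
end

section
/- Let N ≥ 1, 0 < λ < 1, relatively prime integers (n_k)_{0≤k≤N}, reals (b_k)_{0≤k≤N}, and p ∈ C_N with Σ_{j=0}^N p_j n_j > 0. Let ν be the invariant measure of the affine maps φ_k(x) = λ^{n_k} x + b_k. If ν is not Rajchman, then there exist α ∈ [1, 1/λ] and c > 0 such that |ν̂(α λ^{−k})| → c as k → +∞. -/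
open MeasureTheory Filter Finset

noncomputable section

/-- Fourier transform of a measure on `ℝ`: `μ̂(t) = ∫ e^{2iπtx} dμ(x)`. -/
def FT (μ : Measure ℝ) (t : ℝ) : ℂ :=
  ∫ x, Complex.exp (2 * (Real.pi : ℂ) * Complex.I * (t : ℂ) * (x : ℂ)) ∂μ

lemma FT_norm_one (t x : ℝ) :
    ‖Complex.exp (2 * (Real.pi : ℂ) * Complex.I * (t : ℂ) * (x : ℂ))‖ = 1 := by
  have h : 2 * (Real.pi : ℂ) * Complex.I * (t : ℂ) * (x : ℂ)
      = ((2 * Real.pi * t * x : ℝ) : ℂ) * Complex.I := by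
    push_cast; ring
  rw [h, Complex.norm_exp_ofReal_mul_I]

lemma FT_integrand_cont (t : ℝ) :
    Continuous fun x : ℝ => Complex.exp (2 * (Real.pi : ℂ) * Complex.I * (t : ℂ) * (x : ℂ)) := by
  apply Complex.continuous_exp.comp
  exact continuous_const.mul Complex.continuous_ofReal

lemma FT_integrable (t : ℝ) (μ : Measure ℝ) [IsFiniteMeasure μ] :
    Integrable (fun x : ℝ => Complex.exp (2 * (Real.pi : ℂ) * Complex.I * (t : ℂ) * (x : ℂ))) μ := by
  refine (integrable_const (1:ℝ)).mono' ((FT_integrand_cont t).aestronglyMeasurable) ?_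
  filter_upwards with x
  rw [FT_norm_one]

lemma FT_abs_le_one (μ : Measure ℝ) [IsProbabilityMeasure μ] (t : ℝ) :
    ‖FT μ t‖ ≤ 1 := by
  calc ‖FT μ t‖ ≤ ∫ x, ‖Complex.exp (2 * (Real.pi : ℂ) * Complex.I * (t : ℂ) * (x : ℂ))‖ ∂μ :=
        norm_integral_le_integral_norm _
    _ = ∫ _x, (1:ℝ) ∂μ := by
        congr 1; funext x; rw [FT_norm_one]
    _ = 1 := by simp

lemma FT_continuous (μ : Measure ℝ) [IsFiniteMeasure μ] : Continuous (FT μ) := by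
  apply continuous_of_dominated (bound := fun _ => (1:ℝ))
  · exact fun t => (FT_integrand_cont t).aestronglyMeasurable
  · intro t
    filter_upwards with x
    rw [FT_norm_one]
  · exact integrable_const 1
  · filter_upwards with x
    apply Complex.continuous_exp.comp
    have : Continuous fun t : ℝ => ((t:ℂ)) := Complex.continuous_ofReal
    continuity

/-- The self-similarity relation for the Fourier transform. -/
lemma FT_rel {Nn : ℕ} (lam : ℝ) (hlam0 : 0 < lam) (n : Fin (Nn + 1) → ℤ)
    (b p : Fin (Nn + 1) → ℝ) (hp : ∀ j, 0 < p j)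
    (ν : Measure ℝ) [IsProbabilityMeasure ν]
    (hν : ν = ∑ j, ENNReal.ofReal (p j) • ν.map (fun x => lam ^ (n j) * x + b j)) (t : ℝ) :
    FT ν t = ∑ j, (p j : ℂ) *
      (Complex.exp (2 * (Real.pi : ℂ) * Complex.I * (t : ℂ) * (b j : ℂ)) *
        FT ν (lam ^ (n j) * t)) := by
  have hmeas : ∀ j : Fin (Nn + 1), Measurable fun x : ℝ => lam ^ (n j) * x + b j :=
    fun j => (measurable_id.const_mul _).add_const _
  have hprob : ∀ j : Fin (Nn + 1), IsProbabilityMeasure (ν.map (fun x => lam ^ (n j) * x + b j)) :=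
    fun j => Measure.isProbabilityMeasure_map (hmeas j).aemeasurable
  have h1 : FT ν t = ∑ j, (p j) •
      ∫ x, Complex.exp (2 * (Real.pi : ℂ) * Complex.I * (t : ℂ) * (x : ℂ))
        ∂(ν.map (fun x => lam ^ (n j) * x + b j)) := by
    rw [show FT ν t = ∫ x, Complex.exp (2 * (Real.pi : ℂ) * Complex.I * (t : ℂ) * (x : ℂ)) ∂ν from rfl]
    conv_lhs => rw [hν]
    rw [integral_finset_sum_measure ?h]
    case h =>
      intro j _
      haveI := hprob j
      exact (FT_integrable t _).smul_measure ENNReal.ofReal_ne_top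
    refine Finset.sum_congr rfl fun j _ => ?_
    haveI := hprob j
    rw [integral_smul_measure, ENNReal.toReal_ofReal (hp j).le]
  rw [h1]
  refine Finset.sum_congr rfl fun j _ => ?_
  haveI := hprob j
  rw [integral_map (hmeas j).aemeasurable (FT_integrand_cont t).aestronglyMeasurable]
  have h2 : ∀ x : ℝ, Complex.exp (2 * (Real.pi : ℂ) * Complex.I * (t : ℂ) * ((lam ^ (n j) * x + b j : ℝ) : ℂ))
      = Complex.exp (2 * (Real.pi : ℂ) * Complex.I * (t : ℂ) * (b j : ℂ)) *
        Complex.exp (2 * (Real.pi : ℂ) * Complex.I * ((lam ^ (n j) * t : ℝ) : ℂ) * (x : ℂ)) := by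
    intro x
    rw [← Complex.exp_add]
    congr 1
    push_cast
    ring
  calc (p j) •
      ∫ x, Complex.exp (2 * (Real.pi : ℂ) * Complex.I * (t : ℂ) * ((lam ^ (n j) * x + b j : ℝ) : ℂ)) ∂ν
      = (p j) •
        (Complex.exp (2 * (Real.pi : ℂ) * Complex.I * (t : ℂ) * (b j : ℂ)) *
          ∫ x, Complex.exp (2 * (Real.pi : ℂ) * Complex.I * ((lam ^ (n j) * t : ℝ) : ℂ) * (x : ℂ)) ∂ν) := by
        congr 1
        rw [← integral_const_mul]
        congr 1
        funext x
        exact h2 x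
    _ = (p j : ℂ) * (Complex.exp (2 * (Real.pi : ℂ) * Complex.I * (t : ℂ) * (b j : ℂ)) *
          FT ν (lam ^ (n j) * t)) := by
        rw [Complex.real_smul]
        rfl

/-- Subharmonicity of `t ↦ |ν̂(t)|`. -/
lemma F_subharm {Nn : ℕ} (lam : ℝ) (hlam0 : 0 < lam) (n : Fin (Nn + 1) → ℤ)
    (b p : Fin (Nn + 1) → ℝ) (hp : ∀ j, 0 < p j)
    (ν : Measure ℝ) [IsProbabilityMeasure ν]
    (hν : ν = ∑ j, ENNReal.ofReal (p j) • ν.map (fun x => lam ^ (n j) * x + b j)) (t : ℝ) :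
    ‖FT ν t‖ ≤ ∑ j, p j * ‖FT ν (lam ^ (n j) * t)‖ := by
  rw [FT_rel lam hlam0 n b p hp ν hν t]
  calc ‖∑ j, (p j : ℂ) *
      (Complex.exp (2 * (Real.pi : ℂ) * Complex.I * (t : ℂ) * (b j : ℂ)) *
        FT ν (lam ^ (n j) * t))‖
      ≤ ∑ j, ‖(p j : ℂ) *
        (Complex.exp (2 * (Real.pi : ℂ) * Complex.I * (t : ℂ) * (b j : ℂ)) *
          FT ν (lam ^ (n j) * t))‖ := norm_sum_le _ _
    _ = ∑ j, p j * ‖FT ν (lam ^ (n j) * t)‖ := by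
        refine Finset.sum_congr rfl fun j _ => ?_
        rw [norm_mul, norm_mul]
        have hb : ‖Complex.exp (2 * (Real.pi : ℂ) * Complex.I * (t : ℂ) * (b j : ℂ))‖ = 1 := by
          have := FT_norm_one t (b j)
          exact this
        rw [hb, Complex.norm_of_nonneg (hp j).le]
        ring


/-- Stopped evolution operator for the random walk with steps `n j` and weights `p j`,
stopped upon reaching level `≥ ℓ`. -/
def Psi (p : Fin (N + 1) → ℝ) (n : Fin (N + 1) → ℤ) (ℓ : ℤ) : ℕ → (ℤ → ℝ) → ℤ → ℝ
  | 0, u, s => u s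
  | (M + 1), u, s => if ℓ ≤ s then u s else ∑ j, p j * Psi p n ℓ M u (s + n j)

/-- A path of length `r` from `s` to exactly `ℓ`, staying strictly below `ℓ` until the end. -/
def SPath (n : Fin (N + 1) → ℤ) (ℓ : ℤ) : ℤ → ℕ → Prop
  | s, 0 => s = ℓ
  | s, (r + 1) => s < ℓ ∧ ∃ j, SPath n ℓ (s + n j) r

namespace Psi

variable {p : Fin (N + 1) → ℝ} {n : Fin (N + 1) → ℤ} {ℓ : ℤ}

lemma zero_def (u : ℤ → ℝ) (s : ℤ) : Psi p n ℓ 0 u s = u s := rfl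

lemma succ_def (M : ℕ) (u : ℤ → ℝ) (s : ℤ) :
    Psi p n ℓ (M + 1) u s = if ℓ ≤ s then u s else ∑ j, p j * Psi p n ℓ M u (s + n j) := rfl

lemma stopped (M : ℕ) (u : ℤ → ℝ) {s : ℤ} (hs : ℓ ≤ s) : Psi p n ℓ M u s = u s := by
  cases M with
  | zero => rfl
  | succ M => simp [succ_def, hs]

lemma succ_lt (M : ℕ) (u : ℤ → ℝ) {s : ℤ} (hs : s < ℓ) :
    Psi p n ℓ (M + 1) u s = ∑ j, p j * Psi p n ℓ M u (s + n j) := by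
  simp [succ_def, not_le.mpr hs]

lemma nonneg (hp : ∀ j, 0 < p j) {u : ℤ → ℝ} (hu : ∀ s, 0 ≤ u s) :
    ∀ M s, 0 ≤ Psi p n ℓ M u s := by
  intro M
  induction M with
  | zero => intro s; exact hu s
  | succ M ih =>
    intro s
    by_cases hs : ℓ ≤ s
    · rw [stopped _ _ hs]; exact hu s
    · rw [succ_lt _ _ (not_le.mp hs)]
      exact Finset.sum_nonneg fun j _ => mul_nonneg (hp j).le (ih _)

lemma mono (hp : ∀ j, 0 < p j) {u v : ℤ → ℝ} (huv : ∀ s, u s ≤ v s) :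
    ∀ M s, Psi p n ℓ M u s ≤ Psi p n ℓ M v s := by
  intro M
  induction M with
  | zero => intro s; exact huv s
  | succ M ih =>
    intro s
    by_cases hs : ℓ ≤ s
    · rw [stopped _ _ hs, stopped _ _ hs]; exact huv s
    · rw [succ_lt _ _ (not_le.mp hs), succ_lt _ _ (not_le.mp hs)]
      exact Finset.sum_le_sum fun j _ => mul_le_mul_of_nonneg_left (ih _) (hp j).le

lemma add (u v : ℤ → ℝ) : ∀ M s,
    Psi p n ℓ M (fun t => u t + v t) s = Psi p n ℓ M u s + Psi p n ℓ M v s := by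
  intro M
  induction M with
  | zero => intro s; rfl
  | succ M ih =>
    intro s
    by_cases hs : ℓ ≤ s
    · rw [stopped _ _ hs, stopped _ _ hs, stopped _ _ hs]
    · rw [succ_lt _ _ (not_le.mp hs), succ_lt _ _ (not_le.mp hs), succ_lt _ _ (not_le.mp hs),
        ← Finset.sum_add_distrib]
      exact Finset.sum_congr rfl fun j _ => by rw [ih]; ring

lemma smul (a : ℝ) (u : ℤ → ℝ) : ∀ M s,
    Psi p n ℓ M (fun t => a * u t) s = a * Psi p n ℓ M u s := by
  intro M
  induction M with
  | zero => intro s; rfl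
  | succ M ih =>
    intro s
    by_cases hs : ℓ ≤ s
    · rw [stopped _ _ hs, stopped _ _ hs]
    · rw [succ_lt _ _ (not_le.mp hs), succ_lt _ _ (not_le.mp hs), Finset.mul_sum]
      exact Finset.sum_congr rfl fun j _ => by rw [ih]; ring

lemma const (hp1 : ∑ j, p j = 1) (C : ℝ) : ∀ M s, Psi p n ℓ M (fun _ => C) s = C := by
  intro M
  induction M with
  | zero => intro s; rfl
  | succ M ih =>
    intro s
    by_cases hs : ℓ ≤ s
    · rw [stopped _ _ hs]
    · rw [succ_lt _ _ (not_le.mp hs)]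
      calc ∑ j, p j * Psi p n ℓ M (fun _ => C) (s + n j) = ∑ j, p j * C := by
            exact Finset.sum_congr rfl fun j _ => by rw [ih]
        _ = C := by rw [← Finset.sum_mul, hp1, one_mul]

/-- a subharmonic function is dominated by its stopped evolution. -/
lemma le_of_subharmonic (hp : ∀ j, 0 < p j) {u : ℤ → ℝ}
    (hsub : ∀ s, u s ≤ ∑ j, p j * u (s + n j)) : ∀ M s, u s ≤ Psi p n ℓ M u s := by
  intro M
  induction M with
  | zero => intro s; exact le_rfl
  | succ M ih =>
    intro s
    by_cases hs : ℓ ≤ s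
    · rw [stopped _ _ hs]
    · rw [succ_lt _ _ (not_le.mp hs)]
      exact (hsub s).trans (Finset.sum_le_sum fun j _ =>
        mul_le_mul_of_nonneg_left (ih _) (hp j).le)

/-- For `u` vanishing below the level and nonnegative, `Psi` is monotone in the horizon. -/
lemma mono_M (hp : ∀ j, 0 < p j) {u : ℤ → ℝ} (hu0 : ∀ s, 0 ≤ u s)
    (huz : ∀ s, s < ℓ → u s = 0) : ∀ M s, Psi p n ℓ M u s ≤ Psi p n ℓ (M + 1) u s := by
  intro M
  induction M with
  | zero =>
    intro s
    by_cases hs : ℓ ≤ s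
    · rw [stopped _ _ hs, stopped _ _ hs]
    · rw [zero_def, huz s (not_le.mp hs), succ_lt _ _ (not_le.mp hs)]
      exact Finset.sum_nonneg fun j _ => mul_nonneg (hp j).le (hu0 _)
  | succ M ih =>
    intro s
    by_cases hs : ℓ ≤ s
    · rw [stopped _ _ hs, stopped _ _ hs]
    · rw [succ_lt _ _ (not_le.mp hs), succ_lt _ _ (not_le.mp hs)]
      exact Finset.sum_le_sum fun j _ => mul_le_mul_of_nonneg_left (ih _) (hp j).le

lemma mono_M' (hp : ∀ j, 0 < p j) {u : ℤ → ℝ} (hu0 : ∀ s, 0 ≤ u s)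
    (huz : ∀ s, s < ℓ → u s = 0) {M M' : ℕ} (h : M ≤ M') (s : ℤ) :
    Psi p n ℓ M u s ≤ Psi p n ℓ M' u s := by
  induction M' with
  | zero => simp_all
  | succ M' ih =>
    rcases Nat.lt_or_ge M (M' + 1) with h' | h'
    · exact (ih (Nat.lt_succ_iff.mp h')).trans (mono_M hp hu0 huz M' s)
    · have : M = M' + 1 := le_antisymm h h'
      subst this; exact le_rfl

/-- Chapman–Kolmogorov for the stopped evolution. -/
lemma comp (u : ℤ → ℝ) : ∀ M' M s,
    Psi p n ℓ (M' + M) u s = Psi p n ℓ M' (Psi p n ℓ M u) s := by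
  intro M'
  induction M' with
  | zero => intro M s; rw [Nat.zero_add]; rfl
  | succ M' ih =>
    intro M s
    by_cases hs : ℓ ≤ s
    · rw [stopped _ _ hs, stopped _ _ hs, stopped _ _ hs]
    · have : M' + 1 + M = (M' + M) + 1 := by omega
      rw [this, succ_lt _ _ (not_le.mp hs), succ_lt _ _ (not_le.mp hs)]
      exact Finset.sum_congr rfl fun j _ => by rw [ih]


lemma lincomb3 (hp1 : ∑ j, p j = 1) (a b c : ℝ) (f g h : ℤ → ℝ) : ∀ M s,
    Psi p n ℓ M (fun t => a + b * (f t + g t) + c * h t) s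
      = a + b * (Psi p n ℓ M f s + Psi p n ℓ M g s) + c * Psi p n ℓ M h s := by
  intro M
  induction M with
  | zero => intro s; rfl
  | succ M ih =>
    intro s
    by_cases hs : ℓ ≤ s
    · rw [stopped _ _ hs, stopped _ _ hs, stopped _ _ hs, stopped _ _ hs]
    · rw [succ_lt _ _ (not_le.mp hs), succ_lt _ _ (not_le.mp hs),
        succ_lt _ _ (not_le.mp hs), succ_lt _ _ (not_le.mp hs)]
      rw [Finset.sum_congr rfl (fun j (_ : j ∈ Finset.univ) => by rw [ih (s + n j)])]
      have expand : ∀ j : Fin (N+1), p j * (a + b * (Psi p n ℓ M f (s + n j) + Psi p n ℓ M g (s + n j))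
          + c * Psi p n ℓ M h (s + n j))
          = p j * a + b * (p j * Psi p n ℓ M f (s + n j) + p j * Psi p n ℓ M g (s + n j))
            + c * (p j * Psi p n ℓ M h (s + n j)) := fun j => by ring
      rw [Finset.sum_congr rfl (fun j (_ : j ∈ Finset.univ) => expand j)]
      simp only [Finset.sum_add_distrib, ← Finset.sum_mul, ← Finset.mul_sum, hp1]
      ring

lemma unreach (hD : ∀ j, n j ≤ (D : ℤ)) (hD0 : 0 ≤ D) :
    ∀ M, ∀ s < ℓ, Psi p n ℓ M (fun t => if ℓ + D ≤ t then 1 else 0) s = 0 := by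
  intro M
  induction M with
  | zero =>
    intro s hs
    have : ¬ (ℓ + D ≤ s) := by omega
    simp [Psi, this]
  | succ M ih =>
    intro s hs
    rw [succ_lt _ _ hs]
    have h0 : ∀ j : Fin (N + 1), p j * Psi p n ℓ M (fun t => if ℓ + D ≤ t then 1 else 0) (s + n j) = 0 := by
      intro j
      rcases lt_or_ge (s + n j) ℓ with h | h
      · rw [ih _ h, mul_zero]
      · rw [stopped _ _ h]
        have : ¬ (ℓ + D ≤ s + n j) := by have := hD j; omega
        simp [this]
    simp [h0]

/-- Chernoff-type bound for the mass still below the level after `M` steps. -/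
lemma chernoff (hp : ∀ j, 0 < p j) {θ : ℝ} (hθ : 0 < θ) :
    ∀ M s, Psi p n ℓ M (fun t => if t < ℓ then 1 else 0) s ≤
      Real.exp (θ * (ℓ - s)) * (∑ j, p j * Real.exp (-θ * n j)) ^ M := by
  have hΦ0 : (0:ℝ) ≤ ∑ j, p j * Real.exp (-θ * n j) :=
    Finset.sum_nonneg fun j _ => mul_nonneg (hp j).le (Real.exp_nonneg _)
  intro M
  induction M with
  | zero =>
    intro s
    rcases lt_or_ge s ℓ with h | h
    · have h1 : (1:ℝ) ≤ Real.exp (θ * (ℓ - s)) := by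
        rw [← Real.exp_zero]
        apply Real.exp_le_exp.mpr
        have : (1:ℝ) ≤ (ℓ:ℝ) - s := by
          have : (s:ℝ) + 1 ≤ (ℓ:ℝ) := by exact_mod_cast h
          linarith
        nlinarith
      simpa [Psi, if_pos h] using h1
    · simp only [Psi]
      rw [if_neg (not_lt.mpr h), pow_zero, mul_one]
      exact Real.exp_nonneg _
  | succ M ih =>
    intro s
    rcases lt_or_ge s ℓ with h | h
    · rw [succ_lt _ _ h]
      have key : ∀ j : Fin (N+1), p j * Psi p n ℓ M (fun t => if t < ℓ then 1 else 0) (s + n j)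
          ≤ (p j * Real.exp (-θ * n j)) *
            (Real.exp (θ * (ℓ - s)) * (∑ j, p j * Real.exp (-θ * n j)) ^ M) := by
        intro j
        have h2 := ih (s + n j)
        have h3 : Real.exp (θ * ((ℓ:ℝ) - ((s:ℤ) + n j : ℤ)))
            = Real.exp (-θ * n j) * Real.exp (θ * ((ℓ:ℝ) - s)) := by
          rw [← Real.exp_add]
          congr 1
          push_cast
          ring
        rw [h3] at h2
        calc p j * Psi p n ℓ M (fun t => if t < ℓ then 1 else 0) (s + n j)
            ≤ p j * (Real.exp (-θ * n j) * Real.exp (θ * ((ℓ:ℝ) - s)) *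
              (∑ j, p j * Real.exp (-θ * n j)) ^ M) :=
              mul_le_mul_of_nonneg_left h2 (hp j).le
          _ = (p j * Real.exp (-θ * n j)) *
              (Real.exp (θ * (ℓ - s)) * (∑ j, p j * Real.exp (-θ * n j)) ^ M) := by ring
      calc (∑ j, p j * Psi p n ℓ M (fun t => if t < ℓ then 1 else 0) (s + n j))
          ≤ ∑ j, (p j * Real.exp (-θ * n j)) *
              (Real.exp (θ * (ℓ - s)) * (∑ j, p j * Real.exp (-θ * n j)) ^ M) :=
            Finset.sum_le_sum fun j _ => key j
        _ = Real.exp (θ * (ℓ - s)) * (∑ j, p j * Real.exp (-θ * n j)) ^ (M + 1) := by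
            rw [← Finset.sum_mul, pow_succ]
            ring
    · rw [stopped _ _ h, if_neg (not_lt.mpr h)]
      positivity

/-- Lower bound on the mass arriving exactly at `ℓ`, along a given path. -/
lemma path_lower (hp : ∀ j, 0 < p j) {pmin : ℝ} (hpm : ∀ j, pmin ≤ p j) (hpm0 : 0 ≤ pmin) :
    ∀ r M s, SPath n ℓ s r → r ≤ M →
      pmin ^ r ≤ Psi p n ℓ M (fun t => if t = ℓ then 1 else 0) s := by
  intro r
  induction r with
  | zero =>
    intro M s hpath _
    have hs : s = ℓ := hpath
    subst hs
    rw [stopped _ _ le_rfl]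
    simp
  | succ r ih =>
    intro M s hpath hrM
    obtain ⟨hs, j, hj⟩ := hpath
    obtain ⟨M', rfl⟩ : ∃ M', M = M' + 1 := ⟨M - 1, by omega⟩
    rw [succ_lt _ _ hs]
    have h1 : pmin ^ r ≤ Psi p n ℓ M' (fun t => if t = ℓ then 1 else 0) (s + n j) :=
      ih M' _ hj (by omega)
    have h2 : p j * Psi p n ℓ M' (fun t => if t = ℓ then 1 else 0) (s + n j)
        ≤ ∑ j', p j' * Psi p n ℓ M' (fun t => if t = ℓ then 1 else 0) (s + n j') :=
      Finset.single_le_sum (f := fun j' => p j' * Psi p n ℓ M' (fun t => if t = ℓ then 1 else 0) (s + n j'))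
        (fun j' _ => mul_nonneg (hp j').le (nonneg hp (fun t => by positivity) _ _)) (Finset.mem_univ j)
    calc pmin ^ (r + 1) = pmin * pmin ^ r := by ring
      _ ≤ p j * Psi p n ℓ M' (fun t => if t = ℓ then 1 else 0) (s + n j) := by
          exact mul_le_mul (hpm j) h1 (by positivity) (hp j).le
      _ ≤ _ := h2

/-- Bridge: mass that has crossed an intermediate level `ℓ'` can be steered further. -/
lemma bridge (hp : ∀ j, 0 < p j) {ℓ' : ℤ} (hℓ' : ℓ' ≤ ℓ) {w h : ℤ → ℝ} (R : ℕ)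
    (hw0 : ∀ s, 0 ≤ w s) (hwz : ∀ s, s < ℓ → w s = 0)
    (hh : ∀ t, ℓ' ≤ t → h t ≤ Psi p n ℓ R w t)
    (hhz : ∀ t, t < ℓ' → h t = 0) :
    ∀ M' s, Psi p n ℓ' M' h s ≤ Psi p n ℓ (M' + R) w s := by
  have monoM : ∀ {M M' : ℕ}, M ≤ M' → ∀ s, Psi p n ℓ M w s ≤ Psi p n ℓ M' w s :=
    fun h s => mono_M' hp hw0 hwz h s
  intro M'
  induction M' with
  | zero =>
    intro s
    rcases lt_or_ge s ℓ' with h1 | h1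
    · show h s ≤ _
      rw [hhz _ h1]
      exact nonneg hp hw0 _ _
    · show h s ≤ _
      exact (hh s h1).trans (monoM (by omega) s)
  | succ M' ih =>
    intro s
    rcases lt_or_ge s ℓ' with h1 | h1
    · rw [succ_lt _ _ h1]
      have : M' + 1 + R = (M' + R) + 1 := by omega
      rw [this, succ_lt _ _ (lt_of_lt_of_le h1 hℓ')]
      exact Finset.sum_le_sum fun j _ => mul_le_mul_of_nonneg_left (ih _) (hp j).le
    · rw [stopped _ _ h1]
      exact (hh s h1).trans (monoM (by omega) s)


end Psi




/-- From a multiset of steps balancing to `ℓ - D`, build an admissible path to `ℓ`. -/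
lemma spath_build (n : Fin (N + 1) → ℤ) (D : ℤ) (hD1 : 1 ≤ D)
    (jD : Fin (N + 1)) (hjD : n jD = D) (ℓ : ℤ) :
    ∀ (T : ℕ) (m : Fin (N + 1) → ℕ) (s : ℤ), (∑ j, m j = T) → s < ℓ →
      (s + ∑ j, (m j : ℤ) * n j = ℓ - D) → SPath n ℓ s (T + 1) := by
  intro T
  induction T using Nat.strong_induction_on with
  | _ T ih =>
  intro m s hsum hs hbal
  cases T with
  | zero =>
    have hm : ∀ j, m j = 0 := by
      intro j
      have := Finset.sum_eq_zero_iff.mp hsum j (Finset.mem_univ j)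
      exact this
    have hz : ∑ j, (m j : ℤ) * n j = 0 :=
      Finset.sum_eq_zero fun j _ => by rw [hm j]; simp
    refine ⟨hs, jD, ?_⟩
    show s + n jD = ℓ
    rw [hjD]; omega
  | succ T' =>
    -- find a step to take
    have hex : ∃ j0 : Fin (N + 1), m j0 ≠ 0 ∧ (n j0 ≤ 0 ∨ ∀ j, m j ≠ 0 → 0 < n j) := by
      by_cases hneg : ∃ j, m j ≠ 0 ∧ n j ≤ 0
      · obtain ⟨j0, h1, h2⟩ := hneg
        exact ⟨j0, h1, Or.inl h2⟩
      · push_neg at hneg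
        have : ∃ j0, m j0 ≠ 0 := by
          by_contra hno
          push_neg at hno
          have : ∑ j, m j = 0 := Finset.sum_eq_zero fun j _ => hno j
          omega
        obtain ⟨j0, h1⟩ := this
        exact ⟨j0, h1, Or.inr fun j hj => hneg j hj⟩
    obtain ⟨j0, hj0, hcase⟩ := hex
    -- the reduced multiset
    have hsplit : ∀ (f : Fin (N + 1) → ℤ), ∑ j, f j = f j0 + ∑ j ∈ Finset.univ.erase j0, f j :=
      fun f => (Finset.add_sum_erase _ f (Finset.mem_univ j0)).symm
    have hsplitN : ∀ (f : Fin (N + 1) → ℕ), ∑ j, f j = f j0 + ∑ j ∈ Finset.univ.erase j0, f j :=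
      fun f => (Finset.add_sum_erase _ f (Finset.mem_univ j0)).symm
    set m' : Fin (N + 1) → ℕ := fun j => if j = j0 then m j0 - 1 else m j with hm'
    have hsum' : ∑ j, m' j = T' := by
      have h1 := hsplitN m
      have h2 := hsplitN m'
      have h3 : ∑ j ∈ Finset.univ.erase j0, m' j = ∑ j ∈ Finset.univ.erase j0, m j :=
        Finset.sum_congr rfl fun j hj => by
          simp only [hm', if_neg (Finset.ne_of_mem_erase hj)]
      have h4 : m' j0 = m j0 - 1 := by simp [hm']
      omega
    have hbalrel : ∑ j, (m' j : ℤ) * n j = (∑ j, (m j : ℤ) * n j) - n j0 := by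
      have h1 := hsplit (fun j => (m j : ℤ) * n j)
      have h2 := hsplit (fun j => (m' j : ℤ) * n j)
      have h3 : ∑ j ∈ Finset.univ.erase j0, (m' j : ℤ) * n j
          = ∑ j ∈ Finset.univ.erase j0, (m j : ℤ) * n j :=
        Finset.sum_congr rfl fun j hj => by
          simp only [hm', if_neg (Finset.ne_of_mem_erase hj)]
      have h4 : (m' j0 : ℤ) = (m j0 : ℤ) - 1 := by
        simp only [hm', if_pos rfl]
        omega
      simp only [h3, h4] at h2 ⊢
      rw [h2, h1]
      ring
    have hs' : s + n j0 < ℓ := by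
      rcases hcase with h | h
      · omega
      · -- all remaining steps positive; the whole remaining sum is ≥ n j0
        have hrest : 0 ≤ ∑ j, (m' j : ℤ) * n j := by
          apply Finset.sum_nonneg
          intro j _
          rcases Nat.eq_zero_or_pos (m' j) with h0 | h0
          · rw [h0]; simp
          · have : m j ≠ 0 := by
              intro hc
              have h5 : m' j = 0 := by
                simp only [hm']
                split
                · rename_i hje; rw [hje] at hc; omega
                · exact hc
              omega
            have := h j this
            positivity
        omega
    exact ⟨hs, j0, ih T' (Nat.lt_succ_self T') m' (s + n j0) hsum' hs' (by omega)⟩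

/-- Existence of a positive `θ` with `∑ p j e^{-θ n j} < 1`. -/
lemma exists_theta (p : Fin (N + 1) → ℝ) (n : Fin (N + 1) → ℤ)
    (hdrift : 0 < ∑ j, p j * (n j : ℝ)) (hp1 : ∑ j, p j = 1) :
    ∃ θ : ℝ, 0 < θ ∧ ∑ j, p j * Real.exp (-θ * n j) < 1 := by
  set f : ℝ → ℝ := fun θ => ∑ j, p j * Real.exp (-θ * n j) with hf
  have hf0 : f 0 = 1 := by simp [hf, hp1]
  have hderiv : HasDerivAt f (∑ j, p j * (-(n j : ℝ))) 0 := by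
    apply HasDerivAt.fun_sum
    intro j _
    have h1 : HasDerivAt (fun θ : ℝ => -θ * (n j : ℝ)) (-(n j : ℝ)) 0 := by
      simpa using ((hasDerivAt_id (0:ℝ)).neg.mul_const ((n j : ℝ)))
    have h2 := h1.exp
    simpa using h2.const_mul (p j)
  have hneg : (∑ j, p j * (-(n j : ℝ))) < 0 := by
    have : ∑ j, p j * (-(n j : ℝ)) = -∑ j, p j * (n j : ℝ) := by
      rw [← Finset.sum_neg_distrib]
      exact Finset.sum_congr rfl fun j _ => by ring
    rw [this]; linarith
  have hslope := hasDerivAt_iff_tendsto_slope.mp hderiv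
  have hev : ∀ᶠ θ in nhdsWithin (0:ℝ) {(0:ℝ)}ᶜ, slope f 0 θ < 0 :=
    hslope.eventually_lt_const hneg
  have hsub : nhdsWithin (0:ℝ) (Set.Ioi 0) ≤ nhdsWithin (0:ℝ) {(0:ℝ)}ᶜ :=
    nhdsWithin_mono _ (fun x hx => ne_of_gt hx)
  have hev2 : ∀ᶠ θ in nhdsWithin (0:ℝ) (Set.Ioi 0), slope f 0 θ < 0 ∧ θ ∈ Set.Ioi (0:ℝ) :=
    (hev.filter_mono hsub).and self_mem_nhdsWithin
  obtain ⟨θ, hθs, hθpos⟩ := hev2.exists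
  refine ⟨θ, hθpos, ?_⟩
  have h1 : slope f 0 θ = (f θ - 1) / θ := by
    rw [slope_def_field, hf0]
    ring_nf
  rw [h1] at hθs
  have h2 : (f θ - 1) / θ * θ < 0 := mul_neg_of_neg_of_pos hθs hθpos
  rw [div_mul_cancel₀ _ (ne_of_gt hθpos)] at h2
  have : f θ < 1 := by linarith
  exact this

lemma finset_gcd_bezout {ι : Type*} [DecidableEq ι] (n : ι → ℤ) (s : Finset ι) :
    ∃ c : ι → ℤ, ∑ j ∈ s, c j * n j = s.gcd n := by
  classical
  induction s using Finset.induction_on with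
  | empty => exact ⟨0, by simp⟩
  | @insert a s ha ih =>
    obtain ⟨c, hc⟩ := ih
    refine ⟨fun j => if j = a then (n a).gcdA (s.gcd n)
      else c j * (n a).gcdB (s.gcd n), ?_⟩
    rw [Finset.sum_insert ha, Finset.gcd_insert]
    have hsum : ∑ j ∈ s, (if j = a then (n a).gcdA (s.gcd n)
        else c j * (n a).gcdB (s.gcd n)) * n j
        = (∑ j ∈ s, c j * n j) * (n a).gcdB (s.gcd n) := by
      rw [Finset.sum_mul]
      refine Finset.sum_congr rfl fun j hj => ?_
      have : j ≠ a := fun h => ha (h ▸ hj)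
      rw [if_neg this]; ring
    rw [hsum, hc]
    have := Int.gcd_eq_gcd_ab (n a) (s.gcd n)
    rw [← Int.coe_gcd]
    simp only [eq_self_iff_true, if_true]
    linarith [this]

lemma rep_build {N : ℕ} (n : Fin (N + 1) → ℤ) (D : ℤ) (hD1 : 1 ≤ D)
    (jD : Fin (N + 1)) (hjD : n jD = D)
    (c : Fin (N + 1) → ℤ) (hc : ∑ j, c j * n j = 1) :
    ∃ (Q : ℤ) (mQ mP : Fin (N + 1) → ℕ), 1 ≤ Q ∧
      (∑ j, (mQ j : ℤ) * n j = Q) ∧ (∑ j, (mP j : ℤ) * n j = Q + 1) := by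
  classical
  obtain ⟨mP0, hmP0⟩ : ∃ m : Fin (N+1) → ℕ, m = fun j => (c j).toNat := ⟨_, rfl⟩
  obtain ⟨mQ0, hmQ0⟩ : ∃ m : Fin (N+1) → ℕ, m = fun j => (-(c j)).toNat := ⟨_, rfl⟩
  obtain ⟨Q0, hQ0⟩ : ∃ q : ℤ, q = ∑ j, (mQ0 j : ℤ) * n j := ⟨_, rfl⟩
  have hPQ : ∑ j, (mP0 j : ℤ) * n j = Q0 + 1 := by
    have h1 : ∑ j, (mP0 j : ℤ) * n j - ∑ j, (mQ0 j : ℤ) * n j = 1 := by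
      rw [← Finset.sum_sub_distrib, ← hc]
      refine Finset.sum_congr rfl fun j _ => ?_
      have h2 : ((mP0 j : ℤ)) - (mQ0 j : ℤ) = c j := by
        rw [hmP0, hmQ0]; simp only; omega
      rw [← h2]; ring
    omega
  obtain ⟨K', hK'⟩ : ∃ k : ℕ, k = Q0.natAbs + 1 := ⟨_, rfl⟩
  refine ⟨Q0 + K' * D, fun j => mQ0 j + if j = jD then K' else 0,
    fun j => mP0 j + if j = jD then K' else 0, ?_, ?_, ?_⟩
  · have h1 : (K' : ℤ) * 1 ≤ (K' : ℤ) * D := mul_le_mul_of_nonneg_left hD1 (by positivity)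
    have h2 : (K' : ℤ) = Q0.natAbs + 1 := by exact_mod_cast hK'
    omega
  · push_cast
    rw [Finset.sum_congr rfl (fun j (_ : j ∈ Finset.univ) =>
      show ((mQ0 j : ℤ) + (if j = jD then (K':ℤ) else 0)) * n j
        = (mQ0 j:ℤ)*n j + (if j = jD then (K':ℤ)*(n j) else 0) from by split <;> ring)]
    rw [Finset.sum_add_distrib, Finset.sum_ite_eq' Finset.univ jD (fun j => (K':ℤ) * n j)]
    simp [hjD, ← hQ0]
  · push_cast
    rw [Finset.sum_congr rfl (fun j (_ : j ∈ Finset.univ) =>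
      show ((mP0 j : ℤ) + (if j = jD then (K':ℤ) else 0)) * n j
        = (mP0 j:ℤ)*n j + (if j = jD then (K':ℤ)*(n j) else 0) from by split <;> ring)]
    rw [Finset.sum_add_distrib, Finset.sum_ite_eq' Finset.univ jD (fun j => (K':ℤ) * n j)]
    simp only [Finset.mem_univ, if_pos, hjD, hPQ]
    ring

lemma rep_window {N : ℕ} (n : Fin (N + 1) → ℤ) (D : ℤ) (hD1 : 1 ≤ D)
    (Q : ℤ) (mQ mP : Fin (N + 1) → ℕ) (hQ1 : 1 ≤ Q)
    (hQval : ∑ j, (mQ j : ℤ) * n j = Q) (hPval : ∑ j, (mP j : ℤ) * n j = Q + 1) :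
    ∃ (C0 : ℤ) (RB : ℕ), 2 * D ≤ C0 ∧ ∀ z : ℤ, C0 - 2 * D < z → z ≤ C0 →
      ∃ m : Fin (N + 1) → ℕ, (∑ j, (m j : ℤ) * n j = z) ∧ (∑ j, m j) ≤ RB := by
  classical
  refine ⟨Q * Q + 2 * D, (Q * Q + 2 * D).toNat * ((∑ j, mQ j) + (∑ j, mP j)), by nlinarith, ?_⟩
  intro z hz1 hz2
  have hzlow : Q * Q + 1 ≤ z := by omega
  obtain ⟨bz, hbz⟩ : ∃ b : ℤ, b = z % Q := ⟨_, rfl⟩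
  have hbz0 : 0 ≤ bz := hbz ▸ Int.emod_nonneg z (by omega)
  have hbzlt : bz < Q := hbz ▸ Int.emod_lt_of_pos z (by omega)
  obtain ⟨aq, haq⟩ : ∃ a : ℤ, a = z / Q - bz := ⟨_, rfl⟩
  have hid : aq * Q + bz * (Q + 1) = z := by
    have h1 : aq * Q + bz * (Q + 1) = Q * (z / Q) + z % Q := by rw [haq, hbz]; ring
    rw [h1, Int.mul_ediv_add_emod]
  have haq0 : 0 ≤ aq := by nlinarith
  have haqle : aq ≤ Q * Q + 2 * D := by nlinarith
  have hbzle : bz ≤ Q * Q + 2 * D := by nlinarith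
  refine ⟨fun j => aq.toNat * mQ j + bz.toNat * mP j, ?_, ?_⟩
  · push_cast
    rw [Finset.sum_congr rfl (fun j (_ : j ∈ Finset.univ) =>
      show (((aq.toNat : ℤ)) * mQ j + (bz.toNat : ℤ) * mP j) * n j
        = (aq.toNat : ℤ) * ((mQ j : ℤ) * n j) + (bz.toNat : ℤ) * ((mP j : ℤ) * n j) from by ring)]
    rw [Finset.sum_add_distrib, ← Finset.mul_sum, ← Finset.mul_sum, hQval, hPval]
    rw [Int.toNat_of_nonneg haq0, Int.toNat_of_nonneg hbz0]
    linarith [hid]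
  · have h1 : ∑ j, (aq.toNat * mQ j + bz.toNat * mP j)
        = aq.toNat * (∑ j, mQ j) + bz.toNat * (∑ j, mP j) := by
      rw [Finset.sum_add_distrib, Finset.mul_sum, Finset.mul_sum]
    rw [h1]
    have ha' : aq.toNat ≤ (Q * Q + 2 * D).toNat := by omega
    have hb' : bz.toNat ≤ (Q * Q + 2 * D).toNat := by omega
    calc aq.toNat * (∑ j, mQ j) + bz.toNat * (∑ j, mP j)
        ≤ (Q * Q + 2 * D).toNat * (∑ j, mQ j) + (Q * Q + 2 * D).toNat * (∑ j, mP j) :=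
          Nat.add_le_add (Nat.mul_le_mul_right _ ha') (Nat.mul_le_mul_right _ hb')
      _ = (Q * Q + 2 * D).toNat * ((∑ j, mQ j) + (∑ j, mP j)) := by ring

/-- Master inequality for subharmonic sequences on `ℤ`. -/
lemma seq_master {N : ℕ} (p : Fin (N + 1) → ℝ) (n : Fin (N + 1) → ℤ)
    (hp : ∀ j, 0 < p j) (hp1 : ∑ j, p j = 1)
    (hgcd : Finset.univ.gcd n = 1) (hdrift : 0 < ∑ j, p j * (n j : ℝ)) :
    ∃ (D : ℕ) (δ : ℝ) (L₀ : ℤ), 1 ≤ D ∧ 0 < δ ∧ δ ≤ 1 ∧ 1 ≤ L₀ ∧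
      ∀ u : ℤ → ℝ, (∀ s, 0 ≤ u s) → (∀ s, u s ≤ 1) →
        (∀ s, u s ≤ ∑ j, p j * u (s + n j)) →
        ∀ ℓ : ℤ, L₀ ≤ ℓ → ∀ X : ℝ, (∀ i : ℕ, i < D → u (ℓ + (i : ℤ)) ≤ X) → X ≤ 1 →
        ∀ ε : ℝ, 0 < ε → u 0 ≤ X + ε - δ * (X - u ℓ) := by
  classical
  obtain ⟨jD, -, hjD⟩ := Finset.exists_mem_eq_sup' (Finset.univ_nonempty (α := Fin (N + 1))) n
  have hDmax : ∀ j, n j ≤ n jD := fun j => hjD ▸ Finset.le_sup' n (Finset.mem_univ j)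
  have hD1 : 1 ≤ n jD := by
    by_contra hD
    push_neg at hD
    have hle : ∑ j, p j * (n j : ℝ) ≤ 0 := Finset.sum_nonpos fun j _ => by
      have h1 : n j ≤ 0 := by have := hDmax j; omega
      have h2 : (n j : ℝ) ≤ 0 := by exact_mod_cast h1
      exact mul_nonpos_of_nonneg_of_nonpos (hp j).le h2
    linarith
  obtain ⟨jm, -, hjm⟩ := Finset.exists_mem_eq_inf' (Finset.univ_nonempty (α := Fin (N + 1))) p
  have hpminle : ∀ j, p jm ≤ p j := fun j => hjm ▸ Finset.inf'_le p (Finset.mem_univ j)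
  have hpmin0 : 0 < p jm := hp jm
  have hpmin1 : p jm ≤ 1 := by
    have := Finset.single_le_sum (f := p) (fun j _ => (hp j).le) (Finset.mem_univ jm)
    linarith [hp1 ▸ this]
  obtain ⟨θ, hθ0, hΦlt⟩ := exists_theta p n hdrift hp1
  have hΦ0 : (0:ℝ) ≤ ∑ j, p j * Real.exp (-θ * n j) :=
    Finset.sum_nonneg fun j _ => mul_nonneg (hp j).le (Real.exp_nonneg _)
  have hbz := finset_gcd_bezout n Finset.univ
  rw [hgcd] at hbz
  obtain ⟨cc, hcc⟩ := hbz
  obtain ⟨Q, mQ, mP, hQ1, hQv, hPv⟩ := rep_build n (n jD) hD1 jD rfl cc hcc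
  obtain ⟨C0, RB, hC0, hrep⟩ := rep_window n (n jD) hD1 Q mQ mP hQ1 hQv hPv
  refine ⟨(n jD).toNat, (p jm) ^ (RB + 1) / 2, C0 + 1, by omega, by positivity, ?_, by omega, ?_⟩
  · have h1 : (p jm) ^ (RB + 1) ≤ 1 := pow_le_one₀ hpmin0.le hpmin1
    linarith
  intro u hu0 hu1 hsub ℓ hℓ X hX hX1 ε hε
  have hℓ'1 : 1 ≤ ℓ - C0 := by omega
  have hℓ1 : 1 ≤ ℓ := by omega
  -- choose the horizon
  have hpow : Tendsto (fun M : ℕ => (∑ j, p j * Real.exp (-θ * n j)) ^ M) atTop (nhds 0) :=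
    tendsto_pow_atTop_nhds_zero_of_lt_one hΦ0 hΦlt
  have h1 : Tendsto (fun M : ℕ => Real.exp (θ * ((ℓ - C0 : ℤ) : ℝ)) *
      (∑ j, p j * Real.exp (-θ * n j)) ^ M) atTop (nhds 0) := by
    have := hpow.const_mul (Real.exp (θ * ((ℓ - C0 : ℤ) : ℝ)))
    simpa using this
  have h2 : Tendsto (fun M : ℕ => Real.exp (θ * (ℓ : ℝ)) *
      (∑ j, p j * Real.exp (-θ * n j)) ^ (M + (RB + 1))) atTop (nhds 0) := by
    have h3 := hpow.const_mul (Real.exp (θ * (ℓ : ℝ)) * (∑ j, p j * Real.exp (-θ * n j)) ^ (RB + 1))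
    rw [mul_zero] at h3
    apply h3.congr
    intro M
    rw [pow_add]
    ring
  obtain ⟨M', hM'1, hM'2⟩ := ((h1.eventually_lt_const (by norm_num : (0:ℝ) < 1/2)).and
    (h2.eventually_lt_const hε)).exists
  -- steering bound
  have hsteer : ∀ t : ℤ, ℓ - C0 ≤ t → t < ℓ - C0 + n jD →
      (p jm) ^ (RB + 1) ≤ Psi p n ℓ (RB + 1) (fun t => if t = ℓ then 1 else 0) t := by
    intro t h1t h2t
    obtain ⟨m, hmval, hmtot⟩ := hrep (ℓ - n jD - t) (by omega) (by omega)
    have hpath := spath_build n (n jD) hD1 jD rfl ℓ (∑ j, m j) m t rfl (by omega)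
      (by linarith [hmval])
    have hr : (∑ j, m j) + 1 ≤ RB + 1 := by omega
    have hlow := Psi.path_lower hp hpminle hpmin0.le ((∑ j, m j) + 1) (RB + 1) t hpath hr
    calc (p jm) ^ (RB + 1) ≤ (p jm) ^ ((∑ j, m j) + 1) :=
          pow_le_pow_of_le_one hpmin0.le hpmin1 hr
      _ ≤ _ := hlow
  -- the mass arriving exactly at ℓ
  have hw1pos : ∀ s : ℤ, 0 ≤ (if s = ℓ then (1:ℝ) else 0) := by
    intro s; split <;> norm_num
  have hw1z : ∀ s : ℤ, s < ℓ → (if s = ℓ then (1:ℝ) else 0) = 0 := by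
    intro s hs; rw [if_neg (by omega)]
  have hbr := Psi.bridge hp (show ℓ - C0 ≤ ℓ by omega) (w := fun t => if t = ℓ then (1:ℝ) else 0)
    (h := fun t => (p jm) ^ (RB + 1) * (if (ℓ - C0 ≤ t ∧ t < ℓ - C0 + n jD) then (1:ℝ) else 0))
    (RB + 1) hw1pos hw1z
    (by
      intro t ht
      by_cases hband : t < ℓ - C0 + n jD
      · rw [if_pos ⟨ht, hband⟩, mul_one]
        exact hsteer t ht hband
      · rw [if_neg (by tauto), mul_zero]
        exact Psi.nonneg hp hw1pos _ _)
    (by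
      intro t ht
      rw [if_neg (by omega), mul_zero])
    M' 0
  have hsmul := Psi.smul (p := p) (n := n) (ℓ := ℓ - C0) ((p jm) ^ (RB + 1))
    (fun t => if (ℓ - C0 ≤ t ∧ t < ℓ - C0 + n jD) then (1:ℝ) else 0) M' 0
  -- lower bound on the indicator mass via Chernoff + unreachability
  have hinddec : ∀ t : ℤ, (if (ℓ - C0 ≤ t ∧ t < ℓ - C0 + n jD) then (1:ℝ) else 0)
      = 1 + (-1) * ((if t < ℓ - C0 then (1:ℝ) else 0) + (if (ℓ - C0) + n jD ≤ t then (1:ℝ) else 0))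
        + 0 * (if t = ℓ then (1:ℝ) else 0) := by
    intro t
    by_cases h1t : t < ℓ - C0
    · rw [if_neg (by omega), if_pos h1t, if_neg (by omega)]; ring
    · by_cases h2t : ℓ - C0 + n jD ≤ t
      · rw [if_neg (by omega), if_neg h1t, if_pos (by omega)]; ring
      · rw [if_pos ⟨by omega, by omega⟩, if_neg h1t, if_neg (by omega)]; ring
  have hindval : Psi p n (ℓ - C0) M' (fun t => if (ℓ - C0 ≤ t ∧ t < ℓ - C0 + n jD) then (1:ℝ) else 0) 0
      = 1 + (-1) * ((Psi p n (ℓ - C0) M' (fun t => if t < ℓ - C0 then (1:ℝ) else 0) 0)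
          + (Psi p n (ℓ - C0) M' (fun t => if (ℓ - C0) + n jD ≤ t then (1:ℝ) else 0) 0))
        + 0 * (Psi p n (ℓ - C0) M' (fun t => if t = ℓ then (1:ℝ) else 0) 0) := by
    rw [show (fun t : ℤ => if (ℓ - C0 ≤ t ∧ t < ℓ - C0 + n jD) then (1:ℝ) else 0)
        = (fun t : ℤ => 1 + (-1) * ((if t < ℓ - C0 then (1:ℝ) else 0)
            + (if (ℓ - C0) + n jD ≤ t then (1:ℝ) else 0)) + 0 * (if t = ℓ then (1:ℝ) else 0))
      from funext hinddec]
    exact Psi.lincomb3 hp1 1 (-1) 0 _ _ _ M' 0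
  have hunre : Psi p n (ℓ - C0) M' (fun t => if (ℓ - C0) + n jD ≤ t then (1:ℝ) else 0) 0 = 0 :=
    Psi.unreach hDmax (by omega) M' 0 (by omega)
  have hcher : Psi p n (ℓ - C0) M' (fun t => if t < ℓ - C0 then (1:ℝ) else 0) 0
      ≤ Real.exp (θ * ((ℓ - C0 : ℤ) : ℝ)) * (∑ j, p j * Real.exp (-θ * n j)) ^ M' := by
    have := Psi.chernoff (n := n) (ℓ := ℓ - C0) hp hθ0 M' (0 : ℤ)
    simpa using this
  have hρ : (p jm) ^ (RB + 1) / 2 ≤ Psi p n ℓ (M' + (RB + 1)) (fun t => if t = ℓ then (1:ℝ) else 0) 0 := by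
    have hge : (1:ℝ)/2 ≤ Psi p n (ℓ - C0) M'
        (fun t => if (ℓ - C0 ≤ t ∧ t < ℓ - C0 + n jD) then (1:ℝ) else 0) 0 := by
      rw [hindval, hunre]
      have := hcher
      linarith [hM'1]
    have hmul : (p jm) ^ (RB + 1) * ((1:ℝ)/2) ≤ (p jm) ^ (RB + 1) * Psi p n (ℓ - C0) M'
        (fun t => if (ℓ - C0 ≤ t ∧ t < ℓ - C0 + n jD) then (1:ℝ) else 0) 0 :=
      mul_le_mul_of_nonneg_left hge (by positivity)
    calc (p jm) ^ (RB + 1) / 2 = (p jm) ^ (RB + 1) * ((1:ℝ)/2) := by ring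
      _ ≤ (p jm) ^ (RB + 1) * Psi p n (ℓ - C0) M' _ 0 := hmul
      _ = Psi p n (ℓ - C0) M'
          (fun t => (p jm) ^ (RB + 1) * (if (ℓ - C0 ≤ t ∧ t < ℓ - C0 + n jD) then (1:ℝ) else 0)) 0 :=
          (hsmul).symm
      _ ≤ _ := hbr
  -- the escaping mass
  have hA : Psi p n ℓ (M' + (RB + 1)) (fun t => if t < ℓ then (1:ℝ) else 0) 0 ≤ ε := by
    have := Psi.chernoff (n := n) (ℓ := ℓ) hp hθ0 (M' + (RB + 1)) (0 : ℤ)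
    have h4 : Real.exp (θ * ((ℓ:ℝ) - ((0:ℤ):ℝ))) * (∑ j, p j * Real.exp (-θ * n j)) ^ (M' + (RB + 1))
        = Real.exp (θ * (ℓ:ℝ)) * (∑ j, p j * Real.exp (-θ * n j)) ^ (M' + (RB + 1)) := by
      norm_num
    calc Psi p n ℓ (M' + (RB + 1)) (fun t => if t < ℓ then (1:ℝ) else 0) 0
        ≤ Real.exp (θ * ((ℓ:ℝ) - ((0:ℤ):ℝ))) * (∑ j, p j * Real.exp (-θ * n j)) ^ (M' + (RB + 1)) := by
          simpa using this
      _ ≤ ε := by rw [h4]; exact le_of_lt hM'2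
  -- comparison function
  have hX0 : 0 ≤ X := by
    have h5 : u (ℓ + ((0:ℕ) : ℤ)) ≤ X := hX 0 (by omega)
    have h6 : u ℓ ≤ X := by simpa using h5
    linarith [hu0 ℓ]
  have huℓX : u ℓ ≤ X := by
    have h5 : u (ℓ + ((0:ℕ) : ℤ)) ≤ X := hX 0 (by omega)
    simpa using h5
  have huv : ∀ s : ℤ, u s ≤ X + (1 - X) * ((if s < ℓ then (1:ℝ) else 0)
      + (if ℓ + n jD ≤ s then (1:ℝ) else 0)) + (u ℓ - X) * (if s = ℓ then (1:ℝ) else 0) := by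
    intro s
    rcases lt_trichotomy s ℓ with h | h | h
    · rw [if_pos h, if_neg (by omega), if_neg (by omega)]
      have := hu1 s; linarith
    · subst h
      rw [if_neg (by omega), if_neg (by omega), if_pos rfl]
      linarith
    · by_cases hhi : ℓ + n jD ≤ s
      · rw [if_neg (by omega), if_pos hhi, if_neg (by omega)]
        have := hu1 s; linarith
      · rw [if_neg (by omega), if_neg hhi, if_neg (by omega)]
        have h7 : u (ℓ + ((s - ℓ).toNat : ℤ)) ≤ X := hX (s - ℓ).toNat (by omega)
        have h8 : ℓ + ((s - ℓ).toNat : ℤ) = s := by omega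
        rw [h8] at h7
        linarith
  have hc1 : u 0 ≤ Psi p n ℓ (M' + (RB + 1)) u 0 := Psi.le_of_subharmonic hp hsub _ 0
  have hc2 : Psi p n ℓ (M' + (RB + 1)) u 0 ≤ Psi p n ℓ (M' + (RB + 1))
      (fun s => X + (1 - X) * ((if s < ℓ then (1:ℝ) else 0)
        + (if ℓ + n jD ≤ s then (1:ℝ) else 0)) + (u ℓ - X) * (if s = ℓ then (1:ℝ) else 0)) 0 :=
    Psi.mono hp huv _ 0
  have hc3 := Psi.lincomb3 (p := p) (n := n) (ℓ := ℓ) hp1 X (1 - X) (u ℓ - X)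
    (fun s => if s < ℓ then (1:ℝ) else 0) (fun s => if ℓ + n jD ≤ s then (1:ℝ) else 0)
    (fun s => if s = ℓ then (1:ℝ) else 0) (M' + (RB + 1)) 0
  have hwhi0 : Psi p n ℓ (M' + (RB + 1)) (fun t => if ℓ + n jD ≤ t then (1:ℝ) else 0) 0 = 0 :=
    Psi.unreach hDmax (by omega) _ 0 (by omega)
  have hA0 : 0 ≤ Psi p n ℓ (M' + (RB + 1)) (fun t => if t < ℓ then (1:ℝ) else 0) 0 :=
    Psi.nonneg hp (fun s => by split <;> norm_num) _ _
  have hkey : u 0 ≤ X + (1 - X) * Psi p n ℓ (M' + (RB + 1)) (fun t => if t < ℓ then (1:ℝ) else 0) 0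
      + (u ℓ - X) * Psi p n ℓ (M' + (RB + 1)) (fun t => if t = ℓ then (1:ℝ) else 0) 0 := by
    have := hc1.trans hc2
    rw [hc3, hwhi0] at this
    simpa using this
  have hb1 : (1 - X) * Psi p n ℓ (M' + (RB + 1)) (fun t => if t < ℓ then (1:ℝ) else 0) 0 ≤ ε := by
    calc (1 - X) * Psi p n ℓ (M' + (RB + 1)) (fun t => if t < ℓ then (1:ℝ) else 0) 0
        ≤ 1 * Psi p n ℓ (M' + (RB + 1)) (fun t => if t < ℓ then (1:ℝ) else 0) 0 :=
          mul_le_mul_of_nonneg_right (by linarith) hA0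
      _ = Psi p n ℓ (M' + (RB + 1)) (fun t => if t < ℓ then (1:ℝ) else 0) 0 := one_mul _
      _ ≤ ε := hA
  have hb2 : (u ℓ - X) * Psi p n ℓ (M' + (RB + 1)) (fun t => if t = ℓ then (1:ℝ) else 0) 0
      ≤ (u ℓ - X) * ((p jm) ^ (RB + 1) / 2) :=
    mul_le_mul_of_nonpos_left hρ (by linarith)
  linarith [hkey, hb1, hb2]


/-- Let `0 < λ < 1`, relatively prime integers `(n k)`, reals `(b k)`
and `p ∈ C_N` with `∑ p j * n j > 0`, and let `ν` be the invariant measure of the maps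
`φ k x = λ ^ (n k) * x + b k`. If `ν` is not Rajchman, then there exist
`α ∈ [1, 1/λ]` and `c > 0` with `|ν̂(α λ^{-k})| → c` as `k → ∞`. -/
theorem stmt6 {N : ℕ} (hN : 1 ≤ N) (lam : ℝ) (hlam0 : 0 < lam) (hlam1 : lam < 1)
    (n : Fin (N + 1) → ℤ) (hgcd : Finset.univ.gcd n = 1)
    (b p : Fin (N + 1) → ℝ)
    (hp : ∀ j, 0 < p j) (hp1 : ∑ j, p j = 1)
    (hdrift : 0 < ∑ j, p j * (n j : ℝ))
    (ν : Measure ℝ) [IsProbabilityMeasure ν]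
    (hν : ν = ∑ j, ENNReal.ofReal (p j) • ν.map (fun x => lam ^ (n j) * x + b j))
    (hnotR : ¬ Tendsto (FT ν) atTop (nhds 0)) :
    ∃ α : ℝ, 1 ≤ α ∧ α ≤ lam⁻¹ ∧ ∃ c : ℝ, 0 < c ∧
      Tendsto (fun k : ℕ => ‖FT ν (α * lam⁻¹ ^ k)‖) atTop (nhds c) := by
  classical
  have hb1 : 1 < lam⁻¹ := (one_lt_inv₀ hlam0).mpr hlam1
  have hbpos : (0:ℝ) < lam⁻¹ := by positivity
  have hbne : (lam⁻¹ : ℝ) ≠ 0 := ne_of_gt hbpos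
  -- the modulus of the Fourier transform
  have hF0 : ∀ t, 0 ≤ ‖FT ν t‖ := fun t => norm_nonneg _
  have hF1 : ∀ t, ‖FT ν t‖ ≤ 1 := fun t => FT_abs_le_one ν t
  have hFc : Continuous fun t => ‖FT ν t‖ :=
    continuous_norm.comp (FT_continuous ν)
  have hFsub : ∀ t, ‖FT ν t‖ ≤ ∑ j, p j * ‖FT ν (lam ^ (n j) * t)‖ :=
    fun t => F_subharm lam hlam0 n b p hp ν hν t
  -- band suprema
  set β : ℤ → ℝ := fun r => sSup ((fun t => ‖FT ν t‖) '' Set.Ici (lam⁻¹ ^ r)) with hβdef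
  have himgne : ∀ r : ℤ, ((fun t => ‖FT ν t‖) '' Set.Ici (lam⁻¹ ^ r)).Nonempty :=
    fun r => ⟨_, Set.mem_image_of_mem _ Set.self_mem_Ici⟩
  have hbdd : ∀ r : ℤ, BddAbove ((fun t => ‖FT ν t‖) '' Set.Ici (lam⁻¹ ^ r)) := by
    intro r
    refine ⟨1, ?_⟩
    rintro y ⟨t, -, rfl⟩
    exact hF1 t
  have hβle1 : ∀ r, β r ≤ 1 := by
    intro r
    apply Real.sSup_le ?_ zero_le_one
    rintro y ⟨t, -, rfl⟩
    exact hF1 t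
  have hFleβ : ∀ r : ℤ, ∀ t, lam⁻¹ ^ r ≤ t → ‖FT ν t‖ ≤ β r :=
    fun r t htr => le_csSup (hbdd r) (Set.mem_image_of_mem _ htr)
  have hβ0 : ∀ r, 0 ≤ β r := fun r => le_trans (hF0 _) (hFleβ r _ le_rfl)
  have hβanti : Antitone β := by
    intro r r' hrr'
    apply csSup_le_csSup (hbdd r) (himgne r')
    apply Set.image_mono
    apply Set.Ici_subset_Ici.mpr
    exact zpow_le_zpow_right₀ hb1.le hrr'
  have hbddb : BddBelow (Set.range β) := by
    refine ⟨0, ?_⟩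
    rintro y ⟨r, rfl⟩
    exact hβ0 r
  have hcleβ : ∀ r, (⨅ s : ℤ, β s) ≤ β r := fun r => ciInf_le hbddb r
  have hβtend : Tendsto β atTop (nhds (⨅ s : ℤ, β s)) := tendsto_atTop_ciInf hβanti hbddb
  have hc0 : 0 < ⨅ s : ℤ, β s := by
    rcases lt_or_ge 0 (⨅ s : ℤ, β s) with h | h
    · exact h
    exfalso
    apply hnotR
    apply NormedAddCommGroup.tendsto_nhds_zero.mpr
    intro ε hε
    obtain ⟨r, hr⟩ := exists_lt_of_ciInf_lt (lt_of_le_of_lt h hε)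
    filter_upwards [eventually_ge_atTop (lam⁻¹ ^ r)] with t ht
    calc ‖FT ν t‖ = ‖FT ν t‖ := rfl
      _ ≤ β r := hFleβ r t ht
      _ < ε := hr
  -- selection of near-optimal points
  have hsel : ∀ m : ℕ, ∃ t : ℝ, lam⁻¹ ^ (m:ℤ) ≤ t ∧
      (⨅ s : ℤ, β s) - 1/(m+1) < ‖FT ν t‖ := by
    intro m
    have h1 : (⨅ s : ℤ, β s) - 1/(m+1) < β (m:ℤ) := by
      have h2 : (0:ℝ) < 1/(m+1) := by positivity
      linarith [hcleβ (m:ℤ)]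
    obtain ⟨y, ⟨t, htmem, rfl⟩, hy⟩ := exists_lt_of_lt_csSup (himgne (m:ℤ)) h1
    exact ⟨t, htmem, hy⟩
  choose tm htm1 htm2 using hsel
  have htmpos : ∀ m, 0 < tm m := fun m => lt_of_lt_of_le (zpow_pos hbpos _) (htm1 m)
  have hKm : ∀ m : ℕ, ∃ K : ℤ, lam⁻¹ ^ K ≤ tm m ∧ tm m < lam⁻¹ ^ (K + 1) := by
    intro m
    obtain ⟨K, hK⟩ := exists_mem_Ico_zpow (htmpos m) hb1
    exact ⟨K, hK.1, hK.2⟩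
  choose Km hKm1 hKm2 using hKm
  -- the fractional parts
  have ham1 : ∀ m, 1 ≤ tm m * lam⁻¹ ^ (-(Km m)) := by
    intro m
    have h1 := mul_le_mul_of_nonneg_right (hKm1 m) (le_of_lt (zpow_pos hbpos (-(Km m))))
    rw [← zpow_add₀ hbne] at h1
    simpa using h1
  have ham2 : ∀ m, tm m * lam⁻¹ ^ (-(Km m)) ≤ lam⁻¹ := by
    intro m
    have h1 := mul_le_mul_of_nonneg_right (le_of_lt (hKm2 m)) (le_of_lt (zpow_pos hbpos (-(Km m))))
    rw [← zpow_add₀ hbne] at h1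
    have h2 : Km m + 1 + -Km m = 1 := by ring
    rw [h2, zpow_one] at h1
    exact h1
  have hamK : ∀ m, (tm m * lam⁻¹ ^ (-(Km m))) * lam⁻¹ ^ (Km m) = tm m := by
    intro m
    rw [mul_assoc, ← zpow_add₀ hbne]
    simp
  have hKmge : ∀ m : ℕ, (m:ℤ) ≤ Km m := by
    intro m
    have h1 : lam⁻¹ ^ (m:ℤ) < lam⁻¹ ^ (Km m + 1) := lt_of_le_of_lt (htm1 m) (hKm2 m)
    have h2 : (m:ℤ) < Km m + 1 := (zpow_lt_zpow_iff_right₀ hb1).mp h1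
    omega
  -- compactness: subsequence of fractional parts
  obtain ⟨α, hαmem, φ, hφmono, hφtend⟩ := (isCompact_Icc (a := (1:ℝ)) (b := lam⁻¹)).tendsto_subseq
    (fun m => Set.mem_Icc.mpr ⟨ham1 m, ham2 m⟩)
  have hφge : ∀ m : ℕ, (m:ℕ) ≤ φ m := fun m => hφmono.le_apply
  -- the master lemma
  obtain ⟨D, δ, L₀, hD1, hδ0, hδ1, hL₀1, hmaster⟩ := seq_master p n hp hp1 hgcd hdrift
  -- subharmonicity of the rescaled sequences
  have harg : ∀ (m : ℕ) (s : ℤ) (j : Fin (N+1)),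
      lam ^ (n j) * ((tm m * lam⁻¹ ^ (-(Km m))) * lam⁻¹ ^ (Km m - s))
        = (tm m * lam⁻¹ ^ (-(Km m))) * lam⁻¹ ^ (Km m - (s + n j)) := by
    intro m s j
    have h1 : lam ^ (n j) = lam⁻¹ ^ (-(n j)) := by
      rw [zpow_neg, inv_zpow, inv_inv]
    rw [h1, show Km m - (s + n j) = (-(n j)) + (Km m - s) by ring, zpow_add₀ hbne]
    ring
  have hUsub : ∀ m : ℕ, ∀ s : ℤ,
      ‖FT ν ((tm m * lam⁻¹ ^ (-(Km m))) * lam⁻¹ ^ (Km m - s))‖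
        ≤ ∑ j, p j * ‖FT ν ((tm m * lam⁻¹ ^ (-(Km m))) * lam⁻¹ ^ (Km m - (s + n j)))‖ := by
    intro m s
    have h1 := hFsub ((tm m * lam⁻¹ ^ (-(Km m))) * lam⁻¹ ^ (Km m - s))
    calc ‖FT ν ((tm m * lam⁻¹ ^ (-(Km m))) * lam⁻¹ ^ (Km m - s))‖
        ≤ ∑ j, p j * ‖FT ν (lam ^ (n j) * ((tm m * lam⁻¹ ^ (-(Km m))) * lam⁻¹ ^ (Km m - s)))‖ := h1
      _ = ∑ j, p j * ‖FT ν ((tm m * lam⁻¹ ^ (-(Km m))) * lam⁻¹ ^ (Km m - (s + n j)))‖ := by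
          refine Finset.sum_congr rfl fun j _ => ?_
          rw [harg m s j]
  -- the lower bound at each scale
  have hklow : ∀ k : ℕ, (⨅ s : ℤ, β s) - (β ((k:ℤ) - D + 1) - (⨅ s : ℤ, β s)) / δ
      ≤ ‖FT ν (α * lam⁻¹ ^ (k:ℤ))‖ := by
    intro k
    have hβ'c : (⨅ s : ℤ, β s) ≤ β ((k:ℤ) - D + 1) := hcleβ _
    have hstep : ∀ ε : ℝ, 0 < ε →
        β ((k:ℤ) - D + 1) - (β ((k:ℤ) - D + 1) - (⨅ s : ℤ, β s) + ε) / δ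
          ≤ ‖FT ν (α * lam⁻¹ ^ (k:ℤ))‖ := by
      intro ε hε
      have hcont : Tendsto (fun m => ‖FT ν ((tm (φ m) * lam⁻¹ ^ (-(Km (φ m)))) * lam⁻¹ ^ (k:ℤ))‖)
          atTop (nhds (‖FT ν (α * lam⁻¹ ^ (k:ℤ))‖)) := by
        have hc2 : Continuous fun a : ℝ => ‖FT ν (a * lam⁻¹ ^ (k:ℤ))‖ :=
          hFc.comp (continuous_mul_right _)
        exact (hc2.continuousAt.tendsto).comp hφtend
      apply ge_of_tendsto hcont
      -- eventually in m
      have hev1 : ∀ᶠ m : ℕ in atTop, L₀ + (k:ℤ) ≤ Km (φ m) := by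
        filter_upwards [eventually_ge_atTop (L₀ + (k:ℤ)).toNat] with m hm
        have h3 := hKmge (φ m)
        have h4 := hφge m
        omega
      have hev2 : ∀ᶠ m : ℕ in atTop, 1/((φ m : ℝ)+1) ≤ ε * δ / 2 := by
        have h5 : Tendsto (fun m : ℕ => 1/((m:ℝ)+1)) atTop (nhds 0) :=
          tendsto_one_div_add_atTop_nhds_zero_nat
        have h6 := h5.eventually_lt_const (show (0:ℝ) < ε * δ / 2 by positivity)
        filter_upwards [h6] with m hm
        have h7 : 1/((φ m : ℝ)+1) ≤ 1/((m:ℝ)+1) := by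
          apply one_div_le_one_div_of_le (by positivity)
          have h8 : (m:ℝ) ≤ (φ m : ℝ) := by exact_mod_cast hφge m
          linarith
        exact le_trans h7 (le_of_lt hm)
      filter_upwards [hev1, hev2] with m hm1 hm2
      -- apply the master lemma
      have happ := hmaster (fun s => ‖FT ν ((tm (φ m) * lam⁻¹ ^ (-(Km (φ m)))) * lam⁻¹ ^ (Km (φ m) - s))‖)
        (fun s => hF0 _) (fun s => hF1 _) (hUsub (φ m))
        (Km (φ m) - (k:ℤ)) (by omega)
        (β ((k:ℤ) - D + 1))
        (by
          intro i hi
          apply hFleβ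
          have h8 : Km (φ m) - (Km (φ m) - (k:ℤ) + (i:ℤ)) = (k:ℤ) - i := by ring
          rw [h8]
          have h9 : lam⁻¹ ^ ((k:ℤ) - D + 1) ≤ lam⁻¹ ^ ((k:ℤ) - (i:ℤ)) :=
            zpow_le_zpow_right₀ hb1.le (by omega)
          have h10 : (1:ℝ) ≤ tm (φ m) * lam⁻¹ ^ (-(Km (φ m))) := ham1 (φ m)
          calc lam⁻¹ ^ ((k:ℤ) - D + 1) ≤ lam⁻¹ ^ ((k:ℤ) - (i:ℤ)) := h9
            _ = 1 * lam⁻¹ ^ ((k:ℤ) - (i:ℤ)) := (one_mul _).symm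
            _ ≤ (tm (φ m) * lam⁻¹ ^ (-(Km (φ m)))) * lam⁻¹ ^ ((k:ℤ) - (i:ℤ)) :=
              mul_le_mul_of_nonneg_right h10 (le_of_lt (zpow_pos hbpos _)))
        (hβle1 _) (ε/2) (by positivity)
      -- unfold the values at 0 and at ℓ
      have hval0 : (tm (φ m) * lam⁻¹ ^ (-(Km (φ m)))) * lam⁻¹ ^ (Km (φ m) - (0:ℤ)) = tm (φ m) := by
        rw [show Km (φ m) - (0:ℤ) = Km (φ m) by ring]
        exact hamK (φ m)
      have hvalℓ : Km (φ m) - (Km (φ m) - (k:ℤ)) = (k:ℤ) := by ring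
      rw [hval0, hvalℓ] at happ
      have hlow := htm2 (φ m)
      -- combine
      have hβd := hβ'c
      set Y := ‖FT ν ((tm (φ m) * lam⁻¹ ^ (-(Km (φ m)))) * lam⁻¹ ^ (k:ℤ))‖ with hY
      have h11 : (⨅ s : ℤ, β s) - 1/((φ m : ℝ)+1)
          ≤ β ((k:ℤ) - D + 1) + ε/2 - δ * (β ((k:ℤ) - D + 1) - Y) := le_trans (le_of_lt hlow) happ
      have h12 : δ * (β ((k:ℤ) - D + 1) - Y)
          ≤ β ((k:ℤ) - D + 1) - (⨅ s : ℤ, β s) + ε/2 + ε * δ / 2 := by linarith [hm2]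
      have h13 : β ((k:ℤ) - D + 1) - Y ≤ (β ((k:ℤ) - D + 1) - (⨅ s : ℤ, β s) + ε/2 + ε * δ / 2) / δ := by
        rw [le_div_iff₀ hδ0]
        linarith
      have h14 : (β ((k:ℤ) - D + 1) - (⨅ s : ℤ, β s) + ε/2 + ε * δ / 2) / δ
          ≤ (β ((k:ℤ) - D + 1) - (⨅ s : ℤ, β s) + ε) / δ := by
        apply (div_le_div_iff_of_pos_right hδ0).mpr
        nlinarith
      linarith [h13, h14]
    apply le_of_forall_pos_le_add
    intro ε hε
    have h15 := hstep (ε * δ) (by positivity)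
    have h16 : (β ((k:ℤ) - D + 1) - (⨅ s : ℤ, β s) + ε * δ) / δ
        = (β ((k:ℤ) - D + 1) - (⨅ s : ℤ, β s)) / δ + ε := by
      rw [add_div, mul_div_cancel_right₀ _ (ne_of_gt hδ0)]
    rw [h16] at h15
    linarith [hβ'c]
  -- limits and squeeze
  have hIntTend : Tendsto (fun k : ℕ => (k:ℤ) - D + 1) atTop atTop := by
    have h := tendsto_atTop_add_const_right atTop (1 - (D:ℤ)) tendsto_natCast_atTop_atTop
    exact h.congr (fun k => by ring)
  have hBtend : Tendsto (fun k : ℕ => β ((k:ℤ) - D + 1)) atTop (nhds (⨅ s : ℤ, β s)) :=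
    hβtend.comp hIntTend
  have hlowtend : Tendsto (fun k : ℕ => (⨅ s : ℤ, β s) - (β ((k:ℤ) - D + 1) - (⨅ s : ℤ, β s))/δ)
      atTop (nhds (⨅ s : ℤ, β s)) := by
    have h := Filter.Tendsto.const_sub (⨅ s : ℤ, β s)
      ((hBtend.sub_const (⨅ s : ℤ, β s)).div_const δ)
    simpa using h
  have huptend : Tendsto (fun k : ℕ => β (k:ℤ)) atTop (nhds (⨅ s : ℤ, β s)) :=
    hβtend.comp tendsto_natCast_atTop_atTop
  have hkup : ∀ k : ℕ, ‖FT ν (α * lam⁻¹ ^ (k:ℤ))‖ ≤ β (k:ℤ) := by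
    intro k
    apply hFleβ
    calc lam⁻¹ ^ (k:ℤ) = 1 * lam⁻¹ ^ (k:ℤ) := (one_mul _).symm
      _ ≤ α * lam⁻¹ ^ (k:ℤ) :=
        mul_le_mul_of_nonneg_right hαmem.1 (le_of_lt (zpow_pos hbpos _))
  have hsq := tendsto_of_tendsto_of_tendsto_of_le_of_le hlowtend huptend hklow hkup
  refine ⟨α, hαmem.1, hαmem.2, ⨅ s : ℤ, β s, hc0, ?_⟩
  have hfeq : (fun k : ℕ => ‖FT ν (α * lam⁻¹ ^ k)‖)
      = fun k : ℕ => ‖FT ν (α * lam⁻¹ ^ (k:ℤ))‖ := by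
    funext k
    rw [zpow_natCast]
  rw [hfeq]
  exact hsq
end
end

section
/- Let 1/λ > 1 be a Pisot number, N ≥ 1, relatively prime integers (n_k)_{0≤k≤N}, and μ_k ∈ T(1/λ) for 0 ≤ k ≤ N. Let p ∈ C_N with Σ_{j=0}^N p_j n_j > 0 and let (ε_l)_{l∈ℤ} be two-sided i.i.d. random variables with law p, with associated cocycle (S_l)_{l∈ℤ}. Then for every k ∈ ℤ, almost surely the symmetric partial sums Σ_{−L≤l≤L} μ_{ε_l} λ^{k+S_l} mod 1 converge, as L → ∞, in the torus 𝕋 = ℝ/ℤ; i.e. the 𝕋-valued random variable Z_k = Σ_{l∈ℤ} μ_{ε_l} λ^{k+S_l} mod 1 is well defined. -/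
open MeasureTheory ProbabilityTheory Filter Finset IntermediateField

noncomputable section

/-- A Pisot number. -/
def IsPisot (θ : ℝ) : Prop :=
  1 < θ ∧ IsIntegral ℤ θ ∧
    ∀ z : ℂ, (Polynomial.aeval z) (minpoly ℚ θ) = 0 → z ≠ (θ : ℂ) → ‖z‖ < 1

/-- The set `T(θ) = {α ∈ ℚ(θ) : Tr_θ(θ^n α) ∈ ℤ for all large n}`. -/
def traceSet (θ : ℝ) : Set ℝ :=
  {α | ∃ hα : α ∈ ℚ⟮θ⟯, ∃ N : ℕ, ∀ n ≥ N, ∃ z : ℤ,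
    Algebra.trace ℚ ℚ⟮θ⟯
      ((⟨θ, IntermediateField.mem_adjoin_simple_self ℚ θ⟩ : ℚ⟮θ⟯) ^ n * ⟨α, hα⟩) = (z : ℚ)}

/-- The cocycle `S_l` associated to the sequence `(n (ε i))_{i ∈ ℤ}`:
`S_0 = 0`, `S_l = n (ε 0) + ⋯ + n (ε (l-1))` for `l ≥ 1`, and
`S_{-l} = - n (ε (-l)) - ⋯ - n (ε (-1))` for `l ≥ 1`. -/
def cocy {N : ℕ} {Ω : Type*} (n : Fin (N + 1) → ℤ) (ε : ℤ → Ω → Fin (N + 1))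
    (l : ℤ) (ω : Ω) : ℤ :=
  if 0 ≤ l then ∑ i ∈ Finset.range l.toNat, n (ε (i : ℤ) ω)
  else -∑ i ∈ Finset.range (-l).toNat, n (ε (-(i : ℤ) - 1) ω)

lemma pisot_decay (θ : ℝ) (hθ : IsPisot θ) (α : ℝ) (hα : α ∈ traceSet θ) :
    ∃ C : ℝ, 0 < C ∧ ∃ ρ : ℝ, 0 < ρ ∧ ρ < 1 ∧ ∃ M : ℕ, ∀ m : ℕ, M ≤ m → ∃ z : ℤ,
      |α * θ ^ m - (z : ℝ)| ≤ C * ρ ^ m := by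
  obtain ⟨hθ1, hint, hconj⟩ := hθ
  obtain ⟨hmem, M, hM⟩ := hα
  have hintQ : IsIntegral ℚ θ := hint.tower_top
  haveI : FiniteDimensional ℚ ℚ⟮θ⟯ := IntermediateField.adjoin.finiteDimensional hintQ
  set θ' : ℚ⟮θ⟯ := ⟨θ, IntermediateField.mem_adjoin_simple_self ℚ θ⟩ with hθ'
  set α' : ℚ⟮θ⟯ := ⟨α, hmem⟩ with hα'
  set ι : ℚ⟮θ⟯ →ₐ[ℚ] ℂ := (Complex.ofRealAm.restrictScalars ℚ).comp (IntermediateField.val ℚ⟮θ⟯)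
    with hι
  have hιapp : ∀ x : ℚ⟮θ⟯, ι x = ((x : ℝ) : ℂ) := fun x => rfl
  -- minimal polynomial of θ' equals that of θ
  have hminp : minpoly ℚ θ = minpoly ℚ θ' := by
    have := minpoly.algebraMap_eq (A := ℚ) (algebraMap ℚ⟮θ⟯ ℝ).injective θ'
    simpa using this
  -- embeddings other than ι send θ' to a small conjugate
  have hsmall : ∀ σ : ℚ⟮θ⟯ →ₐ[ℚ] ℂ, σ ≠ ι → ‖σ θ'‖ < 1 := by
    intro σ hσ
    apply hconj
    · rw [hminp, Polynomial.aeval_algHom_apply σ θ' (minpoly ℚ θ'), minpoly.aeval, map_zero]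
    · intro hcontra
      apply hσ
      apply IntermediateField.adjoin_algHom_ext
      intro x hx
      rcases hx with rfl
      have h1 : (⟨x, IntermediateField.subset_adjoin ℚ {x} rfl⟩ : ℚ⟮x⟯) = θ' := rfl
      rw [h1]
      exact hcontra.trans (hιapp θ').symm
  classical
  set s : Finset (ℚ⟮θ⟯ →ₐ[ℚ] ℂ) := Finset.univ.erase ι with hs
  set ρ0 : NNReal := s.sup (fun σ => ‖σ θ'‖₊) with hρ0
  have hρ0lt : (ρ0 : ℝ) < 1 := by
    have h1 : ρ0 < 1 := by
      rw [hρ0, Finset.sup_lt_iff (by norm_num : (⊥ : NNReal) < 1)]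
      intro σ hσ
      have h2 := hsmall σ (Finset.ne_of_mem_erase hσ)
      rw [← NNReal.coe_lt_coe, coe_nnnorm]
      simpa using h2
    exact_mod_cast h1
  set ρ : ℝ := max (1/2) (ρ0 : ℝ) with hρdef
  have hρpos : 0 < ρ := lt_max_of_lt_left (by norm_num)
  have hρlt : ρ < 1 := max_lt (by norm_num) hρ0lt
  set C : ℝ := (∑ σ ∈ s, ‖σ α'‖) + 1 with hC
  have hCpos : 0 < C := by
    have : (0:ℝ) ≤ ∑ σ ∈ s, ‖σ α'‖ :=
      Finset.sum_nonneg fun σ _ => norm_nonneg _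
    linarith
  refine ⟨C, hCpos, ρ, hρpos, hρlt, M, fun m hm => ?_⟩
  obtain ⟨z, hz⟩ := hM m hm
  have htr := trace_eq_sum_embeddings (E := ℂ) (K := ℚ) (L := ℚ⟮θ⟯) (x := θ' ^ m * α')
  rw [hz] at htr
  rw [map_intCast] at htr
  have hsplit : ∑ σ : ℚ⟮θ⟯ →ₐ[ℚ] ℂ, σ (θ' ^ m * α')
      = ι (θ' ^ m * α') + ∑ σ ∈ s, σ (θ' ^ m * α') := by
    rw [hs]
    exact (Finset.add_sum_erase _ _ (Finset.mem_univ ι)).symm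
  have hιval : ι (θ' ^ m * α') = ((α * θ ^ m : ℝ) : ℂ) := by
    rw [hιapp]
    have : ((θ' ^ m * α' : ℚ⟮θ⟯) : ℝ) = θ ^ m * α := by
      push_cast
      rfl
    rw [this]
    norm_cast
    ring
  have hkey : ((α * θ ^ m - z : ℝ) : ℂ) = -∑ σ ∈ s, σ (θ' ^ m * α') := by
    rw [hsplit, hιval] at htr
    push_cast at htr ⊢
    linear_combination -htr
  refine ⟨z, ?_⟩
  have habs : |α * θ ^ m - (z : ℝ)| = ‖(((α * θ ^ m - z : ℝ)) : ℂ)‖ := by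
    rw [Complex.norm_real, Real.norm_eq_abs]
  rw [habs, hkey, norm_neg]
  calc ‖∑ σ ∈ s, σ (θ' ^ m * α')‖
      ≤ ∑ σ ∈ s, ‖σ (θ' ^ m * α')‖ := norm_sum_le _ _
    _ ≤ ∑ σ ∈ s, ρ ^ m * ‖σ α'‖ := by
        apply Finset.sum_le_sum
        intro σ hσ
        rw [map_mul, map_pow, norm_mul, norm_pow]
        have h3 : ‖σ θ'‖₊ ≤ ρ0 := by rw [hρ0]; exact Finset.le_sup (f := fun σ => ‖σ θ'‖₊) hσ
        have h4 : ‖σ θ'‖ ≤ ρ := by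
          rw [← coe_nnnorm]
          exact le_trans (by exact_mod_cast h3) (le_max_right _ _)
        exact mul_le_mul (pow_le_pow_left₀ (norm_nonneg _) h4 m) le_rfl
          (norm_nonneg _) (pow_nonneg hρpos.le m)
    _ = (∑ σ ∈ s, ‖σ α'‖) * ρ ^ m := by
        rw [Finset.sum_mul]
        exact Finset.sum_congr rfl fun σ _ => mul_comm _ _
    _ ≤ C * ρ ^ m := by
        apply mul_le_mul_of_nonneg_right _ (pow_nonneg hρpos.le m)
        rw [hC]; linarith


lemma addCircle_norm_le_int (x : ℝ) (z : ℤ) : ‖(x : AddCircle (1 : ℝ))‖ ≤ |x - z| := by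
  rw [AddCircle.norm_eq]
  simpa using round_le x z

lemma addCircle_norm_le (x : ℝ) : ‖(x : AddCircle (1 : ℝ))‖ ≤ |x| := by
  simpa using addCircle_norm_le_int x 0

lemma law_integral {N : ℕ} {Ω : Type*} [MeasureSpace Ω] [IsProbabilityMeasure (ℙ : Measure Ω)]
    (p : Fin (N + 1) → ℝ) (hp : ∀ j, 0 ≤ p j)
    (ζ : Ω → Fin (N + 1)) (hζ : Measurable ζ)
    (hlaw : ∀ k, (ℙ : Measure Ω) {ω | ζ ω = k} = ENNReal.ofReal (p k))
    (f : Fin (N + 1) → ℝ) :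
    ∫ ω, f (ζ ω) ∂(ℙ : Measure Ω) = ∑ j, p j * f j := by
  haveI : IsProbabilityMeasure ((ℙ : Measure Ω).map ζ) :=
    Measure.isProbabilityMeasure_map hζ.aemeasurable
  rw [← MeasureTheory.integral_map hζ.aemeasurable
    (measurable_of_countable f).aestronglyMeasurable]
  rw [MeasureTheory.integral_fintype MeasureTheory.Integrable.of_finite]
  apply Finset.sum_congr rfl
  intro j _
  have h1 : ((ℙ : Measure Ω).map ζ) {j} = ENNReal.ofReal (p j) := by
    rw [Measure.map_apply hζ (measurableSet_singleton j)]
    have : ζ ⁻¹' {j} = {ω | ζ ω = j} := rfl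
    rw [this, hlaw]
  rw [measureReal_def, h1, ENNReal.toReal_ofReal (hp j), smul_eq_mul]

lemma law_identDistrib {N : ℕ} {Ω : Type*} [MeasureSpace Ω]
    [IsProbabilityMeasure (ℙ : Measure Ω)]
    (p : Fin (N + 1) → ℝ)
    (ζ η : Ω → Fin (N + 1)) (hζ : Measurable ζ) (hη : Measurable η)
    (hlawζ : ∀ k, (ℙ : Measure Ω) {ω | ζ ω = k} = ENNReal.ofReal (p k))
    (hlawη : ∀ k, (ℙ : Measure Ω) {ω | η ω = k} = ENNReal.ofReal (p k)) :
    IdentDistrib ζ η (ℙ : Measure Ω) (ℙ : Measure Ω) := by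
  refine ⟨hζ.aemeasurable, hη.aemeasurable, ?_⟩
  apply MeasureTheory.Measure.ext_of_singleton
  intro a
  rw [Measure.map_apply hζ (measurableSet_singleton a),
    Measure.map_apply hη (measurableSet_singleton a)]
  have h1 : ζ ⁻¹' {a} = {ω | ζ ω = a} := rfl
  have h2 : η ⁻¹' {a} = {ω | η ω = a} := rfl
  rw [h1, h2, hlawζ, hlawη]

lemma slln_aux {N : ℕ} {Ω : Type*} [MeasureSpace Ω] [IsProbabilityMeasure (ℙ : Measure Ω)]
    (p : Fin (N + 1) → ℝ) (hp : ∀ j, 0 ≤ p j)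
    (n : Fin (N + 1) → ℤ)
    (ε : ℤ → Ω → Fin (N + 1)) (hmeas : ∀ l, Measurable (ε l))
    (hindep : iIndepFun ε ℙ)
    (hlaw : ∀ l k, (ℙ : Measure Ω) {ω | ε l ω = k} = ENNReal.ofReal (p k))
    (φ : ℕ → ℤ) (hφ : Function.Injective φ) :
    ∀ᵐ ω ∂(ℙ : Measure Ω),
      Tendsto (fun L : ℕ => (∑ i ∈ Finset.range L, (n (ε (φ i) ω) : ℝ)) / L)
        atTop (nhds (∑ j, p j * (n j : ℝ))) := by
  classical
  set f : Fin (N + 1) → ℝ := fun j => (n j : ℝ) with hf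
  have hfm : Measurable f := measurable_of_countable f
  set X : ℕ → Ω → ℝ := fun i ω => f (ε (φ i) ω) with hX
  have hXm : ∀ i, Measurable (X i) := fun i => hfm.comp (hmeas (φ i))
  have hint : Integrable (X 0) (ℙ : Measure Ω) := by
    apply MeasureTheory.Integrable.mono' (integrable_const (∑ j, |f j|))
      (hXm 0).aestronglyMeasurable
    apply ae_of_all
    intro ω
    rw [Real.norm_eq_abs]
    exact Finset.single_le_sum (f := fun j => |f j|) (fun j _ => abs_nonneg _) (Finset.mem_univ _)
  have hident : ∀ i, IdentDistrib (X i) (X 0) (ℙ : Measure Ω) (ℙ : Measure Ω) := fun i =>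
    (law_identDistrib p (ε (φ i)) (ε (φ 0)) (hmeas _) (hmeas _) (hlaw _) (hlaw _)).comp hfm
  have hpair : Pairwise (Function.onFun (IndepFun · · (ℙ : Measure Ω)) X) := by
    intro i j hij
    exact (hindep.indepFun (hφ.ne hij)).comp hfm hfm
  have hmean : (∫ ω, X 0 ω ∂(ℙ : Measure Ω)) = ∑ j, p j * (n j : ℝ) :=
    law_integral p hp (ε (φ 0)) (hmeas _) (hlaw _) f
  have := strong_law_ae_real X hint hpair hident
  rw [show ((ℙ : Measure Ω)[X 0]) = ∑ j, p j * (n j : ℝ) from hmean] at this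
  exact this

/-- In the Pisot-form setting, for every `k ∈ ℤ`, almost surely the
symmetric partial sums `∑_{-L ≤ l ≤ L} μ (ε l) λ^{k + S_l} mod 1` converge in the
torus `𝕋 = ℝ/ℤ`; i.e. the random variable `Z_k = ∑_{l ∈ ℤ} μ (ε l) λ^{k+S_l} mod 1`
is well defined. -/
theorem stmt7 {N : ℕ} (hN : 1 ≤ N) (lam : ℝ) (hlam : 0 < lam)
    (hPisot : IsPisot lam⁻¹)
    (n : Fin (N + 1) → ℤ) (hgcd : Finset.univ.gcd n = 1)
    (μ : Fin (N + 1) → ℝ) (hμ : ∀ k, μ k ∈ traceSet lam⁻¹)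
    (p : Fin (N + 1) → ℝ) (hp : ∀ j, 0 < p j) (hp1 : ∑ j, p j = 1)
    (hdrift : 0 < ∑ j, p j * (n j : ℝ))
    (Ω : Type*) [MeasureSpace Ω] [IsProbabilityMeasure (ℙ : Measure Ω)]
    (ε : ℤ → Ω → Fin (N + 1)) (hmeas : ∀ l, Measurable (ε l))
    (hindep : iIndepFun ε ℙ)
    (hlaw : ∀ l k, (ℙ : Measure Ω) {ω | ε l ω = k} = ENNReal.ofReal (p k)) :
    ∀ k : ℤ, ∀ᵐ ω ∂ℙ, ∃ z : AddCircle (1 : ℝ),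
      Tendsto (fun L : ℕ =>
          ((∑ l ∈ Finset.Icc (-(L : ℤ)) (L : ℤ),
            μ (ε l ω) * lam ^ (k + cocy n ε l ω) : ℝ) : AddCircle (1 : ℝ)))
        atTop (nhds z) := by
  intro k
  classical
  have hp0 : ∀ j, (0 : ℝ) ≤ p j := fun j => (hp j).le
  have hlam1 : lam < 1 := by
    by_contra h
    push_neg at h
    have h2 : lam⁻¹ ≤ 1 := inv_le_one_of_one_le₀ h
    linarith [hPisot.1]
  -- uniform decay constants
  choose C hC ρ hρpos hρlt M hM using fun j => pisot_decay lam⁻¹ hPisot (μ j) (hμ j)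
  set Cs : ℝ := ∑ j, C j with hCsdef
  have hCs_pos : 0 < Cs :=
    Finset.sum_pos (fun j _ => hC j) ⟨0, Finset.mem_univ 0⟩
  have hCs_ge : ∀ j, C j ≤ Cs := fun j =>
    Finset.single_le_sum (f := C) (fun j _ => (hC j).le) (Finset.mem_univ j)
  have hne : (Finset.univ : Finset (Fin (N + 1))).Nonempty := ⟨0, Finset.mem_univ 0⟩
  set ρs : ℝ := Finset.univ.sup' hne ρ with hρsdef
  have hρs_ge : ∀ j, ρ j ≤ ρs := fun j => Finset.le_sup' ρ (Finset.mem_univ j)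
  have hρs_pos : 0 < ρs := lt_of_lt_of_le (hρpos 0) (hρs_ge 0)
  have hρs_lt : ρs < 1 := (Finset.sup'_lt_iff hne).2 fun j _ => hρlt j
  set Ms : ℕ := Finset.univ.sup M with hMsdef
  have hdecay : ∀ j, ∀ m : ℕ, Ms ≤ m → ∃ z : ℤ, |μ j * lam⁻¹ ^ m - (z : ℝ)| ≤ Cs * ρs ^ m := by
    intro j m hm
    obtain ⟨z, hz⟩ := hM j m (le_trans (Finset.le_sup (f := M) (Finset.mem_univ j)) hm)
    refine ⟨z, hz.trans ?_⟩
    exact mul_le_mul (hCs_ge j) (pow_le_pow_left₀ (hρpos j).le (hρs_ge j) m)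
      (pow_nonneg (hρpos j).le m) hCs_pos.le
  -- SLLN for both directions
  set m0 : ℝ := ∑ j, p j * (n j : ℝ) with hm0def
  have hXae := slln_aux p hp0 n ε hmeas hindep hlaw (fun i => (i : ℤ))
    (fun a b h => by
      have h' : (a : ℤ) = (b : ℤ) := h
      omega)
  have hYae := slln_aux p hp0 n ε hmeas hindep hlaw (fun i => -(i : ℤ) - 1)
    (fun a b h => by
      have h' : -(a : ℤ) - 1 = -(b : ℤ) - 1 := h
      omega)
  filter_upwards [hXae, hYae] with ω hXω hYω
  -- deterministic part
  set g : ℤ → ℝ := fun l => μ (ε l ω) * lam ^ (k + cocy n ε l ω) with hgdef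
  set F : ℕ → AddCircle (1 : ℝ) := fun L =>
    ((∑ l ∈ Finset.Icc (-(L : ℤ)) (L : ℤ), g l : ℝ) : AddCircle (1 : ℝ)) with hFdef
  -- cocycle formulas
  have hcX : ∀ L : ℕ, cocy n ε (L : ℤ) ω = ∑ i ∈ Finset.range L, n (ε (i : ℤ) ω) := by
    intro L
    rw [cocy, if_pos (by positivity)]
    simp
  have hcY : ∀ L : ℕ, 1 ≤ L →
      cocy n ε (-(L : ℤ)) ω = -∑ i ∈ Finset.range L, n (ε (-(i : ℤ) - 1) ω) := by
    intro L hL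
    rw [cocy, if_neg (by omega)]
    simp
  -- eventual lower bounds on the cocycle
  have hm2 : 0 < m0 / 2 := half_pos hdrift
  have hev1 : ∀ᶠ L : ℕ in atTop,
      m0 / 2 * L ≤ ∑ i ∈ Finset.range L, (n (ε (i : ℤ) ω) : ℝ) := by
    have h1 := hXω.eventually (eventually_ge_nhds (show m0 / 2 < m0 by linarith))
    filter_upwards [h1, eventually_ge_atTop 1] with L hL1 hL2
    have hLpos : (0 : ℝ) < L := by exact_mod_cast hL2
    rw [le_div_iff₀ hLpos] at hL1
    exact hL1
  have hev2 : ∀ᶠ L : ℕ in atTop,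
      m0 / 2 * L ≤ ∑ i ∈ Finset.range L, (n (ε (-(i : ℤ) - 1) ω) : ℝ) := by
    have h1 := hYω.eventually (eventually_ge_nhds (show m0 / 2 < m0 by linarith))
    filter_upwards [h1, eventually_ge_atTop 1] with L hL1 hL2
    have hLpos : (0 : ℝ) < L := by exact_mod_cast hL2
    rw [le_div_iff₀ hLpos] at hL1
    exact hL1
  have hev3 : ∀ᶠ L : ℕ in atTop, (Ms : ℝ) + |(k : ℝ)| + 1 ≤ m0 / 2 * L :=
    (tendsto_natCast_atTop_atTop.const_mul_atTop hm2).eventually_ge_atTop _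
  obtain ⟨l0, hl0⟩ := eventually_atTop.1 ((hev1.and hev2).and hev3)
  -- geometric constants
  set r1 : ℝ := lam ^ (m0 / 2) with hr1def
  set r2 : ℝ := ρs ^ (m0 / 2) with hr2def
  have hr1pos : 0 < r1 := Real.rpow_pos_of_pos hlam _
  have hr1lt : r1 < 1 := Real.rpow_lt_one hlam.le hlam1 hm2
  have hr2pos : 0 < r2 := Real.rpow_pos_of_pos hρs_pos _
  have hr2lt : r2 < 1 := Real.rpow_lt_one hρs_pos.le hρs_lt hm2
  set Cmu : ℝ := (∑ j, |μ j|) + 1 with hCmudef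
  have hCmu_pos : 0 < Cmu := by
    have : (0 : ℝ) ≤ ∑ j, |μ j| := Finset.sum_nonneg fun j _ => abs_nonneg _
    linarith
  have hCmu_ge : ∀ j, |μ j| ≤ Cmu := by
    intro j
    have := Finset.single_le_sum (f := fun j => |μ j|) (fun j _ => abs_nonneg _)
      (Finset.mem_univ j)
    rw [hCmudef]; linarith
  set A1 : ℝ := Cmu * lam ^ ((k : ℝ)) with hA1def
  set A2 : ℝ := Cs * ρs ^ (-|(k : ℝ)|) with hA2def
  set b : ℕ → ℝ := fun L => A1 * r1 ^ (L + 1) + A2 * r2 ^ (L + 1) with hbdef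
  have hbsum : Summable b := by
    apply Summable.add
    · apply Summable.congr (((summable_geometric_of_lt_one hr1pos.le hr1lt).mul_left
        (A1 * r1)))
      intro L
      rw [pow_succ]
      ring
    · apply Summable.congr (((summable_geometric_of_lt_one hr2pos.le hr2lt).mul_left
        (A2 * r2)))
      intro L
      rw [pow_succ]
      ring
  -- the key estimate
  have key : ∀ L : ℕ, l0 ≤ L → dist (F L) (F (L + 1)) ≤ b L := by
    intro L hL
    obtain ⟨⟨hbX, hbY⟩, hbM⟩ := hl0 (L + 1) (hL.trans (Nat.le_succ L))
    push_cast at hbX hbY hbM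
    set SX : ℤ := ∑ i ∈ Finset.range (L + 1), n (ε (i : ℤ) ω) with hSXdef
    set SY : ℤ := ∑ i ∈ Finset.range (L + 1), n (ε (-(i : ℤ) - 1) ω) with hSYdef
    have hSXr : (SX : ℝ) = ∑ i ∈ Finset.range (L + 1), (n (ε (i : ℤ) ω) : ℝ) := by
      rw [hSXdef]; push_cast; rfl
    have hSYr : (SY : ℝ) = ∑ i ∈ Finset.range (L + 1), (n (ε (-(i : ℤ) - 1) ω) : ℝ) := by
      rw [hSYdef]; push_cast; rfl
    rw [← hSXr] at hbX
    rw [← hSYr] at hbY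
    have hc1 : cocy n ε (((L + 1 : ℕ)) : ℤ) ω = SX := hcX (L + 1)
    have hc2 : cocy n ε (-((L + 1 : ℕ) : ℤ)) ω = -SY := by
      rw [hcY (L + 1) (by omega), hSYdef]
    -- splitting off the two new terms
    have hins : Finset.Icc (-((L + 1 : ℕ) : ℤ)) ((L + 1 : ℕ) : ℤ)
        = insert (-((L + 1 : ℕ) : ℤ))
            (insert (((L + 1 : ℕ) : ℤ)) (Finset.Icc (-(L : ℤ)) (L : ℤ))) := by
      ext x
      simp only [Finset.mem_Icc, Finset.mem_insert]
      push_cast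
      omega
    have hmem1 : (((L + 1 : ℕ) : ℤ)) ∉ Finset.Icc (-(L : ℤ)) (L : ℤ) := by
      simp only [Finset.mem_Icc]
      push_cast
      omega
    have hmem2 : (-((L + 1 : ℕ) : ℤ)) ∉
        insert (((L + 1 : ℕ) : ℤ)) (Finset.Icc (-(L : ℤ)) (L : ℤ)) := by
      simp only [Finset.mem_insert, Finset.mem_Icc]
      push_cast
      omega
    have hsplit : ∑ l ∈ Finset.Icc (-((L + 1 : ℕ) : ℤ)) ((L + 1 : ℕ) : ℤ), g l
        = g (-((L + 1 : ℕ) : ℤ)) + (g (((L + 1 : ℕ) : ℤ))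
            + ∑ l ∈ Finset.Icc (-(L : ℤ)) (L : ℤ), g l) := by
      rw [hins, Finset.sum_insert hmem2, Finset.sum_insert hmem1]
    have hFdiff : F (L + 1) - F L
        = ((g (-((L + 1 : ℕ) : ℤ)) : ℝ) : AddCircle (1 : ℝ))
          + ((g (((L + 1 : ℕ) : ℤ)) : ℝ) : AddCircle (1 : ℝ)) := by
      simp only [hFdef]
      rw [hsplit, AddCircle.coe_add, AddCircle.coe_add]
      abel
    -- positive-side bound
    have hpos : ‖((g (((L + 1 : ℕ) : ℤ)) : ℝ) : AddCircle (1 : ℝ))‖ ≤ A1 * r1 ^ (L + 1) := by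
      refine (addCircle_norm_le _).trans ?_
      simp only [hgdef]
      rw [hc1, abs_mul, abs_of_pos (zpow_pos hlam _)]
      have h2 : lam ^ (k + SX) = lam ^ (((k + SX : ℤ)) : ℝ) := (Real.rpow_intCast lam _).symm
      have h3 : (k : ℝ) + m0 / 2 * ((L + 1 : ℕ) : ℝ) ≤ ((k + SX : ℤ) : ℝ) := by
        push_cast
        linarith
      have h4 : lam ^ (((k + SX : ℤ)) : ℝ) ≤ lam ^ ((k : ℝ) + m0 / 2 * ((L + 1 : ℕ) : ℝ)) :=
        Real.rpow_le_rpow_of_exponent_ge hlam hlam1.le h3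
      have h5 : lam ^ ((k : ℝ) + m0 / 2 * ((L + 1 : ℕ) : ℝ)) = lam ^ ((k : ℝ)) * r1 ^ (L + 1) := by
        rw [Real.rpow_add hlam, hr1def, ← Real.rpow_natCast (lam ^ (m0 / 2)) (L + 1),
          ← Real.rpow_mul hlam.le]
      calc |μ (ε ((L + 1 : ℕ) : ℤ) ω)| * lam ^ (k + SX)
          ≤ Cmu * (lam ^ ((k : ℝ)) * r1 ^ (L + 1)) := by
            apply mul_le_mul (hCmu_ge _) _ (zpow_pos hlam _).le hCmu_pos.le
            rw [h2]
            rw [← h5]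
            exact h4
        _ = A1 * r1 ^ (L + 1) := by rw [hA1def]; ring
    -- negative-side bound
    have hneg : ‖((g (-((L + 1 : ℕ) : ℤ)) : ℝ) : AddCircle (1 : ℝ))‖ ≤ A2 * r2 ^ (L + 1) := by
      have hSYge : (Ms : ℝ) + 1 ≤ (SY : ℝ) - (k : ℝ) := by
        have h1 := le_abs_self (k : ℝ)
        linarith
      have hZ : (Ms : ℤ) + 1 ≤ SY - k := by exact_mod_cast hSYge
      set mm : ℕ := (SY - k).toNat with hmmdef
      have hmmZ : (mm : ℤ) = SY - k := Int.toNat_of_nonneg (by omega)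
      have hmmge : Ms ≤ mm := by omega
      have hmmr : (mm : ℝ) = (SY : ℝ) - (k : ℝ) := by exact_mod_cast congrArg Int.cast hmmZ
      have hpow : lam ^ (k + cocy n ε (-((L + 1 : ℕ) : ℤ)) ω) = lam⁻¹ ^ mm := by
        rw [hc2, show k + -SY = -(SY - k) by ring, zpow_neg, ← inv_zpow, ← hmmZ, zpow_natCast]
      obtain ⟨z, hzb⟩ := hdecay (ε (-((L + 1 : ℕ) : ℤ)) ω) mm hmmge
      refine (addCircle_norm_le_int _ z).trans ?_
      have hgz : |g (-((L + 1 : ℕ) : ℤ)) - (z : ℝ)| ≤ Cs * ρs ^ mm := by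
        simp only [hgdef]
        rw [hpow]
        exact hzb
      refine hgz.trans ?_
      have h7 : m0 / 2 * ((L + 1 : ℕ) : ℝ) - |(k : ℝ)| ≤ (mm : ℝ) := by
        rw [hmmr]
        have h1 := le_abs_self (k : ℝ)
        push_cast
        linarith
      have h8 : ρs ^ ((mm : ℕ) : ℝ) ≤ ρs ^ (m0 / 2 * ((L + 1 : ℕ) : ℝ) - |(k : ℝ)|) :=
        Real.rpow_le_rpow_of_exponent_ge hρs_pos hρs_lt.le h7
      have h9 : ρs ^ (m0 / 2 * ((L + 1 : ℕ) : ℝ) - |(k : ℝ)|)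
          = ρs ^ (-|(k : ℝ)|) * r2 ^ (L + 1) := by
        rw [sub_eq_add_neg, Real.rpow_add hρs_pos, hr2def,
          ← Real.rpow_natCast (ρs ^ (m0 / 2)) (L + 1), ← Real.rpow_mul hρs_pos.le]
        ring
      calc Cs * ρs ^ mm ≤ Cs * (ρs ^ (-|(k : ℝ)|) * r2 ^ (L + 1)) := by
            apply mul_le_mul_of_nonneg_left _ hCs_pos.le
            rw [← Real.rpow_natCast ρs mm, ← h9]
            exact h8
        _ = A2 * r2 ^ (L + 1) := by rw [hA2def]; ring
    rw [dist_comm, dist_eq_norm, hFdiff]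
    refine (norm_add_le _ _).trans ?_
    rw [hbdef]
    simp only
    linarith
  -- conclude
  have hsum : Summable fun L => dist (F L) (F (L + 1)) := by
    rw [← summable_nat_add_iff l0]
    apply Summable.of_nonneg_of_le (fun L => dist_nonneg)
      (fun L => key (L + l0) (Nat.le_add_left _ _))
    exact (summable_nat_add_iff l0).2 hbsum
  have hcauchy : CauchySeq F := cauchySeq_of_summable_dist hsum
  haveI : Fact ((0 : ℝ) < 1) := ⟨zero_lt_one⟩
  obtain ⟨z, hz⟩ := cauchySeq_tendsto_of_complete hcauchy
  exact ⟨z, hz⟩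
end
end

section
/- In the setting of the Pisot-form system (1/λ Pisot of degree s+1, relatively prime integers (n_k), μ_k ∈ T(1/λ), p ∈ C_N with Σ_j p_j n_j > 0), suppose the maps φ_k(x) = λ^{n_k} x + μ_k have a common fixed point c. Then there exists a rational number p/q such that λ^{−n} c mod 1 converges to p/q in 𝕋 as n → +∞; consequently m = δ_{p/q} and 𝓜 = (δ_{p/q})^{⊗(s+1)}. -/
open MeasureTheory ProbabilityTheory Filter Finset IntermediateField

noncomputable section

open scoped NNReal ENNReal

set_option maxHeartbeats 1000000
set_option synthInstance.maxHeartbeats 400000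

lemma aux_pisot {lam : ℝ} (hlam : 0 < lam) (hPisot : IsPisot lam⁻¹)
    {N : ℕ} (n : Fin (N+1) → ℤ) (hgcd : Finset.univ.gcd n = 1)
    (μ : Fin (N+1) → ℝ) (hμ : ∀ k, μ k ∈ traceSet lam⁻¹)
    (c : ℝ) (hfix : ∀ k, lam ^ (n k) * c + μ k = c) :
    ∃ q : ℚ, Filter.Tendsto (fun nn : ℕ => ((lam⁻¹ ^ nn * c : ℝ) : AddCircle (1:ℝ)))
      atTop (nhds (((q:ℝ) : AddCircle (1:ℝ)))) := by
  classical
  obtain ⟨hθ1, hθint, habs⟩ := hPisot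
  set θ : ℝ := lam⁻¹ with hθdef
  have hθ0 : (0:ℝ) < θ := lt_trans one_pos hθ1
  have hlam1 : lam < 1 := by
    rw [← inv_inv lam]; rw [inv_lt_one_iff₀]; right; exact hθ1
  have hθQ : IsIntegral ℚ θ := hθint.tower_top
  haveI : FiniteDimensional ℚ ℚ⟮θ⟯ := IntermediateField.adjoin.finiteDimensional hθQ
  set K := ℚ⟮θ⟯
  set g : K := AdjoinSimple.gen ℚ θ with hgdef
  have hgR : (algebraMap K ℝ) g = θ := rfl
  have hg0 : g ≠ 0 := by
    intro h
    have : (algebraMap K ℝ) g = 0 := by rw [h]; simp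
    rw [hgR] at this; exact (ne_of_gt hθ0) this
  have hgint : IsIntegral ℤ g := by
    rwa [← isIntegral_algebraMap_iff (algebraMap K ℝ).injective]
  -- c ∈ K
  obtain ⟨k₀, hk₀⟩ : ∃ k, n k ≠ 0 := by
    by_contra h; push_neg at h
    rw [Finset.gcd_eq_zero_iff.mpr (fun i _ => h i)] at hgcd; exact zero_ne_one hgcd
  have hlamne : lam ^ (n k₀) ≠ 1 := by
    intro h
    have hlog := Real.log_zpow lam (n k₀)
    rw [h, Real.log_one] at hlog
    have : Real.log lam < 0 := Real.log_neg hlam hlam1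
    have : (n k₀ : ℝ) = 0 := by
      rcases mul_eq_zero.mp hlog.symm with h' | h'
      · exact h'
      · exact absurd h' (ne_of_lt this)
    exact hk₀ (by exact_mod_cast this)
  have hc : c = μ k₀ / (1 - lam ^ (n k₀)) := by
    have h1 : 1 - lam ^ (n k₀) ≠ 0 := sub_ne_zero.mpr (Ne.symm hlamne)
    field_simp
    linarith [hfix k₀]
  have hlamK : lam ∈ K := by
    have hθK : θ ∈ K := IntermediateField.mem_adjoin_simple_self ℚ θ
    have : lam = θ⁻¹ := by rw [hθdef, inv_inv]
    rw [this]; exact inv_mem hθK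
  obtain ⟨hμk₀K, -⟩ := hμ k₀
  have hcK : c ∈ K := by
    rw [hc]
    exact div_mem hμk₀K (sub_mem (one_mem _) (zpow_mem hlamK _))
  set ch : K := ⟨c, hcK⟩ with hchdef
  -- the trace sequence
  set t : ℤ → ℚ := fun j => Algebra.trace ℚ K (g ^ j * ch) with htdef
  -- the identity embedding
  set ι : K →ₐ[ℚ] ℂ := (Complex.ofRealAm.restrictScalars ℚ).comp (IntermediateField.val _)
    with hιdef
  have hιg : ι g = (θ : ℂ) := rfl
  have hιc : ι ch = (c : ℂ) := rfl
  have hσθ : ∀ σ : K →ₐ[ℚ] ℂ, σ ≠ ι → ‖σ g‖ < 1 := by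
    intro σ hσ
    have hroot : (Polynomial.aeval (σ g)) (minpoly ℚ θ) = 0 := by
      have h1 : minpoly ℚ g = minpoly ℚ θ := by
        have := minpoly.algebraMap_eq (A := ℚ) (B := K) (B' := ℝ)
          (algebraMap K ℝ).injective g
        exact this.symm
      rw [← h1, Polynomial.aeval_algHom_apply, minpoly.aeval, map_zero]
    refine habs _ hroot ?_
    intro heq
    apply hσ
    apply PowerBasis.algHom_ext (IntermediateField.adjoin.powerBasis hθQ)
    rw [IntermediateField.adjoin.powerBasis_gen]
    exact heq.trans hιg.symm
  -- trace as sum of embeddings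
  have hsum : ∀ nn : ℕ, ((t nn : ℚ) : ℂ) = ∑ σ : K →ₐ[ℚ] ℂ, (σ g) ^ nn * σ ch := by
    intro nn
    have h1 := trace_eq_sum_embeddings (K := ℚ) (L := K) (E := ℂ) (x := g ^ (nn:ℤ) * ch)
    have h2 : ((t nn : ℚ) : ℂ) = algebraMap ℚ ℂ (Algebra.trace ℚ K (g ^ (nn:ℤ) * ch)) := by
      rw [htdef]; norm_num
    rw [h2, h1]
    refine Finset.sum_congr rfl fun σ _ => ?_
    rw [map_mul, map_zpow₀, zpow_natCast]
  -- the error term tends to 0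
  have herr : Filter.Tendsto (fun nn : ℕ => ((t nn : ℝ) - θ ^ nn * c)) atTop (nhds 0) := by
    have hC : ∀ nn : ℕ, (((t nn : ℝ) - θ ^ nn * c : ℝ) : ℂ) =
        ∑ σ ∈ Finset.univ.erase ι, (σ g) ^ nn * σ ch := by
      intro nn
      push_cast
      rw [hsum nn, ← Finset.add_sum_erase _ _ (Finset.mem_univ ι), hιg, hιc]
      ring
    have htends : Filter.Tendsto (fun nn : ℕ =>
        ∑ σ ∈ Finset.univ.erase ι, (σ g) ^ nn * σ ch) atTop (nhds 0) := by
      have := tendsto_finset_sum (Finset.univ.erase ι)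
        (fun σ (hσ : σ ∈ Finset.univ.erase ι) =>
          ((tendsto_pow_atTop_nhds_zero_of_norm_lt_one
            (by simpa using hσθ σ (Finset.ne_of_mem_erase hσ))).mul_const
            (σ ch)))
      simpa using this
    rw [tendsto_zero_iff_norm_tendsto_zero]
    have : (fun nn : ℕ => ‖(t nn : ℝ) - θ ^ nn * c‖) =
        fun nn : ℕ => ‖∑ σ ∈ Finset.univ.erase ι, (σ g) ^ nn * σ ch‖ := by
      funext nn
      rw [← hC nn, Complex.norm_real]
    rw [this]
    simpa using htends.norm
  -- bounded denominators
  have halg : IsAlgebraic ℤ ch := by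
    have h1 : IsIntegral ℚ ch := IsIntegral.of_finite ℚ ch
    exact (IsFractionRing.isAlgebraic_iff ℤ ℚ K).mpr h1.isAlgebraic
  obtain ⟨D, hD0, hDch⟩ := halg.exists_integral_multiple
  have hDt : ∀ nn : ℕ, ∃ z : ℤ, (D : ℚ) * t nn = z := by
    intro nn
    have hint : IsIntegral ℤ (g ^ (nn:ℤ) * (algebraMap ℤ K D * ch)) := by
      rw [zpow_natCast]
      exact (hgint.pow nn).mul (by rw [← Algebra.smul_def]; exact hDch)
    have htr : IsIntegral ℤ (Algebra.trace ℚ K (g ^ (nn:ℤ) * (algebraMap ℤ K D * ch))) :=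
      Algebra.isIntegral_trace hint
    obtain ⟨z, hz⟩ := IsIntegrallyClosed.isIntegral_iff.mp htr
    refine ⟨z, ?_⟩
    have : Algebra.trace ℚ K (g ^ (nn:ℤ) * (algebraMap ℤ K D * ch)) =
        (D : ℚ) * Algebra.trace ℚ K (g ^ (nn:ℤ) * ch) := by
      rw [show g ^ (nn:ℤ) * (algebraMap ℤ K D * ch) = (D:ℚ) • (g ^ (nn:ℤ) * ch) by
        rw [Algebra.smul_def]
        push_cast
        ring_nf
        rw [show (algebraMap ℚ ↥K) ((D:ℚ)) = algebraMap ℤ K D by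
          rw [show ((D:ℚ)) = algebraMap ℤ ℚ D from rfl, ← IsScalarTower.algebraMap_apply]]
        ring]
      rw [_root_.map_smul, smul_eq_mul]
    show (D:ℚ) * Algebra.trace ℚ K (g ^ ((nn:ℕ):ℤ) * ch) = (z:ℚ)
    rw [← this]
    exact_mod_cast hz.symm
  -- the difference subgroup
  have hdiff : ∀ k, ∃ B : ℤ, ∀ j : ℤ, B ≤ j → ∃ z : ℤ, t j - t (j - n k) = z := by
    intro k
    obtain ⟨hαk, Nk, hNk⟩ := hμ k
    refine ⟨(Nk : ℤ), fun j hj => ?_⟩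
    have hj0 : (0:ℤ) ≤ j := le_trans (Int.ofNat_nonneg Nk) hj
    obtain ⟨z, hz⟩ := hNk j.toNat (by omega)
    refine ⟨z, ?_⟩
    have hkey : (⟨μ k, hαk⟩ : K) = ch - g ^ (-(n k)) * ch := by
      apply Subtype.ext
      have hco : ((ch - g ^ (-(n k)) * ch : K) : ℝ) = c - θ ^ (-(n k)) * c := by
        push_cast
        rfl
      rw [hco]
      have : θ ^ (-(n k)) = lam ^ (n k) := by
        rw [hθdef, inv_zpow, ← zpow_neg, neg_neg]
      rw [this]
      have := hfix k
      simp only []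
      linarith
    have hexp : (⟨θ, IntermediateField.mem_adjoin_simple_self ℚ θ⟩ : K) ^ (j.toNat)
        * (⟨μ k, hαk⟩ : K) = g ^ j * ch - g ^ (j - n k) * ch := by
      rw [show (⟨θ, IntermediateField.mem_adjoin_simple_self ℚ θ⟩ : K) = g from rfl]
      rw [hkey, mul_sub]
      rw [show (g ^ j.toNat : K) = g ^ (j : ℤ) by
        rw [← zpow_natCast, Int.toNat_of_nonneg hj0]]
      rw [← mul_assoc, ← zpow_add₀ hg0, ← sub_eq_add_neg]
    rw [htdef]
    simp only []
    rw [← map_sub]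
    rw [← hexp]
    exact hz
  set H : AddSubgroup ℤ :=
    { carrier := {gg : ℤ | ∃ B : ℤ, ∀ j : ℤ, B ≤ j → ∃ z : ℤ, t j - t (j - gg) = z}
      zero_mem' := ⟨0, fun j _ => ⟨0, by simp⟩⟩
      add_mem' := by
        rintro a b ⟨Ba, ha⟩ ⟨Bb, hb⟩
        refine ⟨max Ba (Bb + a), fun j hj => ?_⟩
        obtain ⟨z1, h1⟩ := ha j (le_trans (le_max_left _ _) hj)
        obtain ⟨z2, h2⟩ := hb (j - a) (by
          have := le_trans (le_max_right Ba (Bb + a)) hj; omega)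
        refine ⟨z1 + z2, ?_⟩
        have : j - a - b = j - (a + b) := by ring
        rw [this] at h2
        push_cast
        linarith
      neg_mem' := by
        rintro a ⟨Ba, ha⟩
        refine ⟨Ba - a, fun j hj => ?_⟩
        obtain ⟨z, hz⟩ := ha (j + a) (by omega)
        refine ⟨-z, ?_⟩
        have : j + a - a = j := by ring
        rw [this] at hz
        have : j - -a = j + a := by ring
        rw [this]
        push_cast
        linarith } with hHdef
  have hnH : ∀ k, n k ∈ H := fun k => hdiff k
  have h1H : (1:ℤ) ∈ H := by
    obtain ⟨a, haH⟩ := Int.subgroup_cyclic H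
    rw [haH]
    rw [AddSubgroup.mem_closure_singleton]
    have hdvd : a ∣ 1 := by
      rw [← hgcd]
      refine Finset.dvd_gcd fun k _ => ?_
      have := hnH k
      rw [haH, AddSubgroup.mem_closure_singleton] at this
      obtain ⟨m, hm⟩ := this
      exact ⟨m, by rw [← hm, zsmul_eq_mul]; push_cast; ring⟩
    obtain ⟨b, hb⟩ := hdvd
    exact ⟨b, by rw [zsmul_eq_mul]; push_cast; linear_combination -hb⟩
  obtain ⟨B, hB⟩ := h1H
  set n₀ : ℤ := max B 0 with hn₀def
  set q : ℚ := t n₀ with hqdef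
  have hq : ∀ j : ℤ, n₀ ≤ j → ∃ z : ℤ, t j - q = z := by
    intro j hj
    refine Int.le_induction (motive := fun j _ => ∃ z : ℤ, t j - q = z) ?_ ?_ j hj
    · exact ⟨0, by simp [hqdef]⟩
    · rintro j hj ⟨z, hz⟩
      obtain ⟨z', hz'⟩ := hB (j + 1) (by omega)
      have : j + 1 - 1 = j := by ring
      rw [this] at hz'
      exact ⟨z' + z, by push_cast; linarith⟩
  refine ⟨q, ?_⟩
  have hcont : Continuous ((↑) : ℝ → AddCircle (1:ℝ)) := AddCircle.continuous_mk' 1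
  have hr : Filter.Tendsto (fun nn : ℕ => (q : ℝ) + (θ ^ nn * c - (t nn : ℝ)))
      atTop (nhds ((q:ℝ))) := by
    have h0 : Filter.Tendsto (fun nn : ℕ => (θ ^ nn * c - (t nn : ℝ))) atTop (nhds 0) := by
      have := herr.neg
      simpa using this
    have := tendsto_const_nhds (x := (q:ℝ)) (f := atTop (α := ℕ)) |>.add h0
    simpa using this
  have h2 : Filter.Tendsto (fun nn : ℕ =>
      (((q : ℝ) + (θ ^ nn * c - (t nn : ℝ)) : ℝ) : AddCircle (1:ℝ)))
      atTop (nhds (((q:ℝ) : AddCircle (1:ℝ)))) := (hcont.tendsto _).comp hr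
  refine Filter.Tendsto.congr' ?_ h2
  rw [Filter.eventuallyEq_iff_exists_mem]
  refine ⟨{nn : ℕ | n₀ ≤ (nn:ℤ)}, ?_, ?_⟩
  · rw [Filter.mem_atTop_sets]
    exact ⟨n₀.toNat, fun b hb => by simp only [Set.mem_setOf_eq]; omega⟩
  · intro nn hnn
    simp only [Set.mem_setOf_eq] at hnn
    obtain ⟨z, hz⟩ := hq nn hnn
    show (((q : ℝ) + (θ ^ nn * c - (t nn : ℝ)) : ℝ) : AddCircle (1:ℝ)) = _
    rw [show ((lam⁻¹ ^ nn * c : ℝ)) = θ ^ nn * c from rfl]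
    rw [QuotientAddGroup.eq_iff_sub_mem]
    refine ⟨-z, ?_⟩
    show ((-z : ℤ) • (1:ℝ)) = (q:ℝ) + (θ ^ nn * c - (t nn : ℝ)) - θ ^ nn * c
    rw [zsmul_eq_mul, mul_one]
    push_cast
    have : (q:ℝ) = (t (nn:ℤ) : ℝ) - (z:ℝ) := by exact_mod_cast (by linarith [hz] : (q:ℚ) = t nn - z)
    rw [this]
    ring


lemma pi_dirac_eq {k : ℕ} {α : Type*} [MeasurableSpace α] (x : α) :
    Measure.pi (fun _ : Fin k => Measure.dirac x) = Measure.dirac (fun _ : Fin k => x) := by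
  refine (Measure.pi_eq (μ := fun _ : Fin k => Measure.dirac x) fun s hs => ?_)
  rw [Measure.dirac_apply' _ (MeasurableSet.univ_pi hs)]
  by_cases h : ∀ i, x ∈ s i
  · rw [Set.indicator_of_mem (by exact fun i _ => h i) 1]
    symm
    rw [Finset.prod_eq_one]
    · rfl
    intro i _
    rw [Measure.dirac_apply' _ (hs i), Set.indicator_of_mem (h i)]
    rfl
  · push_neg at h
    obtain ⟨i₀, hi₀⟩ := h
    rw [Set.indicator_of_notMem (by intro hmem; exact hi₀ (hmem i₀ (Set.mem_univ i₀)))]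
    symm
    apply Finset.prod_eq_zero (Finset.mem_univ i₀)
    rw [Measure.dirac_apply' _ (hs i₀), Set.indicator_of_notMem hi₀]

lemma eq_dirac_of_integral {α : Type*} [MeasurableSpace α] [TopologicalSpace α]
    [HasOuterApproxClosed α] [BorelSpace α] (μ : Measure α) [IsFiniteMeasure μ]
    (a : α) (h : ∀ f : C(α, ℝ), ∫ z, f z ∂μ = f a) : μ = Measure.dirac a := by
  apply ext_of_forall_lintegral_eq_of_IsFiniteMeasure
  intro f
  have hint : Integrable (((↑) : ℝ≥0 → ℝ) ∘ ⇑f) μ := f.integrable_of_nnreal μ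
  rw [lintegral_coe_eq_integral f hint]
  have hfr : ∫ x, ((f x : ℝ)) ∂μ = (f a : ℝ) :=
    h ⟨fun x => (f x : ℝ), NNReal.continuous_coe.comp f.continuous⟩
  rw [show ∫ x, ((f x : ℝ≥0) : ℝ) ∂μ = (f a : ℝ) from hfr]
  rw [lintegral_dirac' _ (f.measurable_coe_ennreal_comp)]
  exact ENNReal.ofReal_coe_nnreal

/-- (Theorem 2 ii), second part). In the Pisot-form setting, if the
maps `φ k x = λ^{n k} x + μ k` have a common fixed point `c`, then there is a rational
`q` with `λ^{-n} c mod 1 → q` in `𝕋`; consequently `m = δ_q` and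
`𝓜 = (δ_q)^{⊗(s+1)}`. -/
theorem stmt11 {N : ℕ} (hN : 1 ≤ N) (lam : ℝ) (hlam : 0 < lam)
    (hPisot : IsPisot lam⁻¹) (s : ℕ) (hdeg : (minpoly ℚ lam⁻¹).natDegree = s + 1)
    (n : Fin (N + 1) → ℤ) (hgcd : Finset.univ.gcd n = 1)
    (μ : Fin (N + 1) → ℝ) (hμ : ∀ k, μ k ∈ traceSet lam⁻¹)
    (c : ℝ) (hfix : ∀ k, lam ^ (n k) * c + μ k = c)
    (p : Fin (N + 1) → ℝ) (hp : ∀ j, 0 < p j) (hp1 : ∑ j, p j = 1)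
    (hdrift : 0 < ∑ j, p j * (n j : ℝ))
    (Ω : Type*) [MeasureSpace Ω] [IsProbabilityMeasure (ℙ : Measure Ω)]
    (ε : ℤ → Ω → Fin (N + 1)) (hmeas : ∀ l, Measurable (ε l))
    (hindep : iIndepFun ε ℙ)
    (hlaw : ∀ l k, (ℙ : Measure Ω) {ω | ε l ω = k} = ENNReal.ofReal (p k))
    (X : Ω → ℝ) (hXmeas : Measurable X)
    (hX : ∀ᵐ ω ∂ℙ, Tendsto (fun L : ℕ =>
        ∑ l ∈ Finset.range L, μ (ε (l : ℤ) ω) * lam ^ (cocy n ε (l : ℤ) ω))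
      atTop (nhds (X ω)))
    -- `m` is the weak limit of the laws of `λ^{-n} X mod 1` :
    (m : Measure (AddCircle (1 : ℝ))) [IsProbabilityMeasure m]
    (hm : ∀ f : C(AddCircle (1 : ℝ), ℝ),
      Tendsto (fun q : ℕ => ∫ ω, f ((lam⁻¹ ^ q * X ω : ℝ) : AddCircle (1 : ℝ)) ∂ℙ)
        atTop (nhds (∫ z, f z ∂m)))
    -- `𝓜` is the weak limit of the laws of `λ^{-n}(X, λ^{-1}X, …, λ^{-s}X) mod ℤ^{s+1}` :
    (M : Measure (Fin (s + 1) → AddCircle (1 : ℝ))) [IsProbabilityMeasure M]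
    (hM : ∀ f : C((Fin (s + 1) → AddCircle (1 : ℝ)), ℝ),
      Tendsto (fun q : ℕ => ∫ ω, f (fun u =>
          ((lam⁻¹ ^ q * (lam⁻¹ ^ (u : ℕ) * X ω) : ℝ) : AddCircle (1 : ℝ))) ∂ℙ)
        atTop (nhds (∫ z, f z ∂M))) :
    ∃ q : ℚ,
      Tendsto (fun nn : ℕ => ((lam⁻¹ ^ nn * c : ℝ) : AddCircle (1 : ℝ)))
        atTop (nhds (((q : ℝ) : AddCircle (1 : ℝ)))) ∧
      m = Measure.dirac (((q : ℝ) : AddCircle (1 : ℝ))) ∧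
      M = Measure.pi (fun _ => Measure.dirac (((q : ℝ) : AddCircle (1 : ℝ)))) := by
  classical
  obtain ⟨q, hconv⟩ := aux_pisot hlam hPisot n hgcd μ hμ c hfix
  -- basic facts
  have hlam1 : lam < 1 := by
    rw [← inv_inv lam, inv_lt_one_iff₀]; right; exact hPisot.1
  have hμc : ∀ k, μ k = c - lam ^ (n k) * c := fun k => by linarith [hfix k]
  set S : ℕ → Ω → ℤ := fun L ω => ∑ i ∈ Finset.range L, n (ε (i : ℤ) ω) with hSdef
  have hcocy : ∀ (l : ℕ) (ω : Ω), cocy n ε (l : ℤ) ω = S l ω := by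
    intro l ω
    unfold cocy
    rw [if_pos (Int.ofNat_nonneg l)]
    simp [hSdef]
  have hpart : ∀ ω (L : ℕ),
      ∑ l ∈ Finset.range L, μ (ε (l : ℤ) ω) * lam ^ (cocy n ε (l : ℤ) ω)
        = c - c * lam ^ (S L ω) := by
    intro ω L
    induction L with
    | zero => simp [hSdef]
    | succ L ih =>
      rw [Finset.sum_range_succ, ih, hcocy, hμc]
      have hS : S (L+1) ω = S L ω + n (ε (L : ℤ) ω) := Finset.sum_range_succ _ _
      rw [hS, zpow_add₀ (ne_of_gt hlam)]
      ring
  -- the bad event has measure zero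
  set Z : Set (Fin (N+1)) := {k | n k = 0} with hZdef
  set Zf : Finset (Fin (N+1)) := Finset.univ.filter (fun k => n k = 0) with hZfdef
  obtain ⟨j₀, hj₀⟩ : ∃ k, n k ≠ 0 := by
    by_contra h; push_neg at h
    rw [Finset.gcd_eq_zero_iff.mpr (fun i _ => h i)] at hgcd; exact zero_ne_one hgcd
  set r : ℝ := ∑ k ∈ Zf, p k with hrdef
  have hr1 : r < 1 := by
    have hsub : Zf ⊆ Finset.univ.erase j₀ := by
      intro k hk
      rw [Finset.mem_erase]
      refine ⟨?_, Finset.mem_univ k⟩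
      intro hkj; subst hkj
      rw [hZfdef, Finset.mem_filter] at hk
      exact hj₀ hk.2
    have h1 : r ≤ ∑ k ∈ Finset.univ.erase j₀, p k :=
      Finset.sum_le_sum_of_subset_of_nonneg hsub (fun k _ _ => (hp k).le)
    have h2 : ∑ k ∈ Finset.univ.erase j₀, p k + p j₀ = 1 := by
      rw [Finset.sum_erase_add _ _ (Finset.mem_univ j₀)]; exact hp1
    linarith [hp j₀]
  have hZmeas : ∀ l : ℤ, (ℙ : Measure Ω) (ε l ⁻¹' Z) = ENNReal.ofReal r := by
    intro l
    have huni : ε l ⁻¹' Z = ⋃ k ∈ Zf, {ω | ε l ω = k} := by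
      ext ω
      simp only [Set.mem_preimage, hZdef, Set.mem_setOf_eq, Set.mem_iUnion, hZfdef,
        Finset.mem_filter, Finset.mem_univ, true_and]
      constructor
      · intro h; exact ⟨ε l ω, h, rfl⟩
      · rintro ⟨k, hk, hek⟩; rw [hek]; exact hk
    rw [huni, measure_biUnion_finset ?_ ?_]
    · rw [hrdef, ENNReal.ofReal_sum_of_nonneg (fun k _ => (hp k).le)]
      exact Finset.sum_congr rfl fun k _ => hlaw l k
    · intro a _ b _ hab
      simp only [Function.onFun, Set.disjoint_left]
      intro ω ha hb
      exact hab (by rw [← ha, ← hb])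
    · intro k _
      exact (hmeas l) (measurableSet_singleton k)
  have hA : ∀ L₀ : ℕ, (ℙ : Measure Ω) (⋂ (l : ℕ) (_ : L₀ ≤ l), ε (l : ℤ) ⁻¹' Z) = 0 := by
    intro L₀
    have hbound : ∀ M : ℕ,
        (ℙ : Measure Ω) (⋂ (l : ℕ) (_ : L₀ ≤ l), ε (l : ℤ) ⁻¹' Z) ≤ (ENNReal.ofReal r) ^ M := by
      intro M
      have hsub : (⋂ (l : ℕ) (_ : L₀ ≤ l), ε (l : ℤ) ⁻¹' Z) ⊆
          ⋂ l ∈ Finset.Ico (L₀ : ℤ) ((L₀ : ℤ) + M), ε l ⁻¹' Z := by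
        intro ω hω
        simp only [Set.mem_iInter] at hω ⊢
        intro l hl
        rw [Finset.mem_Ico] at hl
        have hl0 : (0 : ℤ) ≤ l := le_trans (Int.ofNat_nonneg L₀) hl.1
        have : l = ((l.toNat : ℕ) : ℤ) := (Int.toNat_of_nonneg hl0).symm
        rw [this]
        exact hω l.toNat (by omega)
      refine le_trans (measure_mono hsub) ?_
      rw [hindep.meas_biInter (fun i _ => ⟨Z, (Set.to_countable Z).measurableSet, rfl⟩)]
      rw [Finset.prod_congr rfl (fun l _ => hZmeas l), Finset.prod_const]
      rw [Int.card_Ico]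
      simp
    have htendszero : Filter.Tendsto (fun M : ℕ => (ENNReal.ofReal r) ^ M) atTop (nhds 0) :=
      ENNReal.tendsto_pow_atTop_nhds_zero_of_lt_one (ENNReal.ofReal_lt_one.mpr hr1)
    have hle0 : (ℙ : Measure Ω) (⋂ (l : ℕ) (_ : L₀ ≤ l), ε (l : ℤ) ⁻¹' Z) ≤ 0 :=
      ge_of_tendsto' htendszero hbound
    exact le_antisymm hle0 zero_le
  set Bad : Set Ω := ⋃ L₀ : ℕ, ⋂ (l : ℕ) (_ : L₀ ≤ l), ε (l : ℤ) ⁻¹' Z with hBadDef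
  have hBad : (ℙ : Measure Ω) Bad = 0 := measure_iUnion_null hA
  -- almost surely X = c
  have hXc : ∀ᵐ ω ∂(ℙ : Measure Ω), X ω = c := by
    have hBadae : ∀ᵐ ω ∂(ℙ : Measure Ω), ω ∉ Bad := compl_mem_ae_iff.mpr hBad
    filter_upwards [hX, hBadae] with ω hconvω hnb
    have hconv2 : Tendsto (fun L : ℕ => c - c * lam ^ (S L ω)) atTop (nhds (X ω)) := by
      refine hconvω.congr fun L => hpart ω L
    have hconv3 : Tendsto (fun L : ℕ => c * lam ^ (S L ω)) atTop (nhds (c - X ω)) := by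
      have := (tendsto_const_nhds (x := c) (f := atTop (α := ℕ))).sub hconv2
      simpa using this
    by_cases hc0 : c = 0
    · subst hc0
      have : Tendsto (fun _ : ℕ => (0:ℝ)) atTop (nhds (0 - X ω)) := by simpa using hconv3
      have h0 := tendsto_nhds_unique this tendsto_const_nhds
      linarith
    · have htt : Tendsto (fun L : ℕ => lam ^ (S L ω)) atTop (nhds ((c - X ω) / c)) := by
        have := hconv3.div_const c
        refine this.congr fun L => ?_
        field_simp
      have ht0 : 0 ≤ (c - X ω) / c :=
        ge_of_tendsto' htt fun L => (zpow_pos hlam _).le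
      have hteq : (c - X ω) / c = 0 := by
        by_contra hne
        have tpos : 0 < (c - X ω) / c := lt_of_le_of_ne ht0 (Ne.symm hne)
        have hlog : Tendsto (fun L : ℕ => Real.log (lam ^ (S L ω))) atTop
            (nhds (Real.log ((c - X ω) / c))) :=
          ((Real.continuousAt_log (ne_of_gt tpos)).tendsto).comp htt
        have hlog2 : Tendsto (fun L : ℕ => (S L ω : ℝ) * Real.log lam) atTop
            (nhds (Real.log ((c - X ω) / c))) := by
          refine hlog.congr fun L => ?_
          rw [Real.log_zpow]
        have hloglam : Real.log lam < 0 := Real.log_neg hlam hlam1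
        have hSr : Tendsto (fun L : ℕ => (S L ω : ℝ)) atTop
            (nhds (Real.log ((c - X ω) / c) / Real.log lam)) := by
          have := hlog2.div_const (Real.log lam)
          refine this.congr fun L => ?_
          rw [mul_div_cancel_right₀ _ (ne_of_lt hloglam)]
        set u : ℝ := Real.log ((c - X ω) / c) / Real.log lam
        obtain ⟨L₀, hL₀⟩ := (Metric.tendsto_atTop.mp hSr) (1/2) (by norm_num)
        have hzero : ∀ l : ℕ, L₀ ≤ l → n (ε (l : ℤ) ω) = 0 := by
          intro l hl
          have h1 := hL₀ l hl
          have h2 := hL₀ (l+1) (by omega)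
          rw [Real.dist_eq] at h1 h2
          have hS : S (l+1) ω = S l ω + n (ε (l : ℤ) ω) := Finset.sum_range_succ _ _
          have h3 : |((S (l+1) ω : ℝ)) - (S l ω : ℝ)| < 1 := by
            have h4 := abs_sub_le ((S (l+1) ω : ℝ)) u ((S l ω : ℝ))
            have h5 : |u - (S l ω : ℝ)| = |(S l ω : ℝ) - u| := abs_sub_comm _ _
            linarith
          have h6 : |S (l+1) ω - S l ω| < 1 := by exact_mod_cast h3
          have h7 := abs_lt.mp h6
          omega
        apply hnb
        rw [hBadDef]
        refine Set.mem_iUnion.mpr ⟨L₀, ?_⟩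
        refine Set.mem_iInter.mpr fun l => Set.mem_iInter.mpr fun hl => ?_
        exact hzero l hl
      have : c - X ω = 0 := by
        rcases div_eq_zero_iff.mp hteq with h | h
        · exact h
        · exact absurd h hc0
      linarith
  -- conclusion for m
  have hmain : ∀ f : C(AddCircle (1:ℝ), ℝ), ∫ z, f z ∂m = f (((q:ℝ) : AddCircle (1:ℝ))) := by
    intro f
    have h1 : ∀ qq : ℕ, ∫ ω, f ((lam⁻¹ ^ qq * X ω : ℝ) : AddCircle (1:ℝ)) ∂ℙ
        = f ((lam⁻¹ ^ qq * c : ℝ) : AddCircle (1:ℝ)) := by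
      intro qq
      rw [integral_congr_ae (g := fun _ => f ((lam⁻¹ ^ qq * c : ℝ) : AddCircle (1:ℝ)))
        (hXc.mono fun ω hω => by rw [hω])]
      simp
    have h2 : Tendsto (fun qq : ℕ => f ((lam⁻¹ ^ qq * c : ℝ) : AddCircle (1:ℝ))) atTop
        (nhds (f (((q:ℝ) : AddCircle (1:ℝ))))) := (f.continuous.tendsto _).comp hconv
    have h3 := hm f
    rw [funext h1] at h3
    exact tendsto_nhds_unique h3 h2
  have hmq : m = Measure.dirac (((q:ℝ) : AddCircle (1:ℝ))) :=
    eq_dirac_of_integral m _ hmain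
  -- conclusion for M
  have hMconv : Tendsto (fun qq : ℕ => (fun u : Fin (s+1) =>
      ((lam⁻¹ ^ qq * (lam⁻¹ ^ (u : ℕ) * c) : ℝ) : AddCircle (1:ℝ)))) atTop
      (nhds (fun _ : Fin (s+1) => ((q:ℝ) : AddCircle (1:ℝ)))) := by
    rw [tendsto_pi_nhds]
    intro u
    have heq : (fun qq : ℕ => ((lam⁻¹ ^ qq * (lam⁻¹ ^ (u : ℕ) * c) : ℝ) : AddCircle (1:ℝ)))
        = (fun qq : ℕ => ((lam⁻¹ ^ (qq + (u : ℕ)) * c : ℝ) : AddCircle (1:ℝ))) := by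
      funext qq
      rw [pow_add]
      ring_nf
    rw [heq]
    exact hconv.comp (tendsto_add_atTop_nat (u : ℕ))
  have hMmain : ∀ f : C((Fin (s+1) → AddCircle (1:ℝ)), ℝ),
      ∫ z, f z ∂M = f (fun _ => ((q:ℝ) : AddCircle (1:ℝ))) := by
    intro f
    have h1 : ∀ qq : ℕ, ∫ ω, f (fun u =>
        ((lam⁻¹ ^ qq * (lam⁻¹ ^ (u : ℕ) * X ω) : ℝ) : AddCircle (1:ℝ))) ∂ℙ
        = f (fun u => ((lam⁻¹ ^ qq * (lam⁻¹ ^ (u : ℕ) * c) : ℝ) : AddCircle (1:ℝ))) := by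
      intro qq
      rw [integral_congr_ae (g := fun _ => f (fun u =>
          ((lam⁻¹ ^ qq * (lam⁻¹ ^ (u : ℕ) * c) : ℝ) : AddCircle (1:ℝ))))
        (hXc.mono fun ω hω => by rw [hω])]
      simp
    have h2 : Tendsto (fun qq : ℕ => f (fun u =>
        ((lam⁻¹ ^ qq * (lam⁻¹ ^ (u : ℕ) * c) : ℝ) : AddCircle (1:ℝ)))) atTop
        (nhds (f (fun _ => ((q:ℝ) : AddCircle (1:ℝ))))) :=
      (f.continuous.tendsto _).comp hMconv
    have h3 := hM f
    rw [funext h1] at h3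
    exact tendsto_nhds_unique h3 h2
  have hMq : M = Measure.dirac (fun _ : Fin (s+1) => ((q:ℝ) : AddCircle (1:ℝ))) :=
    eq_dirac_of_integral M _ hMmain
  exact ⟨q, hconv, hmq, by rw [hMq, pi_dirac_eq]⟩
end
end

section
/- Let 1/λ > 1 be a Pisot number, d ≥ 1 an integer, and μ ∈ T(1/λ). Then the two-sided series Σ_{l∈ℤ} μ λ^{ld} mod 1 — i.e. the limit in 𝕋 = ℝ/ℤ of the symmetric partial sums Σ_{−L≤l≤L} μ λ^{ld} mod 1, which exists — is equal, in 𝕋, to a rational number; explicitly, it equals −Tr_{1/λ}( μ λ^{−(l_0+1)d} / (1 − λ^{−d}) ) mod 1, where l_0 ≥ 1 is any integer such that Tr_{1/λ}(λ^{−l} μ) ∈ ℤ for all l > l_0. -/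
open MeasureTheory Filter Finset IntermediateField

noncomputable section

private lemma stmt16_icc_top (a b : ℤ) (h : a ≤ b + 1) :
    Icc a (b+1) = insert (b+1) (Icc a b) := by
  ext x; simp only [mem_Icc, mem_insert]; omega

private lemma stmt16_icc_bot (a b : ℤ) (h : a ≤ b) :
    Icc (a-1) b = insert (a-1) (Icc a b) := by
  ext x; simp only [mem_Icc, mem_insert]; omega

private lemma stmt16_sum_icc_geom (lam : ℝ) (hlam : 0 < lam) (μ : ℝ) (d : ℕ) (L : ℕ) :
    (∑ l ∈ Finset.Icc (-(L : ℤ)) (L : ℤ), μ * lam ^ (l * (d : ℤ))) * (1 - lam ^ (-(d:ℤ)))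
      = μ * (lam ^ ((L:ℤ) * d) - lam ^ (-((L:ℤ)+1) * d)) := by
  have hne : lam ≠ 0 := ne_of_gt hlam
  induction L with
  | zero => simp
  | succ L ih =>
      have hc : ((L+1:ℕ):ℤ) = (L:ℤ)+1 := by push_cast; ring
      rw [hc]
      have e1 : Icc (-((L:ℤ)+1)) ((L:ℤ)+1) = insert ((L:ℤ)+1) (Icc (-((L:ℤ)+1)) (L:ℤ)) :=
        stmt16_icc_top _ _ (by omega)
      have e2 : Icc (-((L:ℤ)+1)) (L:ℤ) = insert (-((L:ℤ)+1)) (Icc (-(L:ℤ)) (L:ℤ)) := by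
        have := stmt16_icc_bot (-(L:ℤ)) (L:ℤ) (by omega)
        rw [show -((L:ℤ)+1) = -(L:ℤ) - 1 by ring, this]
      rw [e1, Finset.sum_insert (by simp only [mem_insert, mem_Icc]; omega),
        e2, Finset.sum_insert (by simp only [mem_Icc]; omega)]
      have expand : ∀ m n : ℤ, lam ^ (m + n) = lam ^ m * lam ^ n := fun m n => zpow_add₀ hne m n
      have huv : lam ^ ((d:ℤ)) * lam ^ (-(d:ℤ)) = 1 := by
        rw [← expand]; simp
      rw [show ((L:ℤ)+1) * d = (L:ℤ)*d + d by ring,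
        show (-((L:ℤ)+1)) * d = -((L:ℤ)+1)*(d:ℤ) by ring,
        show (-((L:ℤ)+1+1)) * (d:ℤ) = -((L:ℤ)+1)*(d:ℤ) + -(d:ℤ) by ring,
        show (-((L:ℤ)+1))*(d:ℤ) = -(L:ℤ)*d + -(d:ℤ) by ring]
      rw [show (-((L:ℤ)+1)) * (d:ℤ) = -(L:ℤ)*d + -(d:ℤ) by ring, expand] at ih
      simp only [expand]
      linear_combination ih - μ * lam ^ ((L:ℤ)*(d:ℤ)) * huv

set_option maxHeartbeats 1600000 in
/-- Lemma of Section 5. Let `1/λ > 1` be a Pisot number, `d ≥ 1`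
and `μ ∈ T(1/λ)` (witnessed by `μ ∈ ℚ(1/λ)` and `l0 ≥ 1` with `Tr((1/λ)^l μ) ∈ ℤ` for
`l > l0`). Then the symmetric partial sums of `∑_{l ∈ ℤ} μ λ^{l d} mod 1` converge in
`𝕋 = ℝ/ℤ` to the rational number `- Tr( μ λ^{-(l0+1)d} / (1 - λ^{-d}) ) mod 1`. -/
theorem stmt16 (lam : ℝ) (hlam : 0 < lam) (hPisot : IsPisot lam⁻¹)
    (d : ℕ) (hd : 1 ≤ d) (μ : ℝ) (hμmem : μ ∈ ℚ⟮lam⁻¹⟯)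
    (l0 : ℕ) (hl0 : 1 ≤ l0)
    (hTr : ∀ l : ℕ, l0 < l → ∃ z : ℤ,
      Algebra.trace ℚ ℚ⟮lam⁻¹⟯
        ((⟨lam⁻¹, IntermediateField.mem_adjoin_simple_self ℚ lam⁻¹⟩ : ℚ⟮lam⁻¹⟯) ^ l *
          ⟨μ, hμmem⟩) = (z : ℚ)) :
    Tendsto
      (fun L : ℕ => ((∑ l ∈ Finset.Icc (-(L : ℤ)) (L : ℤ),
          μ * lam ^ (l * (d : ℤ)) : ℝ) : AddCircle (1 : ℝ)))
      atTop
      (nhds ((((-(Algebra.trace ℚ ℚ⟮lam⁻¹⟯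
        (((⟨lam⁻¹, IntermediateField.mem_adjoin_simple_self ℚ lam⁻¹⟩ : ℚ⟮lam⁻¹⟯) ^ ((l0 + 1) * d) *
            ⟨μ, hμmem⟩) /
          (1 - (⟨lam⁻¹, IntermediateField.mem_adjoin_simple_self ℚ lam⁻¹⟩ : ℚ⟮lam⁻¹⟯) ^ d)))
        : ℚ) : ℝ) : AddCircle (1 : ℝ)))) := by
  classical
  -- basic facts
  have hne : lam ≠ 0 := ne_of_gt hlam
  have hθ1 : 1 < lam⁻¹ := hPisot.1
  have hlam1 : lam < 1 := by
    have := inv_lt_one_of_one_lt₀ hθ1; rwa [inv_inv] at this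
  set K := ℚ⟮lam⁻¹⟯
  set t : K := ⟨lam⁻¹, IntermediateField.mem_adjoin_simple_self ℚ lam⁻¹⟩ with ht
  set m : K := ⟨μ, hμmem⟩ with hm
  have hint : IsIntegral ℚ lam⁻¹ := hPisot.2.1.tower_top
  haveI : FiniteDimensional ℚ K := IntermediateField.adjoin.finiteDimensional hint
  have hcoe : ∀ y : K, algebraMap K ℝ y = (y : ℝ) := fun _ => rfl
  have hθd : 1 < lam⁻¹ ^ d := one_lt_pow₀ hθ1 (by omega)
  have htd : (1 : K) - t ^ d ≠ 0 := by
    intro h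
    have h2 : ((1 - t^d : K) : ℝ) = 0 := by rw [h]; rfl
    have : (1 : ℝ) - lam⁻¹ ^ d = 0 := by
      rwa [← hcoe, map_sub, map_one, map_pow, hcoe] at h2
    nlinarith
  set β : K := m / (1 - t ^ d) with hβ
  set x : ℕ → K := fun n => β * t ^ ((n+1)*d) with hx
  -- telescoping identity
  have hstep : ∀ n : ℕ, x (n+1) = x n - t ^ ((n+1)*d) * m := by
    intro n
    have hβm : β * (1 - t^d) = m := div_mul_cancel₀ m htd
    simp only [hx]
    rw [show (n+1+1)*d = (n+1)*d + d by ring, pow_add, ← hβm]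
    ring
  have key : ∀ L, l0 ≤ L → x L = x l0 - ∑ j ∈ range (L - l0), t ^ ((l0+1+j)*d) * m := by
    intro L hL
    induction L, hL using Nat.le_induction with
    | base => simp
    | succ L hL ih =>
        rw [show L + 1 - l0 = (L - l0) + 1 by omega, Finset.sum_range_succ,
          show l0 + 1 + (L - l0) = L + 1 by omega, hstep, ih]
        ring
  -- the integers z j and M L
  have hTr' : ∀ j : ℕ, l0 < (l0+1+j)*d := fun j => by
    calc l0 < l0 + 1 + j := by omega
    _ ≤ (l0+1+j)*d := Nat.le_mul_of_pos_right _ (by omega)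
  set z : ℕ → ℤ := fun j => (hTr ((l0+1+j)*d) (hTr' j)).choose with hz
  have hzspec : ∀ j : ℕ, Algebra.trace ℚ K (t ^ ((l0+1+j)*d) * m) = (z j : ℚ) :=
    fun j => (hTr ((l0+1+j)*d) (hTr' j)).choose_spec
  set M : ℕ → ℤ := fun L => ∑ j ∈ range (L - l0), z j with hM
  set c : ℚ := Algebra.trace ℚ K (t ^ ((l0 + 1) * d) * m / (1 - t ^ d)) with hc
  have hxl0 : x l0 = t ^ ((l0 + 1) * d) * m / (1 - t ^ d) := by
    simp only [hx, hβ]; ring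
  have htrace : ∀ L, l0 ≤ L → Algebra.trace ℚ K (x L) = c - (M L : ℚ) := by
    intro L hL
    rw [key L hL, map_sub, map_sum, hc, ← hxl0]
    congr 1
    rw [hM]
    push_cast
    exact Finset.sum_congr rfl fun j _ => hzspec j
  -- embeddings into ℂ
  set σ0 : K →ₐ[ℚ] ℂ := (Complex.ofRealHom.comp (algebraMap K ℝ)).toRatAlgHom with hσ0
  have hσ0app : ∀ y : K, σ0 y = ((y : ℝ) : ℂ) := fun _ => rfl
  have htr : ∀ y : K, ((Algebra.trace ℚ K y : ℚ) : ℂ) = ∑ σ : K →ₐ[ℚ] ℂ, σ y := by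
    intro y
    have := trace_eq_sum_embeddings (E := ℂ) (K := ℚ) (L := K) (x := y)
    rw [← this]
    simp
  -- |σ t| < 1 for σ ≠ σ0
  set pb := IntermediateField.adjoin.powerBasis hint with hpb
  have hgen : pb.gen = t := rfl
  have habs : ∀ σ : K →ₐ[ℚ] ℂ, σ ≠ σ0 → ‖σ t‖ < 1 := by
    intro σ hσ
    have hroot : (Polynomial.aeval (σ t)) (minpoly ℚ lam⁻¹) = 0 := by
      have h1 : minpoly ℚ lam⁻¹ = minpoly ℚ t := by
        have := minpoly.algebraMap_eq (A := ℚ) (B := K) (B' := ℝ)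
          (algebraMap K ℝ).injective t
        rw [← this]; rfl
      rw [h1, Polynomial.aeval_algHom_apply, minpoly.aeval, map_zero]
    have hneq : σ t ≠ ((lam⁻¹ : ℝ) : ℂ) := by
      intro h
      apply hσ
      apply pb.algHom_ext
      rw [hgen]
      exact h.trans (hσ0app t).symm
    exact hPisot.2.2 (σ t) hroot hneq
  -- g L := trace - real value tends to 0
  set g : ℕ → ℝ := fun L => ((Algebra.trace ℚ K (x L) : ℚ) : ℝ) - ((x L : K) : ℝ) with hg
  have hgC : ∀ L, ((g L : ℝ) : ℂ) = ∑ σ ∈ Finset.univ.erase σ0, σ (x L) := by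
    intro L
    have := htr (x L)
    have hsplit : (∑ σ : K →ₐ[ℚ] ℂ, σ (x L))
        = σ0 (x L) + ∑ σ ∈ Finset.univ.erase σ0, σ (x L) :=
      (Finset.add_sum_erase _ _ (Finset.mem_univ σ0)).symm
    rw [hg]
    push_cast
    rw [this, hsplit, hσ0app]
    ring
  have hg0 : Tendsto g atTop (nhds 0) := by
    have hC : Tendsto (fun L => ∑ σ ∈ Finset.univ.erase σ0, σ (x L)) atTop (nhds 0) := by
      have : Tendsto (fun L => ∑ σ ∈ Finset.univ.erase σ0, σ (x L)) atTop
          (nhds (∑ σ ∈ Finset.univ.erase σ0, 0)) := by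
        apply tendsto_finset_sum
        intro σ hσ
        have hσne : σ ≠ σ0 := Finset.ne_of_mem_erase hσ
        have hlt : ‖(σ t) ^ d‖ < 1 := by
          rw [norm_pow]
          calc ‖σ t‖ ^ d ≤ ‖σ t‖ ^ 1 :=
            pow_le_pow_of_le_one (norm_nonneg _) (le_of_lt (habs σ hσne)) hd
          _ < 1 := by simpa using habs σ hσne
        have hpow : Tendsto (fun n : ℕ => ((σ t) ^ d) ^ n) atTop (nhds 0) :=
          tendsto_pow_atTop_nhds_zero_of_norm_lt_one hlt
        have hxσ : ∀ L : ℕ, σ (x L) = σ β * ((σ t) ^ d) ^ (L+1) := by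
          intro L
          simp only [hx, map_mul, map_pow, ← pow_mul]
          ring_nf
        simp only [hxσ]
        have := (hpow.comp (tendsto_add_atTop_nat 1)).const_mul (σ β)
        simpa using this
      simpa using this
    have hre : ∀ L, g L = (∑ σ ∈ Finset.univ.erase σ0, σ (x L)).re := by
      intro L; rw [← hgC]; simp
    have hgfun : g = fun L => (∑ σ ∈ Finset.univ.erase σ0, σ (x L)).re := funext hre
    rw [hgfun]
    have h2 := (Complex.continuous_re.tendsto 0).comp hC
    exact h2
  -- real value of x L and β
  have hβcoe : ((β : K) : ℝ) = μ / (1 - lam⁻¹ ^ d) := by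
    rw [← hcoe, hβ, map_div₀, map_sub, map_one, map_pow, hcoe, hcoe]
  have hxcoe : ∀ L : ℕ, ((x L : K) : ℝ) = (μ / (1 - lam⁻¹ ^ d)) * lam⁻¹ ^ ((L+1)*d) := by
    intro L
    rw [← hcoe, hx, map_mul, map_pow, hcoe, hcoe, hβcoe]
  -- the real partial sum
  set S : ℕ → ℝ := fun L => ∑ l ∈ Finset.Icc (-(L : ℤ)) (L : ℤ), μ * lam ^ (l * (d : ℤ))
    with hS
  have hdenom : (1 : ℝ) - lam ^ (-(d:ℤ)) ≠ 0 := by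
    rw [zpow_neg, zpow_natCast, ← inv_pow]
    intro h; nlinarith
  have hSval : ∀ L : ℕ, S L = μ * (lam ^ ((L:ℤ) * d) - lam ^ (-((L:ℤ)+1) * d))
      / (1 - lam ^ (-(d:ℤ))) := by
    intro L
    rw [eq_div_iff hdenom]
    exact stmt16_sum_icc_geom lam hlam μ d L
  -- identify pieces
  have hzpow1 : ∀ L : ℕ, lam ^ (-((L:ℤ)+1) * d) = lam⁻¹ ^ ((L+1)*d) := by
    intro L
    rw [show -((L:ℤ)+1) * d = -((((L+1)*d : ℕ) : ℤ)) by push_cast; ring,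
      zpow_neg, zpow_natCast, inv_pow]
  have hzpow2 : ∀ L : ℕ, lam ^ ((L:ℤ) * d) = (lam ^ d) ^ L := by
    intro L
    rw [show (L:ℤ) * d = (((L*d : ℕ)) : ℤ) by push_cast; ring, zpow_natCast, pow_mul']
  have hdeq : (1:ℝ) - lam ^ (-(d:ℤ)) = 1 - lam⁻¹ ^ d := by
    rw [zpow_neg, zpow_natCast, inv_pow]
  have h3 : (1:ℝ) - lam⁻¹ ^ d ≠ 0 := hdeq ▸ hdenom
  -- final formula : S L = βℝ * (lam^d)^L - (x L : ℝ)
  have hSfinal : ∀ L : ℕ, S L = ((β : K) : ℝ) * (lam ^ d) ^ L - ((x L : K) : ℝ) := by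
    intro L
    rw [hSval L, hxcoe L, hβcoe, hzpow1, hzpow2, hdeq]
    simp only [inv_pow]
    rw [show (L+1)*d = d + L*d by ring, pow_add, pow_mul']
    ring
  -- powers of lam^d tend to 0
  have hpowlim : Tendsto (fun L : ℕ => (lam ^ d) ^ L) atTop (nhds 0) :=
    tendsto_pow_atTop_nhds_zero_of_lt_one (le_of_lt (pow_pos hlam d))
      (pow_lt_one₀ (le_of_lt hlam) hlam1 (by omega))
  -- convergence of S L - M L
  have hF : Tendsto (fun L => S L - ((M L : ℤ) : ℝ)) atTop (nhds (((-c : ℚ) : ℝ))) := by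
    have hGlim : Tendsto (fun L : ℕ => ((β : K) : ℝ) * (lam ^ d) ^ L + g L + ((-c : ℚ) : ℝ))
        atTop (nhds (((β : K) : ℝ) * 0 + 0 + ((-c : ℚ) : ℝ))) :=
      (((hpowlim.const_mul _).add hg0).add tendsto_const_nhds)
    rw [show ((β : K) : ℝ) * 0 + 0 + ((-c : ℚ) : ℝ) = ((-c : ℚ) : ℝ) by ring] at hGlim
    apply hGlim.congr'
    filter_upwards [eventually_ge_atTop l0] with L hL
    have hMQ : ((M L : ℤ) : ℚ) = c - Algebra.trace ℚ K (x L) := by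
      rw [htrace L hL]; ring
    have hMR : ((M L : ℤ) : ℝ) = ((c : ℚ) : ℝ) - ((Algebra.trace ℚ K (x L) : ℚ) : ℝ) := by
      rw [show ((M L : ℤ) : ℝ) = (((M L : ℤ) : ℚ) : ℝ) by push_cast; ring, hMQ]
      push_cast; ring
    rw [hSfinal L, hMR, hg]
    push_cast
    ring
  -- pass to the circle
  have hcont : Continuous ((↑) : ℝ → AddCircle (1 : ℝ)) := AddCircle.continuous_mk' 1
  have hfinal := (hcont.tendsto _).comp hF
  have heq : ∀ L : ℕ, ((S L - ((M L : ℤ) : ℝ) : ℝ) : AddCircle (1:ℝ))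
      = ((S L : ℝ) : AddCircle (1:ℝ)) := by
    intro L
    have hint0 : (((M L : ℤ) : ℝ) : AddCircle (1:ℝ)) = 0 := by
      simp [AddCircle.coe_eq_zero_iff]
    have : ((S L - ((M L : ℤ) : ℝ) : ℝ) : AddCircle (1:ℝ))
        = ((S L : ℝ) : AddCircle (1:ℝ)) - (((M L : ℤ) : ℝ) : AddCircle (1:ℝ)) := rfl
    rw [this, hint0, sub_zero]
  have := hfinal.congr heq
  exact this
end
end
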